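/- arXiv:2112.14615 — 11 statements merged into one kernel-verified Lean document; each statement's English description precedes it below -/
import Mathlib

section
/- Let K be a compact Hausdorff topological space equipped with a linear order whose order (interval) topology coincides with the topology of K, and let a group G act on K such that for every g ∈ G the map x ↦ g•x is an order-preserving bijection of K. If every orbit G•x is dense in K, then K has at most one point. -/
/-- Let `K` be a compact Hausdorff space equipped with a linear order whose
order (interval) topology coincides with the topology of `K`, and let a group `G` act on `K`
such that every `g ∈ G` acts as an order-preserving bijection. If every orbit `G • x` is dense
in `K`, then `K` has at most one point. -/
theorem minimal_linearly_ordered_system_is_trivial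
    {K : Type*} [TopologicalSpace K] [LinearOrder K] [OrderTopology K]
    [CompactSpace K] [T2Space K]
    {G : Type*} [Group G] [MulAction G K]
    (hmono : ∀ g : G, Monotone (fun x : K => g • x))
    (hmin : ∀ x : K, Dense (MulAction.orbit G x)) :
    Subsingleton K := by
  rcases isEmpty_or_nonempty K with h | h
  · exact Subsingleton.intro fun a b => (h.false a).elim
  · obtain ⟨m, -, hm⟩ := CompactSpace.isCompact_univ.exists_isGreatest
      ((Set.univ_nonempty : (Set.univ : Set K).Nonempty))
    -- m is fixed by every g
    have hfix : ∀ g : G, g • m = m := by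
      intro g
      have h1 : g • m ≤ m := hm (Set.mem_univ _)
      have h2 : m ≤ g • m := by
        have := hmono g (hm (Set.mem_univ (g⁻¹ • m)))
        simpa using this
      exact le_antisymm h1 h2
    have horb : MulAction.orbit G m = {m} := by
      ext x
      constructor
      · rintro ⟨g, rfl⟩; exact hfix g
      · rintro rfl; exact ⟨1, one_smul _ _⟩
    have hd := hmin m
    rw [horb] at hd
    have : closure ({m} : Set K) = Set.univ := hd.closure_eq
    rw [closure_singleton] at this
    refine Subsingleton.intro fun a b => ?_
    have ha : a ∈ ({m} : Set K) := this ▸ Set.mem_univ a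
    have hb : b ∈ ({m} : Set K) := this ▸ Set.mem_univ b
    rw [Set.mem_singleton_iff] at ha hb
    rw [ha, hb]
end

section
/- Let X be a circularly ordered set. Then the circular topology τ∘ on X, namely the topology generated by the complements X \ [a,b]∘ of closed intervals (for all a, b ∈ X), is Hausdorff. -/
/-- The closed interval `[a,b]∘ = {x | sbtw a x b} ∪ {a, b}` of a circularly ordered set. -/
def cIcc {X : Type*} [CircularOrder X] (a b : X) : Set X :=
  {x | sbtw a x b} ∪ {a, b}

/-- The circular (interval) topology of a circular order: the topology generated by the
complements of the closed intervals `[a,b]∘`. -/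
def circularTopology (X : Type*) [CircularOrder X] : TopologicalSpace X :=
  TopologicalSpace.generateFrom {s : Set X | ∃ a b : X, s = (cIcc a b)ᶜ}

lemma cIcc_self {X : Type*} [CircularOrder X] (a : X) : cIcc a a = {a} := by
  ext z
  simp only [cIcc, Set.mem_union, Set.mem_setOf_eq, Set.mem_insert_iff, Set.mem_singleton_iff,
    or_self]
  constructor
  · rintro (h | h)
    · exact absurd h sbtw_irrefl_left_right
    · exact h
  · rintro rfl; exact Or.inr rfl

lemma compl_cIcc' {X : Type*} [CircularOrder X] {a b : X} (hab : a ≠ b) :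
    (cIcc a b)ᶜ = {z | sbtw b z a} := by
  ext z
  simp only [cIcc, Set.mem_compl_iff, Set.mem_union, Set.mem_setOf_eq, Set.mem_insert_iff,
    Set.mem_singleton_iff, not_or]
  constructor
  · rintro ⟨h1, h2, h3⟩
    have hb : btw b z a := btw_iff_not_sbtw.2 h1
    refine sbtw_iff_btw_not_btw.2 ⟨hb, fun h => ?_⟩
    rcases btw_antisymm hb h with h | h | h
    · exact h3 h.symm
    · exact h2 h
    · exact hab h
  · intro h
    refine ⟨sbtw_asymm h, fun hz => ?_, fun hz => ?_⟩
    · exact sbtw_irrefl_right (hz ▸ h)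
    · exact sbtw_irrefl_left (hz ▸ h)

/-- The circular topology of a circularly ordered set is Hausdorff. -/
theorem circularTopology_t2 (X : Type*) [CircularOrder X] :
    @T2Space X (circularTopology X) := by
  letI : TopologicalSpace X := circularTopology X
  have hopen : ∀ a b : X, IsOpen (cIcc a b)ᶜ :=
    fun a b => TopologicalSpace.GenerateOpen.basic _ ⟨a, b, rfl⟩
  constructor
  intro x y hxy
  by_cases h1 : ∃ p, sbtw x p y
  · by_cases h2 : ∃ q, sbtw y q x
    · -- both open arcs nonempty
      obtain ⟨p, hp⟩ := h1
      obtain ⟨q, hq⟩ := h2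
      have hpq : p ≠ q := fun h => sbtw_asymm hp (h ▸ hq)
      refine ⟨(cIcc p q)ᶜ, (cIcc q p)ᶜ, hopen p q, hopen q p, ?_, ?_, ?_⟩
      · rw [compl_cIcc' hpq]
        exact (hp.cyclic_left.trans_left hq).cyclic_left
      · rw [compl_cIcc' hpq.symm]
        exact (hq.cyclic_left.trans_left hp).cyclic_left
      · rw [compl_cIcc' hpq, compl_cIcc' hpq.symm]
        exact Set.disjoint_left.2 fun z hz hz' => sbtw_asymm hz hz'
    · -- (y,x) empty, (x,y) nonempty
      obtain ⟨p, hp⟩ := h1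
      have hxp : x ≠ p := fun h => sbtw_irrefl_left (h ▸ hp)
      have hpy : p ≠ y := fun h => sbtw_irrefl_right (h ▸ hp)
      refine ⟨(cIcc p y)ᶜ, (cIcc x p)ᶜ, hopen p y, hopen x p, ?_, ?_, ?_⟩
      · rw [compl_cIcc' hpy]
        exact hp.cyclic_left.cyclic_left
      · rw [compl_cIcc' hxp]
        exact hp.cyclic_left
      · rw [compl_cIcc' hpy, compl_cIcc' hxp]
        refine Set.disjoint_left.2 fun z hz hz' => h2 ⟨z, ?_⟩
        -- hz : sbtw y z p, hz' : sbtw p z x ; want sbtw y z x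
        exact ((hz'.cyclic_left.cyclic_left).trans_left
          (hz.cyclic_left.cyclic_left)).cyclic_left
  · by_cases h2 : ∃ q, sbtw y q x
    · -- (x,y) empty, (y,x) nonempty
      obtain ⟨q, hq⟩ := h2
      have hyq : y ≠ q := fun h => sbtw_irrefl_left (h ▸ hq)
      have hqx : q ≠ x := fun h => sbtw_irrefl_right (h ▸ hq)
      refine ⟨(cIcc y q)ᶜ, (cIcc q x)ᶜ, hopen y q, hopen q x, ?_, ?_, ?_⟩
      · rw [compl_cIcc' hyq]
        exact hq.cyclic_left
      · rw [compl_cIcc' hqx]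
        exact hq.cyclic_left.cyclic_left
      · rw [compl_cIcc' hyq, compl_cIcc' hqx]
        refine Set.disjoint_left.2 fun z hz hz' => h1 ⟨z, ?_⟩
        -- hz : sbtw q z y, hz' : sbtw x z q ; want sbtw x z y
        exact ((hz.cyclic_left.cyclic_left).trans_left
          (hz'.cyclic_left.cyclic_left)).cyclic_left
    · -- both arcs empty : X = {x, y}
      have hall : ∀ z : X, z = x ∨ z = y := by
        intro z
        by_contra hz
        push_neg at hz
        have hb1 : btw y z x := btw_iff_not_sbtw.2 fun h => h1 ⟨z, h⟩
        have hb2 : btw x z y := btw_iff_not_sbtw.2 fun h => h2 ⟨z, h⟩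
        rcases btw_antisymm hb1 hb2 with h | h | h
        · exact hz.2 h.symm
        · exact hz.1 h
        · exact hxy h
      refine ⟨(cIcc y y)ᶜ, (cIcc x x)ᶜ, hopen y y, hopen x x, ?_, ?_, ?_⟩
      · rw [cIcc_self]; exact hxy
      · rw [cIcc_self]; exact fun h => hxy ((h : y = x)).symm
      · rw [cIcc_self, cIcc_self]
        refine Set.disjoint_left.2 fun z hz hz' => ?_
        rcases hall z with rfl | rfl
        · exact hz' rfl
        · exact hz rfl
end

section
/- Let X be a circularly ordered set and G a group acting on X such that every g ∈ G preserves strict betweenness: sbtw a b c implies sbtw (g•a) (g•b) (g•c). Suppose that for some a ∈ X the stabilizer subgroup St(a) = {g ∈ G | g•a = a} admits a left-invariant linear order. Then G admits a left-invariant circular order: there is a circular order on G whose strict betweenness relation sbtw_G satisfies sbtw_G x y z ↔ sbtw_G (g*x) (g*y) (g*z) for all g, x, y, z ∈ G. -/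
section Aux

/-- Build a circular order from a strict cyclic relation. -/
noncomputable def CircularOrder.ofSCyclic {G : Type*} (R : G → G → G → Prop)
    (irr : ∀ x, ¬ R x x x)
    (cyc : ∀ {x y z}, R x y z → R y z x)
    (asym : ∀ {x y z}, R x y z → ¬ R z y x)
    (total : ∀ {x y z : G}, x ≠ y → y ≠ z → x ≠ z → R x y z ∨ R z y x)
    (htrans : ∀ {x y z w}, R x y z → R y w z → R x w z) :
    CircularOrder G where
  btw x y z := ¬ R z y x
  sbtw := R
  btw_refl x := irr x
  btw_cyclic_left {a b c} h := fun h' => h (cyc h')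
  sbtw_iff_btw_not_btw {a b c} := by
    constructor
    · intro h; exact ⟨asym h, not_not_intro h⟩
    · rintro ⟨-, h⟩; exact not_not.mp h
  sbtw_trans_left {a b c d} h h' := htrans h h'
  btw_antisymm {a b c} h h' := by
    by_contra hne
    push_neg at hne
    obtain ⟨h1, h2, h3⟩ := hne
    rcases total h1 h2 (fun e => h3 e.symm) with t | t
    · exact h' t
    · exact h t
  btw_total a b c := by
    by_contra hh
    push_neg at hh
    exact asym hh.1 hh.2

variable {X : Type*} [CircularOrder X]

theorem sbtw_ne' {p q r : X} (h : sbtw p q r) : p ≠ q ∧ q ≠ r ∧ p ≠ r := by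
  refine ⟨?_, ?_, ?_⟩ <;> rintro rfl
  · exact sbtw_irrefl_left h
  · exact sbtw_irrefl_right h
  · exact sbtw_irrefl_left_right h

theorem sbtw_total' {p q r : X} (h1 : p ≠ q) (h2 : q ≠ r) (h3 : p ≠ r) :
    sbtw p q r ∨ sbtw r q p := by
  by_contra hh
  push_neg at hh
  have b1 : btw r q p := by
    have := hh.1; rw [sbtw_iff_not_btw, not_not] at this; exact this
  have b2 : btw p q r := by
    have := hh.2; rw [sbtw_iff_not_btw, not_not] at this; exact this
  rcases btw_antisymm b2 b1 with e | e | e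
  · exact h1 e
  · exact h2 e
  · exact h3 e.symm

variable {G : Type*} [Group G] [MulAction G X]
variable (a : X) (lo : LinearOrder (MulAction.stabilizer G a))

/-- order on fibers (cosets of the stabilizer). -/
def flt (u v : G) : Prop := ∃ h : MulAction.stabilizer G a, lo.lt 1 h ∧ v = u * (h : G)

/-- cyclic order on a fiber, derived from the linear one. -/
def c3 (x y z : G) : Prop :=
  (flt a lo x y ∧ flt a lo y z) ∨ (flt a lo y z ∧ flt a lo z x) ∨
    (flt a lo z x ∧ flt a lo x y)

/-- the strict cyclic relation on `G`. -/
def Rrel (x y z : G) : Prop :=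
  sbtw (x • a) (y • a) (z • a) ∨
  (x • a = y • a ∧ y • a ≠ z • a ∧ flt a lo x y) ∨
  (y • a = z • a ∧ z • a ≠ x • a ∧ flt a lo y z) ∨
  (z • a = x • a ∧ x • a ≠ y • a ∧ flt a lo z x) ∨
  (x • a = y • a ∧ y • a = z • a ∧ c3 a lo x y z)

variable (hmono : ∀ h h₁ h₂ : MulAction.stabilizer G a, lo.le h₁ h₂ → lo.le (h * h₁) (h * h₂))

section loLemmas
include hmono

theorem lo_lt_mono (h : MulAction.stabilizer G a) {p q : MulAction.stabilizer G a}
    (hpq : lo.lt p q) : lo.lt (h * p) (h * q) := by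
  letI := lo
  replace hpq : p < q := hpq
  show h * p < h * q
  rw [lt_iff_le_not_ge] at hpq ⊢
  refine ⟨hmono h _ _ hpq.1, fun hle => hpq.2 ?_⟩
  simpa [inv_mul_cancel_left] using hmono h⁻¹ _ _ hle

theorem flt_trans {u v w : G} (h1 : flt a lo u v) (h2 : flt a lo v w) : flt a lo u w := by
  obtain ⟨h, hh, rfl⟩ := h1
  obtain ⟨k, hk, rfl⟩ := h2
  letI := lo
  refine ⟨h * k, ?_, by push_cast; rw [mul_assoc]⟩
  have : (h : MulAction.stabilizer G a) < h * k := by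
    simpa using lo_lt_mono a lo hmono h hk
  exact lt_trans hh this

theorem flt_inv_of_neg {h : MulAction.stabilizer G a} (hh : lo.lt h 1) : lo.lt 1 h⁻¹ := by
  simpa using lo_lt_mono a lo hmono h⁻¹ hh

end loLemmas

theorem flt_irrefl (u : G) : ¬ flt a lo u u := by
  rintro ⟨h, hh, he⟩
  letI := lo
  have : (h : G) = 1 := by
    rw [eq_comm, mul_eq_left] at he; exact he
  have h1 : h = 1 := by ext; exact this
  rw [h1] at hh
  exact lt_irrefl _ hh

theorem flt_fiber {u v : G} (h : flt a lo u v) : u • a = v • a := by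
  obtain ⟨h, hh, rfl⟩ := h
  have : (h : G) • a = a := h.2
  rw [mul_smul, this]

include hmono in
theorem flt_asymm {u v : G} (h1 : flt a lo u v) : ¬ flt a lo v u := fun h2 =>
  flt_irrefl a lo u (flt_trans a lo hmono h1 h2)

include hmono in
theorem flt_total {u v : G} (hfib : u • a = v • a) (hne : u ≠ v) :
    flt a lo u v ∨ flt a lo v u := by
  letI := lo
  have hmem : u⁻¹ * v ∈ MulAction.stabilizer G a := by
    rw [MulAction.mem_stabilizer_iff, mul_smul, ← hfib, inv_smul_smul]
  set h : MulAction.stabilizer G a := ⟨u⁻¹ * v, hmem⟩ with hdef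
  have hne1 : h ≠ 1 := by
    intro hc
    apply hne
    have : u⁻¹ * v = 1 := congrArg Subtype.val hc
    rw [inv_mul_eq_one] at this
    exact this
  rcases lt_or_gt_of_ne hne1.symm with hlt | hlt
  · left; exact ⟨h, hlt, by simp [hdef]⟩
  · right
    refine ⟨h⁻¹, flt_inv_of_neg a lo hmono hlt, ?_⟩
    show u = v * (↑h)⁻¹
    simp [hdef]

theorem flt_smul {g u v : G} : flt a lo u v ↔ flt a lo (g * u) (g * v) := by
  constructor
  · rintro ⟨h, hh, rfl⟩; exact ⟨h, hh, by rw [mul_assoc]⟩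
  · rintro ⟨h, hh, he⟩
    refine ⟨h, hh, ?_⟩
    rwa [mul_assoc, mul_right_inj] at he

include hmono in
theorem c3_trans {x y w z : G} (hc : c3 a lo x y z) (hc2 : c3 a lo y w z) :
    c3 a lo x w z := by
  have FA := fun {u v} => flt_asymm a lo hmono (u := u) (v := v)
  have FT := fun {u v w} => flt_trans a lo hmono (u := u) (v := v) (w := w)
  rcases hc with ⟨h1, h2⟩ | ⟨h1, h2⟩ | ⟨h1, h2⟩ <;>
    rcases hc2 with ⟨k1, k2⟩ | ⟨k1, k2⟩ | ⟨k1, k2⟩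
  · exact Or.inl ⟨FT h1 k1, k2⟩
  · exact absurd k2 (FA h2)
  · exact absurd k1 (FA h2)
  · exact Or.inr (Or.inl ⟨k2, h2⟩)
  · exact absurd k2 (FA h1)
  · exact absurd k1 (FA h1)
  · exact Or.inr (Or.inl ⟨k2, h1⟩)
  · exact Or.inr (Or.inl ⟨k1, h1⟩)
  · exact Or.inr (Or.inr ⟨h1, FT h2 k2⟩)

include hmono in
theorem c3_asym {x y z : G} (hc : c3 a lo x y z) : ¬ c3 a lo z y x := by
  have FA := fun {u v} => flt_asymm a lo hmono (u := u) (v := v)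
  intro hc2
  rcases hc with ⟨h1, h2⟩ | ⟨h1, h2⟩ | ⟨h1, h2⟩ <;>
    rcases hc2 with ⟨k1, k2⟩ | ⟨k1, k2⟩ | ⟨k1, k2⟩
  · exact FA h2 k1
  · exact FA h1 k1
  · exact FA h2 k2
  · exact FA h1 k1
  · exact FA h2 k2
  · exact FA h2 k1
  · exact FA h2 k2
  · exact FA h2 k1
  · exact FA h1 k1

theorem c3_cyclic {x y z : G} (hc : c3 a lo x y z) : c3 a lo y z x := by
  rcases hc with h | h | h
  · exact Or.inr (Or.inr ⟨h.1, h.2⟩)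
  · exact Or.inl h
  · exact Or.inr (Or.inl h)

include hmono in
theorem c3_total {x y z : G} (hxy : x • a = y • a) (hyz : y • a = z • a)
    (nxy : x ≠ y) (nyz : y ≠ z) (nxz : x ≠ z) : c3 a lo x y z ∨ c3 a lo z y x := by
  rcases flt_total a lo hmono hxy nxy with fxy | fyx <;>
    rcases flt_total a lo hmono hyz nyz with fyz | fzy
  · exact Or.inl (Or.inl ⟨fxy, fyz⟩)
  · rcases flt_total a lo hmono (hxy.trans hyz) nxz with fxz | fzx
    · exact Or.inr (Or.inr (Or.inr ⟨fxz, fzy⟩))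
    · exact Or.inl (Or.inr (Or.inr ⟨fzx, fxy⟩))
  · rcases flt_total a lo hmono (hxy.trans hyz) nxz with fxz | fzx
    · exact Or.inr (Or.inr (Or.inl ⟨fyx, fxz⟩))
    · exact Or.inl (Or.inr (Or.inl ⟨fyz, fzx⟩))
  · exact Or.inr (Or.inl ⟨fzy, fyx⟩)

theorem Rrel_irrefl (x : G) : ¬ Rrel a lo x x x := by
  rintro (hs | ⟨e1, e2, _⟩ | ⟨e1, e2, _⟩ | ⟨e1, e2, _⟩ | ⟨e1, e2, hc⟩)
  · exact sbtw_irrefl _ hs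
  · exact e2 rfl
  · exact e2 rfl
  · exact e2 rfl
  · rcases hc with h | h | h <;> exact flt_irrefl a lo x h.1

theorem Rrel_cyclic {x y z : G} (h : Rrel a lo x y z) : Rrel a lo y z x := by
  rcases h with hs | ⟨e1, e2, hl⟩ | ⟨e1, e2, hl⟩ | ⟨e1, e2, hl⟩ | ⟨e1, e2, hc⟩
  · exact Or.inl (sbtw_cyclic_left hs)
  · exact Or.inr (Or.inr (Or.inr (Or.inl ⟨e1, e2, hl⟩)))
  · exact Or.inr (Or.inl ⟨e1, e2, hl⟩)
  · exact Or.inr (Or.inr (Or.inl ⟨e1, e2, hl⟩))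
  · exact Or.inr (Or.inr (Or.inr (Or.inr ⟨e2, e2.symm.trans e1.symm, c3_cyclic a lo hc⟩)))

include hmono in
theorem Rrel_asym {x y z : G} (h : Rrel a lo x y z) : ¬ Rrel a lo z y x := by
  intro h'
  rcases h with hs | ⟨e1, e2, hl⟩ | ⟨e1, e2, hl⟩ | ⟨e1, e2, hl⟩ | ⟨e1, e2, hc⟩
  · obtain ⟨nXY, nYZ, nXZ⟩ := sbtw_ne' hs
    rcases h' with hs' | ⟨f1, f2, _⟩ | ⟨f1, f2, _⟩ | ⟨f1, f2, _⟩ | ⟨f1, f2, _⟩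
    · exact sbtw_asymm hs hs'
    · exact nYZ f1.symm
    · exact nXY f1.symm
    · exact nXZ f1
    · exact nYZ f1.symm
  · rcases h' with hs' | ⟨f1, f2, _⟩ | ⟨f1, f2, hl2⟩ | ⟨f1, f2, _⟩ | ⟨f1, f2, _⟩
    · exact (sbtw_ne' hs').2.1 e1.symm
    · exact e2 f1.symm
    · exact flt_asymm a lo hmono hl hl2
    · exact e2 (e1.symm.trans f1)
    · exact e2 f1.symm
  · rcases h' with hs' | ⟨f1, f2, hl2⟩ | ⟨f1, f2, _⟩ | ⟨f1, f2, _⟩ | ⟨f1, f2, _⟩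
    · exact (sbtw_ne' hs').1 e1.symm
    · exact flt_asymm a lo hmono hl hl2
    · exact f2 (f1.symm.trans e1)
    · exact e2 f1.symm
    · exact e2 (f1.trans f2)
  · rcases h' with hs' | ⟨f1, f2, _⟩ | ⟨f1, f2, _⟩ | ⟨f1, f2, hl2⟩ | ⟨f1, f2, _⟩
    · exact (sbtw_ne' hs').2.2 e1
    · exact e2 (e1.symm.trans f1)
    · exact e2 f1.symm
    · exact flt_asymm a lo hmono hl hl2
    · exact e2 (e1.symm.trans f1)
  · rcases h' with hs' | ⟨f1, f2, _⟩ | ⟨f1, f2, _⟩ | ⟨f1, f2, _⟩ | ⟨f1, f2, hc2⟩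
    · exact (sbtw_ne' hs').1 e2.symm
    · exact f2 e1.symm
    · exact f2 (e1.trans e2)
    · exact f2 e2.symm
    · exact c3_asym a lo hmono hc hc2

include hmono in
theorem Rrel_total {x y z : G} (nxy : x ≠ y) (nyz : y ≠ z) (nxz : x ≠ z) :
    Rrel a lo x y z ∨ Rrel a lo z y x := by
  by_cases e1 : x • a = y • a
  · by_cases e2 : y • a = z • a
    · rcases c3_total a lo hmono e1 e2 nxy nyz nxz with hc | hc
      · exact Or.inl (Or.inr (Or.inr (Or.inr (Or.inr ⟨e1, e2, hc⟩))))
      · exact Or.inr (Or.inr (Or.inr (Or.inr (Or.inr ⟨e2.symm, e1.symm, hc⟩))))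
    · rcases flt_total a lo hmono e1 nxy with f | f
      · exact Or.inl (Or.inr (Or.inl ⟨e1, e2, f⟩))
      · exact Or.inr (Or.inr (Or.inr (Or.inl ⟨e1.symm, fun h => e2 (e1.symm.trans h), f⟩)))
  · by_cases e2 : y • a = z • a
    · rcases flt_total a lo hmono e2 nyz with f | f
      · exact Or.inl (Or.inr (Or.inr (Or.inl ⟨e2, fun h => e1 (e2.trans h).symm, f⟩)))
      · exact Or.inr (Or.inr (Or.inl ⟨e2.symm, fun h => e1 h.symm, f⟩))
    · by_cases e3 : z • a = x • a
      · rcases flt_total a lo hmono e3 (fun h => nxz h.symm) with f | f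
        · exact Or.inl (Or.inr (Or.inr (Or.inr (Or.inl ⟨e3, e1, f⟩))))
        · exact Or.inr (Or.inr (Or.inr (Or.inr (Or.inl ⟨e3.symm, fun h => e2 h.symm, f⟩))))
      · rcases sbtw_total' e1 e2 (fun h => e3 h.symm) with hs | hs
        · exact Or.inl (Or.inl hs)
        · exact Or.inr (Or.inl hs)

include hmono in
theorem Rrel_trans {x y w z : G} (h1 : Rrel a lo x y z) (h2 : Rrel a lo y w z) :
    Rrel a lo x w z := by
  rcases h1 with hs | ⟨e1, e2, hl⟩ | ⟨e1, e2, hl⟩ | ⟨e1, e2, hl⟩ | ⟨e1, e2, hc⟩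
  · obtain ⟨nXY, nYZ, nXZ⟩ := sbtw_ne' hs
    rcases h2 with hs' | ⟨f1, f2, hl2⟩ | ⟨f1, f2, hl2⟩ | ⟨f1, f2, _⟩ | ⟨f1, f2, _⟩
    · exact Or.inl (sbtw_trans_left hs hs')
    · exact Or.inl (f1 ▸ hs)
    · exact Or.inr (Or.inr (Or.inl ⟨f1, fun h => nXZ h.symm, hl2⟩))
    · exact absurd f1.symm nYZ
    · exact absurd (f1.trans f2) nYZ
  · rcases h2 with hs' | ⟨f1, f2, hl2⟩ | ⟨f1, f2, hl2⟩ | ⟨f1, f2, _⟩ | ⟨f1, f2, _⟩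
    · exact Or.inl (by rw [e1]; exact hs')
    · exact Or.inr (Or.inl ⟨e1.trans f1, f2, flt_trans a lo hmono hl hl2⟩)
    · exact Or.inr (Or.inr (Or.inl ⟨f1, fun h => e2 (h.trans e1).symm, hl2⟩))
    · exact absurd f1.symm e2
    · exact absurd (f1.trans f2) e2
  · rcases h2 with hs' | ⟨f1, f2, hl2⟩ | ⟨f1, f2, hl2⟩ | ⟨f1, f2, hl2⟩ | ⟨f1, f2, hc2⟩
    · exact absurd e1 (sbtw_ne' hs').2.2
    · exact absurd (f1.symm.trans e1) f2
    · exact absurd e1.symm f2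
    · exact absurd hl2 (flt_asymm a lo hmono hl)
    · rcases hc2 with k | k | k
      · exact Or.inr (Or.inr (Or.inl ⟨f2, e2, k.2⟩))
      · exact Or.inr (Or.inr (Or.inl ⟨f2, e2, k.1⟩))
      · exact absurd k.1 (flt_asymm a lo hmono hl)
  · rcases h2 with hs' | ⟨f1, f2, hl2⟩ | ⟨f1, f2, hl2⟩ | ⟨f1, f2, _⟩ | ⟨f1, f2, _⟩
    · exact Or.inr (Or.inr (Or.inr (Or.inl ⟨e1,
        fun h => (sbtw_ne' hs').2.1 (e1.trans h).symm, hl⟩)))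
    · exact Or.inr (Or.inr (Or.inr (Or.inl ⟨e1, fun h => e2 (h.trans f1.symm), hl⟩)))
    · exact Or.inr (Or.inr (Or.inr (Or.inr ⟨e1.symm.trans f1.symm, f1,
        Or.inr (Or.inl ⟨hl2, hl⟩)⟩)))
    · exact absurd (e1.symm.trans f1) e2
    · exact absurd ((f1.trans f2).trans e1).symm e2
  · rcases h2 with hs' | ⟨f1, f2, _⟩ | ⟨f1, f2, _⟩ | ⟨f1, f2, hl2⟩ | ⟨f1, f2, hc2⟩
    · exact absurd e2 (sbtw_ne' hs').2.2
    · exact absurd (f1.symm.trans e2) f2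
    · exact absurd e2.symm f2
    · have hzx : flt a lo z x := by
        rcases hc with k | k | k
        · exact absurd hl2 (flt_asymm a lo hmono k.2)
        · exact absurd hl2 (flt_asymm a lo hmono k.1)
        · exact k.1
      exact Or.inr (Or.inr (Or.inr (Or.inl ⟨e2.symm.trans e1.symm,
        fun h => f2 (e1.symm.trans h), hzx⟩)))
    · exact Or.inr (Or.inr (Or.inr (Or.inr ⟨e1.trans f1, f2,
        c3_trans a lo hmono hc hc2⟩)))

theorem Rrel_smul_fwd (hG : ∀ (g : G) (p q r : X), sbtw p q r → sbtw (g • p) (g • q) (g • r))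
    {g x y z : G} (h : Rrel a lo x y z) : Rrel a lo (g * x) (g * y) (g * z) := by
  have heq : ∀ u v : G, u • a = v • a → (g * u) • a = (g * v) • a := by
    intro u v h; rw [mul_smul, mul_smul, h]
  have hne : ∀ u v : G, u • a ≠ v • a → (g * u) • a ≠ (g * v) • a := by
    intro u v h hc
    apply h
    rw [mul_smul, mul_smul] at hc
    exact smul_left_cancel g hc
  have hfl : ∀ u v : G, flt a lo u v → flt a lo (g * u) (g * v) := by
    intro u v h; exact (flt_smul a lo).mp h
  have hc3 : ∀ u v w : G, c3 a lo u v w → c3 a lo (g * u) (g * v) (g * w) := by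
    intro u v w h
    rcases h with k | k | k
    · exact Or.inl ⟨hfl _ _ k.1, hfl _ _ k.2⟩
    · exact Or.inr (Or.inl ⟨hfl _ _ k.1, hfl _ _ k.2⟩)
    · exact Or.inr (Or.inr ⟨hfl _ _ k.1, hfl _ _ k.2⟩)
  rcases h with hs | ⟨e1, e2, hl⟩ | ⟨e1, e2, hl⟩ | ⟨e1, e2, hl⟩ | ⟨e1, e2, hc⟩
  · exact Or.inl (by rw [mul_smul, mul_smul, mul_smul]; exact hG g _ _ _ hs)
  · exact Or.inr (Or.inl ⟨heq _ _ e1, hne _ _ e2, hfl _ _ hl⟩)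
  · exact Or.inr (Or.inr (Or.inl ⟨heq _ _ e1, hne _ _ e2, hfl _ _ hl⟩))
  · exact Or.inr (Or.inr (Or.inr (Or.inl ⟨heq _ _ e1, hne _ _ e2, hfl _ _ hl⟩)))
  · exact Or.inr (Or.inr (Or.inr (Or.inr ⟨heq _ _ e1, heq _ _ e2, hc3 _ _ _ hc⟩)))

end Aux

/-- The strict betweenness relation of a given circular order structure. -/
def csbtw {G : Type*} (c : CircularOrder G) : G → G → G → Prop :=
  letI := c
  fun x y z => sbtw x y z

/-- Let `X` be a circularly ordered set and `G` a group acting on `X`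
preserving strict betweenness.  If for some `a ∈ X` the stabilizer subgroup `St(a)` admits a
left-invariant linear order, then `G` admits a left-invariant circular order. -/
theorem left_circular_orderable_of_stabilizer_left_orderable
    {X : Type*} [CircularOrder X] {G : Type*} [Group G] [MulAction G X]
    (hG : ∀ (g : G) (a b c : X), sbtw a b c → sbtw (g • a) (g • b) (g • c))
    (a : X)
    (hstab : ∃ lo : LinearOrder (MulAction.stabilizer G a),
      ∀ (h h₁ h₂ : MulAction.stabilizer G a), lo.le h₁ h₂ → lo.le (h * h₁) (h * h₂)) :
    ∃ c : CircularOrder G, ∀ g x y z : G,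
      csbtw c x y z ↔ csbtw c (g * x) (g * y) (g * z) := by
  obtain ⟨lo, hmono⟩ := hstab
  refine ⟨CircularOrder.ofSCyclic (Rrel a lo)
    (Rrel_irrefl a lo)
    (fun {x y z} h => Rrel_cyclic a lo h)
    (fun {x y z} h => Rrel_asym a lo hmono h)
    (fun {x y z} h1 h2 h3 => Rrel_total a lo hmono h1 h2 h3)
    (fun {x y z w} h1 h2 => Rrel_trans a lo hmono h1 h2), ?_⟩
  intro g x y z
  show Rrel a lo x y z ↔ Rrel a lo (g * x) (g * y) (g * z)
  constructor
  · exact Rrel_smul_fwd a lo hG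
  · intro h
    have := Rrel_smul_fwd a lo hG (g := g⁻¹) h
    simpa [inv_mul_cancel_left] using this
end

section
/- Let X be a circularly ordered set equipped with its circular topology τ∘. Then the set {(a,b,c) ∈ X × X × X | sbtw a b c} is open in the product topology; equivalently, whenever sbtw a b c holds there exist τ∘-open neighborhoods U, V, W of a, b, c respectively such that sbtw a' b' c' holds for every (a',b',c') ∈ U × V × W. -/
section Aux

variable {α : Type*} [CircularOrder α]

lemma my_ne12 {a b c : α} (h : sbtw a b c) : a ≠ b := by
  rintro rfl; exact sbtw_irrefl_left h

lemma my_ne23 {a b c : α} (h : sbtw a b c) : b ≠ c := by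
  rintro rfl; exact sbtw_irrefl_right h

lemma my_ne13 {a b c : α} (h : sbtw a b c) : a ≠ c := by
  rintro rfl; exact sbtw_irrefl_left_right h

lemma my_sbtw_of_btw {x u y : α} (h : btw x u y) (hux : u ≠ x) (huy : u ≠ y) (hxy : x ≠ y) :
    sbtw x u y := by
  refine h.sbtw_of_not_btw fun h' => ?_
  rcases btw_antisymm h h' with h1 | h1 | h1
  · exact hux h1.symm
  · exact huy h1
  · exact hxy h1.symm

lemma my_chain {x u z w : α} (h1 : sbtw x u z) (h2 : sbtw x z w) : sbtw u z w :=
  ((h2.cyclic_right).trans_left h1).cyclic_left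

lemma my_gap {x y q v : α} (he : ∀ t, ¬ sbtw x t y) (hq : sbtw x y q) (hv : sbtw x v q) :
    btw y v q := by
  rcases eq_or_ne v y with rfl | hvy
  · exact btw_rfl_left
  rcases btw_total y v q with h | h
  · exact h
  have hvq : v ≠ q := my_ne23 hv
  have hyq : y ≠ q := my_ne23 hq
  have hs : sbtw q v y := my_sbtw_of_btw h hvq hvy hyq.symm
  exact absurd (((hs.cyclic_left).trans_right hv.cyclic_left).cyclic_right) (he v)

/-- Data describing a "cut" of the gap between `x` and `y`: either a common witness strictly
between them, or the endpoints `y`, `x` themselves when the open arc is empty. -/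
def myGap (x y s t : α) : Prop :=
  (sbtw x s y ∧ t = s) ∨ (s = y ∧ t = x ∧ ∀ u, ¬ sbtw x u y)

lemma my_gap_exists (x y : α) : ∃ s t : α, myGap x y s t := by
  by_cases h : ∃ u, sbtw x u y
  · obtain ⟨u, hu⟩ := h; exact ⟨u, u, Or.inl ⟨hu, rfl⟩⟩
  · exact ⟨y, x, Or.inr ⟨rfl, rfl, fun u hu => h ⟨u, hu⟩⟩⟩

lemma my_memU {a b c p₁ p₂ r₁ r₂ : α} (h : sbtw a b c) (hp : myGap a b p₁ p₂)
    (hr : myGap c a r₁ r₂) : sbtw r₂ a p₁ := by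
  rcases hp with ⟨hps, _⟩ | ⟨hpb, _, _⟩
  · have hapc : sbtw a p₁ c := hps.trans_right h
    rcases hr with ⟨hrs, hre⟩ | ⟨hra, hrc, _⟩
    · subst hre
      exact (hapc.trans_right hrs.cyclic_right).cyclic_right
    · subst hrc
      exact hapc.cyclic_right
  · subst hpb
    rcases hr with ⟨hrs, hre⟩ | ⟨hra, hrc, _⟩
    · subst hre
      exact (h.trans_right hrs.cyclic_right).cyclic_right
    · subst hrc
      exact h.cyclic_right

lemma my_half {a b c p₁ p₂ r₁ r₂ u : α} (h : sbtw a b c) (hp : myGap a b p₁ p₂)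
    (hr : myGap c a r₁ r₂) (hu : sbtw r₂ u p₁) : btw r₁ u p₁ ∧ u ≠ p₁ := by
  constructor
  · rcases hr with ⟨hrs, hre⟩ | ⟨hra, hrc, hremp⟩
    · subst hre; exact hu.btw
    · subst hra; subst hrc
      refine my_gap hremp ?_ hu
      rcases hp with ⟨hps, _⟩ | ⟨hpb, _, _⟩
      · exact (hps.trans_right h).cyclic_right
      · subst hpb; exact h.cyclic_right
  · rintro rfl; exact sbtw_irrefl_right hu

lemma my_ends {a b c p₁ p₂ : α} (h : sbtw a b c) (hp : myGap a b p₁ p₂) :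
    btw a p₁ b ∧ p₁ ≠ a := by
  rcases hp with ⟨hps, _⟩ | ⟨hpb, _, _⟩
  · exact ⟨hps.btw, (my_ne12 hps).symm⟩
  · subst hpb; exact ⟨btw_rfl_right, (my_ne12 h).symm⟩

/-- If `u ∈ [x,y)`, `v ∈ [y,z)`, `w ∈ [z,x)` for `sbtw x y z`, then `sbtw u v w`. -/
lemma my_master {x y z u v w : α} (hxyz : sbtw x y z)
    (hu : btw x u y) (huy : u ≠ y) (hv : btw y v z) (hvz : v ≠ z)
    (hw : btw z w x) (hwx : w ≠ x) : sbtw u v w := by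
  have hxy : x ≠ y := my_ne12 hxyz
  have hyz : y ≠ z := my_ne23 hxyz
  have hzx : z ≠ x := (my_ne13 hxyz).symm
  rcases eq_or_ne u x with rfl | hux
  · rcases eq_or_ne v y with rfl | hvy
    · rcases eq_or_ne w z with rfl | hwz
      · exact hxyz
      · have hsw := my_sbtw_of_btw hw hwz hwx hzx
        exact hxyz.trans_right hsw.cyclic_right
    · have hsv := my_sbtw_of_btw hv hvy hvz hyz
      rcases eq_or_ne w z with rfl | hwz
      · exact hxyz.trans_left hsv
      · have hsw := my_sbtw_of_btw hw hwz hwx hzx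
        exact (hxyz.trans_left hsv).trans_right hsw.cyclic_right
  · have hsu := my_sbtw_of_btw hu hux huy hxy
    have huyz := ((hxyz.cyclic_right).trans_left hsu).cyclic_left
    rcases eq_or_ne v y with rfl | hvy
    · rcases eq_or_ne w z with rfl | hwz
      · exact huyz
      · have hsw := my_sbtw_of_btw hw hwz hwx hzx
        have huzw := my_chain (hsu.trans_right hxyz) hsw.cyclic_right
        exact huyz.trans_right huzw
    · have hsv := my_sbtw_of_btw hv hvy hvz hyz
      have huvz :=
        (((hxyz.cyclic_right).trans_left hsu).trans_right hsv.cyclic_right).cyclic_left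
      rcases eq_or_ne w z with rfl | hwz
      · exact huvz
      · have hsw := my_sbtw_of_btw hw hwz hwx hzx
        have huzw := my_chain (hsu.trans_right hxyz) hsw.cyclic_right
        exact huvz.trans_right huzw

/-- If `u ∈ (x,y]`, `v ∈ (y,z]`, `w ∈ (z,x]` for `sbtw x y z`, then `sbtw u v w`. -/
lemma my_master2 {x y z u v w : α} (hxyz : sbtw x y z)
    (hu : btw x u y) (hux : u ≠ x) (hv : btw y v z) (hvy : v ≠ y)
    (hw : btw z w x) (hwz : w ≠ z) : sbtw u v w := by
  have hxy : x ≠ y := my_ne12 hxyz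
  have hyz : y ≠ z := my_ne23 hxyz
  have hzx : z ≠ x := (my_ne13 hxyz).symm
  rcases eq_or_ne u y with rfl | huy
  · rcases eq_or_ne v z with rfl | hvz
    · rcases eq_or_ne w x with rfl | hwx
      · exact hxyz.cyclic_left
      · have hsw := my_sbtw_of_btw hw hwz hwx hzx
        exact ((hsw.cyclic_left).trans_left hxyz).cyclic_left
    · have hsv := my_sbtw_of_btw hv hvy hvz hyz
      rcases eq_or_ne w x with rfl | hwx
      · exact hsv.trans_right hxyz.cyclic_left
      · have hsw := my_sbtw_of_btw hw hwz hwx hzx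
        exact hsv.trans_right (((hsw.cyclic_left).trans_left hxyz).cyclic_left)
  · have hsu := my_sbtw_of_btw hu hux huy hxy
    have hxuz := hsu.trans_right hxyz
    rcases eq_or_ne v z with rfl | hvz
    · rcases eq_or_ne w x with rfl | hwx
      · exact hxuz.cyclic_left
      · have hsw := my_sbtw_of_btw hw hwz hwx hzx
        exact my_chain hxuz hsw.cyclic_right
    · have hsv := my_sbtw_of_btw hv hvy hvz hyz
      have hvxy := (hsv.cyclic_left).trans_left hxyz.cyclic_right
      have hxuv := hsu.trans_right hvxy.cyclic_left
      rcases eq_or_ne w x with rfl | hwx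
      · exact hxuv.cyclic_left
      · have hsw := my_sbtw_of_btw hw hwz hwx hzx
        have hxvw := (hxyz.trans_left hsv).trans_right hsw.cyclic_right
        exact my_chain hxuv hxvw

end Aux

open Topology in
/-- Open arcs are open in the circular topology. -/
lemma my_arc_open {X : Type*} [CircularOrder X] (s t : X) :
    IsOpen[circularTopology X] {x | sbtw s x t} := by
  by_cases hst : s = t
  · subst hst
    have h0 : {x : X | sbtw s x s} = ∅ :=
      Set.eq_empty_iff_forall_notMem.mpr fun x hx => sbtw_irrefl_left_right hx
    rw [h0]
    exact @isOpen_empty X (circularTopology X)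
  · have heq : {x : X | sbtw s x t} = (cIcc t s)ᶜ := by
      ext x
      simp only [cIcc, Set.mem_union, Set.mem_setOf_eq, Set.mem_compl_iff,
        Set.mem_insert_iff, Set.mem_singleton_iff, not_or]
      constructor
      · intro hx
        exact ⟨sbtw_asymm hx, my_ne23 hx, (my_ne12 hx).symm⟩
      · rintro ⟨h1, h2, h3⟩
        exact my_sbtw_of_btw (btw_iff_not_sbtw.mpr h1) h3 h2 hst
    rw [heq]
    exact TopologicalSpace.isOpen_generateFrom_of_mem ⟨t, s, rfl⟩

/-- For a circularly ordered set `X` with its circular topology, the set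
`{(a,b,c) | sbtw a b c}` is open in the product topology; equivalently, whenever `sbtw a b c`
there are open neighborhoods `U, V, W` of `a, b, c` such that `sbtw a' b' c'` for all
`(a',b',c') ∈ U × V × W`. -/
theorem sbtw_isOpen (X : Type*) [CircularOrder X]
    [ts : TopologicalSpace X] (hts : ts = circularTopology X) :
    IsOpen {p : X × X × X | sbtw p.1 p.2.1 p.2.2} ∧
      ∀ a b c : X, sbtw a b c → ∃ U V W : Set X,
        IsOpen U ∧ IsOpen V ∧ IsOpen W ∧ a ∈ U ∧ b ∈ V ∧ c ∈ W ∧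
          ∀ a' ∈ U, ∀ b' ∈ V, ∀ c' ∈ W, sbtw a' b' c' := by
  have harc : ∀ s t : X, IsOpen {x | sbtw s x t} := by
    intro s t
    rw [hts]
    exact my_arc_open s t
  have main : ∀ a b c : X, sbtw a b c → ∃ U V W : Set X,
      IsOpen U ∧ IsOpen V ∧ IsOpen W ∧ a ∈ U ∧ b ∈ V ∧ c ∈ W ∧
        ∀ a' ∈ U, ∀ b' ∈ V, ∀ c' ∈ W, sbtw a' b' c' := by
    intro a b c h
    obtain ⟨p₁, p₂, hp⟩ := my_gap_exists a b
    obtain ⟨q₁, q₂, hq⟩ := my_gap_exists b c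
    obtain ⟨r₁, r₂, hr⟩ := my_gap_exists c a
    refine ⟨{x | sbtw r₂ x p₁}, {x | sbtw p₂ x q₁}, {x | sbtw q₂ x r₁},
      harc _ _, harc _ _, harc _ _,
      my_memU h hp hr, my_memU h.cyclic_left hq hp, my_memU h.cyclic_right hr hq, ?_⟩
    intro u hu v hv w hw
    obtain ⟨hu1, hu2⟩ := my_half h hp hr hu
    obtain ⟨hv1, hv2⟩ := my_half h.cyclic_left hq hp hv
    obtain ⟨hw1, hw2⟩ := my_half h.cyclic_right hr hq hw
    obtain ⟨eP1, eP2⟩ := my_ends h hp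
    obtain ⟨eQ1, eQ2⟩ := my_ends h.cyclic_left hq
    obtain ⟨eR1, eR2⟩ := my_ends h.cyclic_right hr
    have hcut : sbtw r₁ p₁ q₁ := my_master2 h.cyclic_right eR1 eR2 eP1 eP2 eQ1 eQ2
    exact my_master hcut hu1 hu2 hv1 hv2 hw1 hw2
  refine ⟨?_, main⟩
  rw [isOpen_iff_forall_mem_open]
  rintro ⟨a, b, c⟩ hpt
  obtain ⟨U, V, W, hU, hV, hW, ha, hb, hc, hprod⟩ := main a b c hpt
  refine ⟨U ×ˢ V ×ˢ W, ?_, hU.prod (hV.prod hW), ⟨ha, hb, hc⟩⟩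
  rintro ⟨u, v, w⟩ ⟨h1, h2, h3⟩
  exact hprod u h1 v h2 w h3
end

section
/- For an abstract group G the following are equivalent: (1) G admits a left-invariant circular order, i.e., a circular order on G whose strict betweenness satisfies sbtw x y z ↔ sbtw (g*x) (g*y) (g*z) for all g, x, y, z ∈ G; (2) there exist a circularly ordered set X and an injective group homomorphism from G into the group of circular-order automorphisms of X (bijections of X preserving sbtw); equivalently, G admits an effective action on some circularly ordered set by sbtw-preserving bijections. -/
universe u

set_option linter.unreachableTactic false
set_option linter.unusedTactic false
set_option linter.unusedSectionVars false
set_option linter.unusedVariables false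

namespace CircProof

section Helpers
variable {α : Type*} [CircularOrder α]

theorem sbtw_ne12 {a b c : α} (h : sbtw a b c) : a ≠ b := by
  rintro rfl; exact sbtw_irrefl_left h

theorem sbtw_ne23 {a b c : α} (h : sbtw a b c) : b ≠ c := by
  rintro rfl; exact sbtw_irrefl_right h

theorem sbtw_ne13 {a b c : α} (h : sbtw a b c) : a ≠ c := by
  rintro rfl; exact sbtw_irrefl_left_right h

theorem sbtw_total3 {a b c : α} (h1 : a ≠ b) (h2 : b ≠ c) (h3 : a ≠ c) :
    sbtw a b c ∨ sbtw c b a := by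
  rcases btw_total a b c with h | h
  · by_cases h' : btw c b a
    · rcases btw_antisymm h h' with e | e | e
      · exact absurd e h1
      · exact absurd e h2
      · exact absurd e.symm h3
    · exact Or.inl (sbtw_of_btw_not_btw h h')
  · by_cases h' : btw a b c
    · rcases btw_antisymm h' h with e | e | e
      · exact absurd e h1
      · exact absurd e h2
      · exact absurd e.symm h3
    · exact Or.inr (sbtw_of_btw_not_btw h h')

end Helpers

section Blowup

variable {C : Type*} {Y : Type*} [CircularOrder C]
variable (π : Y → C) (L : Y → Y → Prop)

/-- cyclic relation on a fiber induced by a linear order -/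
def cyc3 (a b c : Y) : Prop :=
  (L a b ∧ L b c) ∨ (L b c ∧ L c a) ∨ (L c a ∧ L a b)

/-- the strict betweenness of the blow-up -/
def BS (a b c : Y) : Prop :=
  sbtw (π a) (π b) (π c) ∨
  (π a = π b ∧ π a ≠ π c ∧ L a b) ∨
  (π b = π c ∧ π b ≠ π a ∧ L b c) ∨
  (π c = π a ∧ π c ≠ π b ∧ L c a) ∨
  (π a = π b ∧ π b = π c ∧ cyc3 L a b c)

variable {π L}
variable (asymL : ∀ x y : Y, L x y → L y x → False)
variable (transL : ∀ x y z : Y, L x y → L y z → L x z)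
variable (totalL : ∀ x y : Y, π x = π y → x ≠ y → L x y ∨ L y x)

section
include asymL

theorem cyc3_asym {a b c : Y} (h1 : cyc3 L a b c) (h2 : cyc3 L c b a) : False := by
  rcases h1 with ⟨h, h'⟩ | ⟨h, h'⟩ | ⟨h, h'⟩ <;>
    rcases h2 with ⟨g, g'⟩ | ⟨g, g'⟩ | ⟨g, g'⟩ <;>
      first
        | exact asymL _ _ h g | exact asymL _ _ h g' | exact asymL _ _ h' g | exact asymL _ _ h' g'
        | exact asymL _ _ g h | exact asymL _ _ g' h | exact asymL _ _ g h' | exact asymL _ _ g' h'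

theorem cyc3_extract1 {b d c : Y} (h : cyc3 L b d c) (hbc : L b c) : L d c := by
  rcases h with ⟨h, h'⟩ | ⟨h, h'⟩ | ⟨h, h'⟩
  · exact h'
  · exact h
  · exact absurd hbc (fun g => asymL _ _ g h)

theorem cyc3_extract2 {a b c : Y} (h : cyc3 L a b c) (hcb : L c b) : L c a := by
  rcases h with ⟨h, h'⟩ | ⟨h, h'⟩ | ⟨h, h'⟩
  · exact absurd hcb (fun g => asymL _ _ h' g)
  · exact absurd hcb (fun g => asymL _ _ h g)
  · exact h

include transL

theorem cyc3_trans {a b c d : Y} (h1 : cyc3 L a b c) (h2 : cyc3 L b d c) :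
    cyc3 L a d c := by
  rcases h1 with ⟨hab, hbc⟩ | ⟨hbc, hca⟩ | ⟨hca, hab⟩ <;>
    rcases h2 with ⟨hbd, hdc⟩ | ⟨hdc, hcb⟩ | ⟨hcb, hbd⟩
  · exact Or.inl ⟨transL _ _ _ hab hbd, hdc⟩
  · exact absurd hbc (fun g => asymL _ _ g hcb)
  · exact absurd hbc (fun g => asymL _ _ g hcb)
  · exact Or.inr (Or.inl ⟨hdc, hca⟩)
  · exact absurd hbc (fun g => asymL _ _ g hcb)
  · exact absurd hbc (fun g => asymL _ _ g hcb)
  · exact absurd (transL _ _ _ hca (transL _ _ _ hab (transL _ _ _ hbd hdc)))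
      (fun g => asymL _ _ g g)
  · exact Or.inr (Or.inl ⟨hdc, hca⟩)
  · exact Or.inr (Or.inr ⟨hca, transL _ _ _ hab hbd⟩)

end

include asymL transL totalL in
theorem cyc3_total {a b c : Y} (e1 : π a = π b) (e2 : π b = π c)
    (h1 : a ≠ b) (h2 : b ≠ c) (h3 : a ≠ c) : cyc3 L a b c ∨ cyc3 L c b a := by
  rcases totalL _ _ e1 h1 with hab | hba <;>
    rcases totalL _ _ e2 h2 with hbc | hcb <;>
      rcases totalL _ _ (e1.trans e2) h3 with hac | hca <;>
        unfold cyc3 <;> tauto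

theorem BS_cyclic {a b c : Y} (h : BS π L a b c) : BS π L b c a := by
  rcases h with h | ⟨e1, e2, l⟩ | ⟨e1, e2, l⟩ | ⟨e1, e2, l⟩ | ⟨e1, e2, hc⟩
  · exact Or.inl (sbtw_cyclic_left h)
  · exact Or.inr (Or.inr (Or.inr (Or.inl ⟨e1, e2, l⟩)))
  · exact Or.inr (Or.inl ⟨e1, e2, l⟩)
  · exact Or.inr (Or.inr (Or.inl ⟨e1, e2, l⟩))
  · exact Or.inr (Or.inr (Or.inr (Or.inr
      ⟨e2, (e1.trans e2).symm, Or.elim hc (fun ⟨x, y⟩ => Or.inr (Or.inr ⟨x, y⟩))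
        (fun h' => Or.elim h' (fun ⟨x, y⟩ => Or.inl ⟨x, y⟩)
          (fun ⟨x, y⟩ => Or.inr (Or.inl ⟨x, y⟩)))⟩)))

include asymL in
theorem BS_ne12 {a b c : Y} (h : BS π L a b c) : a ≠ b := by
  rintro rfl
  rcases h with h | ⟨e1, e2, l⟩ | ⟨e1, e2, l⟩ | ⟨e1, e2, l⟩ | ⟨e1, e2, hc⟩
  · exact sbtw_ne12 h rfl
  · exact asymL _ _ l l
  · exact e2 rfl
  · exact e2 e1
  · rcases hc with ⟨x, y⟩ | ⟨x, y⟩ | ⟨x, y⟩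
    · exact asymL _ _ x x
    · exact asymL _ _ x y
    · exact asymL _ _ y y

include asymL in
theorem BS_asym {a b c : Y} (h1 : BS π L a b c) (h2 : BS π L c b a) : False := by
  rcases h1 with h | ⟨e1, e2, l⟩ | ⟨e1, e2, l⟩ | ⟨e1, e2, l⟩ | ⟨e1, e2, hc⟩ <;>
    rcases h2 with g | ⟨f1, f2, m⟩ | ⟨f1, f2, m⟩ | ⟨f1, f2, m⟩ | ⟨f1, f2, mc⟩
  · exact sbtw_asymm h g
  · exact sbtw_ne23 h f1.symm
  · exact sbtw_ne12 h f1.symm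
  · exact sbtw_ne13 h f1
  · exact sbtw_ne23 h f1.symm
  · exact sbtw_ne23 g e1.symm
  · exact e2 (e1.trans f1.symm)
  · exact asymL _ _ l m
  · exact e2 f1
  · exact e2 (e1.trans f1.symm)
  · exact sbtw_ne12 g e1.symm
  · exact asymL _ _ l m
  · exact e2 f1
  · exact e2 (e1.trans f1.symm)
  · exact e2 f2
  · exact sbtw_ne13 g e1
  · exact e2 f1
  · exact e2 (e1.trans f1.symm)
  · exact asymL _ _ l m
  · exact e2 f1
  · exact sbtw_ne12 g e2.symm
  · exact f2 (e1.trans e2).symm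
  · exact f2 e2
  · exact f2 e1
  · exact cyc3_asym asymL hc mc

include asymL transL totalL in
theorem BS_total {a b c : Y} (h1 : a ≠ b) (h2 : b ≠ c) (h3 : a ≠ c) :
    BS π L a b c ∨ BS π L c b a := by
  by_cases e1 : π a = π b
  · by_cases e2 : π b = π c
    · rcases cyc3_total asymL transL totalL e1 e2 h1 h2 h3 with hc | hc
      · exact Or.inl (Or.inr (Or.inr (Or.inr (Or.inr ⟨e1, e2, hc⟩))))
      · exact Or.inr (Or.inr (Or.inr (Or.inr (Or.inr ⟨e2.symm, e1.symm, hc⟩))))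
    · rcases totalL _ _ e1 h1 with l | m
      · exact Or.inl (Or.inr (Or.inl ⟨e1, fun w => e2 (e1.symm.trans w), l⟩))
      · exact Or.inr (Or.inr (Or.inr (Or.inl ⟨e1.symm, e2, m⟩)))
  · by_cases e2 : π b = π c
    · rcases totalL _ _ e2 h2 with l | m
      · exact Or.inl (Or.inr (Or.inr (Or.inl ⟨e2, fun w => e1 w.symm, l⟩)))
      · exact Or.inr (Or.inr (Or.inl ⟨e2.symm, fun w => e1 (w.symm.trans e2.symm), m⟩))
    · by_cases e3 : π c = π a
      · rcases totalL _ _ e3 (fun w => h3 w.symm) with l | m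
        · exact Or.inl (Or.inr (Or.inr (Or.inr (Or.inl
            ⟨e3, fun w => e1 (e3.symm.trans w), l⟩))))
        · exact Or.inr (Or.inr (Or.inr (Or.inr (Or.inl ⟨e3.symm, e1, m⟩))))
      · rcases sbtw_total3 e1 e2 (fun w => e3 w.symm) with s | s
        · exact Or.inl (Or.inl s)
        · exact Or.inr (Or.inl s)

include asymL transL in
theorem BS_trans {a b c d : Y} (h1 : BS π L a b c) (h2 : BS π L b d c) :
    BS π L a d c := by
  rcases h1 with h | ⟨e1, e2, l⟩ | ⟨e1, e2, l⟩ | ⟨e1, e2, l⟩ | ⟨e1, e2, hc⟩ <;>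
    rcases h2 with g | ⟨f1, f2, m⟩ | ⟨f1, f2, m⟩ | ⟨f1, f2, m⟩ | ⟨f1, f2, mc⟩
  · exact Or.inl (sbtw_trans_left h g)
  · exact Or.inl (f1 ▸ h)
  · exact Or.inr (Or.inr (Or.inl ⟨f1, fun w => sbtw_ne13 h (w.symm.trans f1), m⟩))
  · exact (sbtw_ne23 h f1.symm).elim
  · exact (sbtw_ne23 h (f1.trans f2)).elim
  · exact Or.inl (by rw [e1]; exact g)
  · exact Or.inr (Or.inl ⟨e1.trans f1, e2, transL _ _ _ l m⟩)
  · exact Or.inr (Or.inr (Or.inl ⟨f1, fun w => f2 (w.trans e1), m⟩))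
  · exact (e2 (e1.trans f1.symm)).elim
  · exact (e2 (e1.trans (f1.trans f2))).elim
  · exact (sbtw_ne13 g e1).elim
  · exact (f2 e1).elim
  · exact (f2 (f1.trans e1.symm)).elim
  · exact (asymL _ _ l m).elim
  · exact Or.inr (Or.inr (Or.inl ⟨f2, fun w => e2 (f1.trans w),
      cyc3_extract1 asymL mc l⟩))
  · exact Or.inr (Or.inr (Or.inr (Or.inl ⟨e1, fun w => sbtw_ne23 g w.symm, l⟩)))
  · exact Or.inr (Or.inr (Or.inr (Or.inl ⟨e1, fun w => f2 (f1.trans w.symm), l⟩)))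
  · exact Or.inr (Or.inr (Or.inr (Or.inr ⟨e1.symm.trans f1.symm, f1,
      Or.inr (Or.inl ⟨m, l⟩)⟩)))
  · exact (e2 f1).elim
  · exact (e2 (f2.symm.trans f1.symm)).elim
  · exact (sbtw_ne13 g e2).elim
  · exact (f2 e2).elim
  · exact (f2 (f1.trans e2.symm)).elim
  · exact Or.inr (Or.inr (Or.inr (Or.inl ⟨(e1.trans e2).symm, f2,
      cyc3_extract2 asymL hc m⟩)))
  · exact Or.inr (Or.inr (Or.inr (Or.inr ⟨e1.trans f1, f2,
      cyc3_trans asymL transL hc mc⟩)))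

end Blowup

section BlowupOrder

variable {C : Type*} {Y : Type*} [CircularOrder C] (π : Y → C) (L : Y → Y → Prop)

/-- The blow-up circular order on `Y`. -/
def blowupCircularOrder
    (asymL : ∀ x y : Y, L x y → L y x → False)
    (transL : ∀ x y z : Y, L x y → L y z → L x z)
    (totalL : ∀ x y : Y, π x = π y → x ≠ y → L x y ∨ L y x) :
    CircularOrder Y where
  btw a b c := ¬ BS π L c b a
  sbtw := BS π L
  btw_refl a := fun h => BS_ne12 asymL h rfl
  btw_cyclic_left {a b c} h := fun g => h (BS_cyclic g)
  sbtw_iff_btw_not_btw {a b c} := by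
    constructor
    · exact fun h => ⟨fun g => BS_asym asymL h g, not_not_intro h⟩
    · exact fun ⟨w1, w2⟩ => not_not.mp w2
  sbtw_trans_left {a b c d} h g := BS_trans asymL transL h g
  btw_antisymm {a b c} h h' := by
    by_contra w
    push_neg at w
    obtain ⟨w1, w2, w3⟩ := w
    rcases BS_total asymL transL totalL w1 w2 (fun u => w3 u.symm) with s | s
    · exact h' s
    · exact h s
  btw_total a b c := by
    by_cases w : BS π L c b a
    · exact Or.inr (fun g => BS_asym asymL w g)
    · exact Or.inl w

end BlowupOrder

section Concrete

variable {G : Type*} [Group G] {X : Type*} [CircularOrder X]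
variable (φ : G →* Equiv.Perm X)

theorem exists_moved (hinj : Function.Injective φ) {f g : G} (h : f ≠ g) :
    {x : X | φ f x ≠ φ g x}.Nonempty := by
  by_contra hc
  rw [Set.not_nonempty_iff_eq_empty] at hc
  exact h (hinj (Equiv.ext fun x =>
    not_not.mp (Set.eq_empty_iff_forall_notMem.mp hc x)))

open scoped Classical in
/-- first point (in a fixed well-order) where `φ f` and `φ g` differ -/
noncomputable def dd (x₀ : X) (f g : G) : X :=
  if h : {x : X | φ f x ≠ φ g x}.Nonempty then
    (IsWellFounded.wf (r := (WellOrderingRel : X → X → Prop))).min _ h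
  else x₀

theorem dd_mem (x₀ : X) (hinj : Function.Injective φ) {f g : G} (h : f ≠ g) :
    φ f (dd φ x₀ f g) ≠ φ g (dd φ x₀ f g) := by
  rw [dd, dif_pos (exists_moved φ hinj h)]
  exact WellFounded.min_mem _ {x : X | φ f x ≠ φ g x} (exists_moved φ hinj h)

theorem dd_min (x₀ : X) {f g : G} {x : X}
    (h : WellOrderingRel x (dd φ x₀ f g)) : φ f x = φ g x := by
  by_cases hne : {x : X | φ f x ≠ φ g x}.Nonempty
  · rw [dd, dif_pos hne] at h
    by_contra hx
    exact WellFounded.not_lt_min _ _ hx h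
  · by_contra hx
    exact hne ⟨x, hx⟩

theorem dd_comm (x₀ : X) (f g : G) : dd φ x₀ f g = dd φ x₀ g f := by
  unfold dd
  rw [show {x : X | φ f x ≠ φ g x} = {x : X | φ g x ≠ φ f x} from by
    ext x; exact ne_comm]

theorem dd_eq (x₀ : X) {f g : G} {x : X} (h1 : φ f x ≠ φ g x)
    (h2 : ∀ y : X, WellOrderingRel y x → φ f y = φ g y) : dd φ x₀ f g = x := by
  have hne : {x : X | φ f x ≠ φ g x}.Nonempty := ⟨x, h1⟩
  rw [dd, dif_pos hne]
  rcases trichotomous_of (WellOrderingRel : X → X → Prop)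
      ((IsWellFounded.wf (r := (WellOrderingRel : X → X → Prop))).min _ hne) x with
    hr | he | hr
  · exact absurd (h2 _ hr) (WellFounded.min_mem _ _ hne)
  · exact he
  · exact absurd hr (WellFounded.not_lt_min _ _ h1)

/-- the linear order on `X` obtained by cutting the circular order at `x₀` -/
def cutLt (x₀ u v : X) : Prop := (u = x₀ ∧ v ≠ x₀) ∨ sbtw x₀ u v

theorem cutLt_ne {x₀ u v : X} (h : cutLt x₀ u v) : u ≠ v := by
  rcases h with ⟨rfl, h⟩ | h
  · exact fun e => h e.symm
  · exact sbtw_ne23 h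

theorem cutLt_asym {x₀ u v : X} (h : cutLt x₀ u v) (h' : cutLt x₀ v u) : False := by
  rcases h with ⟨rfl, h⟩ | h <;> rcases h' with ⟨e, h'⟩ | h'
  · exact h' rfl
  · exact sbtw_irrefl_left_right h'
  · exact sbtw_irrefl_left_right (e ▸ h)
  · exact sbtw_asymm h (sbtw_cyclic_left h')

theorem cutLt_trans {x₀ u v w : X} (h : cutLt x₀ u v) (h' : cutLt x₀ v w) :
    cutLt x₀ u w := by
  rcases h with ⟨e1, n1⟩ | h
  · rcases h' with ⟨e2, n2⟩ | h'
    · exact absurd e2 n1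
    · exact Or.inl ⟨e1, fun hw => sbtw_ne13 h' hw.symm⟩
  · rcases h' with ⟨e2, n2⟩ | h'
    · exact absurd e2.symm (sbtw_ne13 h)
    · exact Or.inr (sbtw_cyclic_right
        (sbtw_trans_left (sbtw_cyclic_left h) (sbtw_cyclic_left h')))

theorem cutLt_total {x₀ u v : X} (h : u ≠ v) : cutLt x₀ u v ∨ cutLt x₀ v u := by
  by_cases hu : u = x₀
  · exact Or.inl (Or.inl ⟨hu, fun hv => h (hu.trans hv.symm)⟩)
  · by_cases hv : v = x₀
    · exact Or.inr (Or.inl ⟨hv, hu⟩)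
    · rcases sbtw_total3 (Ne.symm hu) h (Ne.symm hv) with s | s
      · exact Or.inl (Or.inr s)
      · exact Or.inr (Or.inr (sbtw_cyclic_right s))

variable (hpres : ∀ (g : G) (a b c : X), sbtw a b c → sbtw (φ g a) (φ g b) (φ g c))

include hpres in
theorem cutLt_map {x₀ : X} {σ : G} (hσ : φ σ x₀ = x₀) {u v : X}
    (h : cutLt x₀ u v) : cutLt x₀ (φ σ u) (φ σ v) := by
  rcases h with ⟨rfl, h⟩ | h
  · exact Or.inl ⟨hσ, fun e => h ((φ σ).injective (e.trans hσ.symm))⟩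
  · have := hpres σ _ _ _ h
    rw [hσ] at this
    exact Or.inr this

/-- first-difference comparison of two group elements acting on `X` -/
noncomputable def hLt (x₀ : X) (f g : G) : Prop :=
  f ≠ g ∧ cutLt x₀ (φ f (dd φ x₀ f g)) (φ g (dd φ x₀ f g))

theorem hLt_asym (x₀ : X) {f g : G} (h : hLt φ x₀ f g) (h' : hLt φ x₀ g f) :
    False := by
  obtain ⟨hne, c1⟩ := h
  obtain ⟨_, c2⟩ := h'
  rw [dd_comm φ x₀ g f] at c2
  exact cutLt_asym c1 c2

theorem hLt_trans (x₀ : X) (hinj : Function.Injective φ) {u v w : G}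
    (h : hLt φ x₀ u v) (h' : hLt φ x₀ v w) : hLt φ x₀ u w := by
  obtain ⟨huv, c1⟩ := h
  obtain ⟨hvw, c2⟩ := h'
  have key : cutLt x₀ (φ u (dd φ x₀ u w)) (φ w (dd φ x₀ u w)) := by
    rcases trichotomous_of (WellOrderingRel : X → X → Prop)
        (dd φ x₀ u v) (dd φ x₀ v w) with hr | he | hr
    · have evw : φ v (dd φ x₀ u v) = φ w (dd φ x₀ u v) := dd_min φ x₀ hr
      have hne : φ u (dd φ x₀ u v) ≠ φ w (dd φ x₀ u v) := by
        rw [← evw]; exact dd_mem φ x₀ hinj huv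
      have he2 : dd φ x₀ u w = dd φ x₀ u v := dd_eq φ x₀ hne (fun y hy =>
        (dd_min φ x₀ hy).trans
          (dd_min φ x₀ (IsTrans.trans _ _ _ hy hr)))
      rw [he2, ← evw]; exact c1
    · rw [he] at c1
      have c3 := cutLt_trans c1 c2
      have hne := cutLt_ne c3
      have he2 : dd φ x₀ u w = dd φ x₀ v w := dd_eq φ x₀ hne (fun y hy =>
        (dd_min φ x₀ (show WellOrderingRel y (dd φ x₀ u v) from by
          rw [he]; exact hy)).trans (dd_min φ x₀ hy))
      rw [he2]; exact c3
    · have euv : φ u (dd φ x₀ v w) = φ v (dd φ x₀ v w) := dd_min φ x₀ hr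
      have hne : φ u (dd φ x₀ v w) ≠ φ w (dd φ x₀ v w) := by
        rw [euv]; exact dd_mem φ x₀ hinj hvw
      have he2 : dd φ x₀ u w = dd φ x₀ v w := dd_eq φ x₀ hne (fun y hy =>
        (dd_min φ x₀ (IsTrans.trans _ _ _ hy hr)).trans (dd_min φ x₀ hy))
      rw [he2, euv]; exact c2
  refine ⟨?_, key⟩
  rintro rfl
  exact cutLt_ne key rfl

theorem hLt_total (x₀ : X) (hinj : Function.Injective φ) {f g : G} (h : f ≠ g) :
    hLt φ x₀ f g ∨ hLt φ x₀ g f := by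
  rcases cutLt_total (x₀ := x₀) (dd_mem φ x₀ hinj h) with c | c
  · exact Or.inl ⟨h, c⟩
  · refine Or.inr ⟨h.symm, ?_⟩
    rw [dd_comm φ x₀ g f]
    exact c

include hpres in
theorem hLt_smul (x₀ : X) {σ f g : G} (hσ : φ σ x₀ = x₀)
    (h : hLt φ x₀ f g) : hLt φ x₀ (σ * f) (σ * g) := by
  obtain ⟨hne, c⟩ := h
  have hset : {x : X | φ (σ * f) x ≠ φ (σ * g) x} = {x : X | φ f x ≠ φ g x} := by
    ext x
    simp [map_mul, Equiv.Perm.mul_apply, (φ σ).injective.ne_iff]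
  have hdd : dd φ x₀ (σ * f) (σ * g) = dd φ x₀ f g := by
    unfold dd; rw [hset]
  refine ⟨fun e => hne (mul_left_cancel e), ?_⟩
  rw [hdd,
    show φ (σ * f) (dd φ x₀ f g) = φ σ (φ f (dd φ x₀ f g)) from by
      simp [map_mul],
    show φ (σ * g) (dd φ x₀ f g) = φ σ (φ g (dd φ x₀ f g)) from by
      simp [map_mul]]
  exact cutLt_map φ hpres hσ c

theorem stab_of {x₀ : X} {f g : G} (e : φ f x₀ = φ g x₀) :
    φ (f⁻¹ * g) x₀ = x₀ := by
  rw [map_mul, Equiv.Perm.mul_apply, ← e, map_inv]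
  exact Equiv.symm_apply_apply _ _

/-- the left-invariant linear order on the fibers (cosets of the stabilizer) -/
noncomputable def pL (x₀ : X) (f g : G) : Prop :=
  φ f x₀ = φ g x₀ ∧ hLt φ x₀ 1 (f⁻¹ * g)

include hpres in
theorem pL_asym (x₀ : X) (f g : G) (h : pL φ x₀ f g) (h' : pL φ x₀ g f) :
    False := by
  obtain ⟨e, hh⟩ := h
  obtain ⟨e', hh'⟩ := h'
  have := hLt_smul φ hpres x₀ (stab_of φ e) hh'
  rw [mul_one, show f⁻¹ * g * (g⁻¹ * f) = 1 from by group] at this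
  exact hLt_asym φ x₀ hh this

include hpres in
theorem pL_trans (x₀ : X) (hinj : Function.Injective φ) (f g k : G)
    (h : pL φ x₀ f g) (h' : pL φ x₀ g k) : pL φ x₀ f k := by
  obtain ⟨e, hh⟩ := h
  obtain ⟨e', hh'⟩ := h'
  refine ⟨e.trans e', ?_⟩
  have := hLt_smul φ hpres x₀ (stab_of φ e) hh'
  rw [mul_one, show f⁻¹ * g * (g⁻¹ * k) = f⁻¹ * k from by group] at this
  exact hLt_trans φ x₀ hinj hh this

include hpres in
theorem pL_total (x₀ : X) (hinj : Function.Injective φ) (f g : G)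
    (e : φ f x₀ = φ g x₀) (hne : f ≠ g) : pL φ x₀ f g ∨ pL φ x₀ g f := by
  have h1 : (1 : G) ≠ f⁻¹ * g := fun w => hne (inv_mul_eq_one.mp w.symm)
  rcases hLt_total φ x₀ hinj h1 with h | h
  · exact Or.inl ⟨e, h⟩
  · refine Or.inr ⟨e.symm, ?_⟩
    have := hLt_smul φ hpres x₀ (stab_of φ e.symm) h
    rw [mul_one, show g⁻¹ * f * (f⁻¹ * g) = 1 from by group] at this
    exact this

include hpres in
theorem BS_smul (x₀ : X) (k : G) {f g h : G}
    (hb : BS (fun a : G => φ a x₀) (pL φ x₀) f g h) :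
    BS (fun a : G => φ a x₀) (pL φ x₀) (k * f) (k * g) (k * h) := by
  have pimul : ∀ a : G, φ (k * a) x₀ = φ k (φ a x₀) := fun a => by
    rw [map_mul, Equiv.Perm.mul_apply]
  have eqiff : ∀ a b : G, φ (k * a) x₀ = φ (k * b) x₀ ↔ φ a x₀ = φ b x₀ := by
    intro a b
    rw [pimul, pimul]
    exact (φ k).injective.eq_iff
  have Liff : ∀ a b : G, pL φ x₀ (k * a) (k * b) ↔ pL φ x₀ a b := by
    intro a b
    unfold pL
    rw [eqiff, show (k * a)⁻¹ * (k * b) = a⁻¹ * b from by group]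
  have sb : ∀ a b c : G, sbtw (φ a x₀) (φ b x₀) (φ c x₀) →
      sbtw (φ (k * a) x₀) (φ (k * b) x₀) (φ (k * c) x₀) := by
    intro a b c hs
    rw [pimul, pimul, pimul]
    exact hpres k _ _ _ hs
  rcases hb with hs | ⟨e1, e2, l⟩ | ⟨e1, e2, l⟩ | ⟨e1, e2, l⟩ | ⟨e1, e2, hc⟩
  · exact Or.inl (sb _ _ _ hs)
  · exact Or.inr (Or.inl ⟨(eqiff _ _).mpr e1, fun w => e2 ((eqiff _ _).mp w),
      (Liff _ _).mpr l⟩)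
  · exact Or.inr (Or.inr (Or.inl ⟨(eqiff _ _).mpr e1,
      fun w => e2 ((eqiff _ _).mp w), (Liff _ _).mpr l⟩))
  · exact Or.inr (Or.inr (Or.inr (Or.inl ⟨(eqiff _ _).mpr e1,
      fun w => e2 ((eqiff _ _).mp w), (Liff _ _).mpr l⟩)))
  · refine Or.inr (Or.inr (Or.inr (Or.inr ⟨(eqiff _ _).mpr e1,
      (eqiff _ _).mpr e2, ?_⟩)))
    rcases hc with ⟨l1, l2⟩ | ⟨l1, l2⟩ | ⟨l1, l2⟩
    · exact Or.inl ⟨(Liff _ _).mpr l1, (Liff _ _).mpr l2⟩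
    · exact Or.inr (Or.inl ⟨(Liff _ _).mpr l1, (Liff _ _).mpr l2⟩)
    · exact Or.inr (Or.inr ⟨(Liff _ _).mpr l1, (Liff _ _).mpr l2⟩)

/-- the left-invariant circular order on `G` -/
noncomputable def finalOrder (x₀ : X) (hinj : Function.Injective φ) :
    CircularOrder G :=
  blowupCircularOrder (fun a : G => φ a x₀) (pL φ x₀)
    (fun _ _ h h' => pL_asym φ hpres x₀ _ _ h h')
    (fun _ _ _ h h' => pL_trans φ hpres x₀ hinj _ _ _ h h')
    (fun _ _ e hne => pL_total φ hpres x₀ hinj _ _ e hne)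

include hpres in
theorem finalOrder_iff (x₀ : X) (hinj : Function.Injective φ) (k f g h : G) :
    BS (fun a : G => φ a x₀) (pL φ x₀) f g h ↔
      BS (fun a : G => φ a x₀) (pL φ x₀) (k * f) (k * g) (k * h) := by
  constructor
  · exact BS_smul φ hpres x₀ k
  · intro hb
    have := BS_smul φ hpres x₀ k⁻¹ hb
    simpa only [inv_mul_cancel_left] using this

end Concrete

/-- trivial circular order on a subsingleton -/
def trivialOrder (Y : Type*) [Subsingleton Y] : CircularOrder Y where
  btw _ _ _ := True
  sbtw _ _ _ := False
  btw_refl _ := trivial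
  btw_cyclic_left _ := trivial
  sbtw_iff_btw_not_btw := by simp
  sbtw_trans_left h := h.elim
  btw_antisymm _ _ := Or.inl (Subsingleton.elim _ _)
  btw_total _ _ _ := Or.inl trivial

end CircProof



/-- A group `G` admits a left-invariant circular order if and only if there
exist a circularly ordered set `X` and an injective group homomorphism of `G` into the group
of circular-order automorphisms of `X`, i.e. `G` admits an effective action on some circularly
ordered set by `sbtw`-preserving bijections. -/
theorem left_circularly_orderable_iff_effective_action
    {G : Type u} [Group G] :
    (∃ c : CircularOrder G, ∀ g x y z : G,
        csbtw c x y z ↔ csbtw c (g * x) (g * y) (g * z)) ↔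
      (∃ (X : Type u) (cX : CircularOrder X) (φ : G →* Equiv.Perm X),
        Function.Injective φ ∧
          ∀ (g : G) (a b c : X), csbtw cX a b c → csbtw cX (φ g a) (φ g b) (φ g c)) := by
  constructor
  · rintro ⟨c, hc⟩
    refine ⟨G, c, MulAction.toPermHom G G, ?_, ?_⟩
    · intro a b hab
      have := congrArg (fun e : Equiv.Perm G => e 1) hab
      simpa using this
    · intro g a b c' h
      have h2 := (hc g a b c').mp h
      simpa only [MulAction.toPermHom_apply, MulAction.toPerm_apply,
        smul_eq_mul] using h2
  · rintro ⟨X, cX, φ, hinj, hpres⟩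
    letI := cX
    have hpres' : ∀ (g : G) (a b c : X),
        sbtw a b c → sbtw (φ g a) (φ g b) (φ g c) := hpres
    by_cases hX : Nonempty X
    · obtain ⟨x₀⟩ := hX
      exact ⟨CircProof.finalOrder φ hpres' x₀ hinj,
        fun k x y z => CircProof.finalOrder_iff φ hpres' x₀ hinj k x y z⟩
    · haveI : Subsingleton G :=
        ⟨fun a b => hinj (Equiv.ext fun x => (hX ⟨x⟩).elim)⟩
      exact ⟨CircProof.trivialOrder G, fun _ _ _ _ => Iff.rfl⟩
end

section
/- Let (X, ≤) be a linearly ordered set and G a group acting on X effectively by order automorphisms (order-preserving bijections). Then there exist: a compact Hausdorff totally disconnected space X∞ equipped with a linear order whose order (interval) topology coincides with its topology; an action of G on X∞ by order-preserving homeomorphisms which is jointly continuous when G carries the topology of pointwise convergence on the discrete set X; and a G-equivariant injective order-preserving map ν : X → X∞ with dense image whose image is a discrete subspace of X∞. Moreover: (i) if ≤_G is a linear order on G such that for every x ∈ X the orbit map g ↦ g•x from (G, ≤_G) to (X, ≤) is monotone, then for every a ∈ X∞ the orbit map g ↦ g•a from (G, ≤_G) to X∞ is monotone; (ii) if X is countable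 then X∞ is metrizable. -/
universe u v

open Set TopologicalSpace


namespace LinInvLimit

variable {X : Type u} [LinearOrder X]

/-- topology on lower sets -/
noncomputable instance zTop (α : Type*) [LinearOrder α] : TopologicalSpace (LowerSet α) :=
  Preorder.topology _

instance zOrdTop (α : Type*) [LinearOrder α] : OrderTopology (LowerSet α) := ⟨rfl⟩

instance zConcrete (α : Type*) [LinearOrder α] : IsConcreteLE (LowerSet α) α :=
  ⟨LowerSet.coe_subset_coe⟩

section cuts

variable {α : Type*} [LinearOrder α]

lemma mem_iff_Iic_le {p : α} {S : LowerSet α} : p ∈ S ↔ LowerSet.Iic p ≤ S :=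
  ⟨fun h => SetLike.le_def.2 fun q hq => S.lower (LowerSet.mem_Iic_iff.1 hq) h,
   fun h => SetLike.le_def.1 h (LowerSet.mem_Iic_iff.2 le_rfl)⟩

lemma not_mem_iff_le_Iio {p : α} {S : LowerSet α} : p ∉ S ↔ S ≤ LowerSet.Iio p := by
  constructor
  · intro h
    refine SetLike.le_def.2 fun q hq => LowerSet.mem_Iio_iff.2 ?_
    by_contra hlt
    exact h (S.lower (le_of_not_gt hlt) hq)
  · intro h hp
    exact lt_irrefl p (LowerSet.mem_Iio_iff.1 (SetLike.le_def.1 h hp))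

lemma memCut_eq_Ioi (p : α) : {S : LowerSet α | p ∈ S} = Ioi (LowerSet.Iio p) := by
  ext S
  simp only [mem_setOf_eq, mem_Ioi]
  constructor
  · intro hp
    refine lt_of_le_of_ne
      (SetLike.le_def.2 fun q hq => S.lower (le_of_lt (LowerSet.mem_Iio_iff.1 hq)) hp) ?_
    rintro rfl
    exact (LowerSet.mem_Iio_iff.1 hp).false
  · intro h
    obtain ⟨q, hqS, hq⟩ := SetLike.exists_of_lt h
    exact S.lower (not_lt.1 fun h' => hq (LowerSet.mem_Iio_iff.2 h')) hqS

lemma notMemCut_eq_Iio (p : α) : {S : LowerSet α | p ∉ S} = Iio (LowerSet.Iic p) := by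
  ext S
  simp only [mem_setOf_eq, mem_Iio]
  constructor
  · intro hp
    have h1 : S ≤ LowerSet.Iic p := le_trans (not_mem_iff_le_Iio.1 hp)
      (SetLike.le_def.2 fun q hq => LowerSet.mem_Iic_iff.2 (le_of_lt (LowerSet.mem_Iio_iff.1 hq)))
    refine lt_of_le_of_ne h1 ?_
    rintro rfl
    exact hp (LowerSet.mem_Iic_iff.2 le_rfl)
  · intro h hp
    exact lt_irrefl _ (lt_of_lt_of_le h (mem_iff_Iic_le.1 hp))

lemma isOpen_memCut (p : α) : IsOpen {S : LowerSet α | p ∈ S} := by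
  rw [memCut_eq_Ioi]; exact isOpen_Ioi

lemma isOpen_notMemCut (p : α) : IsOpen {S : LowerSet α | p ∉ S} := by
  rw [notMemCut_eq_Iio]; exact isOpen_Iio

/-- total disconnectedness of the space of lower sets -/
instance : TotallyDisconnectedSpace (LowerSet α) := by
  refine ⟨fun t _ ht => ?_⟩
  intro A hA B hB
  by_contra hne
  have key : ∀ C D : LowerSet α, C ∈ t → D ∈ t → C < D → False := by
    intro C D hC hD hCD
    obtain ⟨p, hpD, hpC⟩ := SetLike.exists_of_lt hCD
    obtain ⟨S, _, hS1, hS2⟩ :=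
      ht {S | p ∉ S} {S | p ∈ S} (isOpen_notMemCut p) (isOpen_memCut p)
        (fun S _ => by by_cases h : p ∈ S <;> [exact Or.inr h; exact Or.inl h])
        ⟨C, hC, hpC⟩ ⟨D, hD, hpD⟩
    exact hS1 hS2
  rcases lt_or_gt_of_ne hne with h | h
  · exact key A B hA hB h
  · exact key B A hB hA h

end cuts

variable {G : Type v} [Group G] [MulAction G X]
variable (hm : ∀ (g : G) (x y : X), x ≤ y → g • x ≤ g • y)

/-- the action of `g` as an order isomorphism of `X` -/
noncomputable def actIso (g : G) : X ≃o X :=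
  { MulAction.toPerm g with
    map_rel_iff' := by
      intro a b
      constructor
      · intro h
        have := hm g⁻¹ _ _ h
        simpa using this
      · exact hm g a b }

/-- the order isomorphism of `Lex (X × Bool)` induced by an order isomorphism of `X` -/
noncomputable def lexIso (e : X ≃o X) : Lex (X × Bool) ≃o Lex (X × Bool) where
  toFun p := toLex (e (ofLex p).1, (ofLex p).2)
  invFun p := toLex (e.symm (ofLex p).1, (ofLex p).2)
  left_inv p := by simp
  right_inv p := by simp
  map_rel_iff' := by
    intro p q
    show toLex (e (ofLex p).1, (ofLex p).2) ≤ toLex (e (ofLex q).1, (ofLex q).2) ↔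
      toLex (ofLex p) ≤ toLex (ofLex q)
    rw [Prod.Lex.le_iff, Prod.Lex.le_iff]
    simp [e.lt_iff_lt, e.injective.eq_iff]

lemma lex_le_iff {p q : Lex (X × Bool)} :
    p ≤ q ↔ (ofLex p).1 < (ofLex q).1 ∨ (ofLex p).1 = (ofLex q).1 ∧ (ofLex p).2 ≤ (ofLex q).2 :=
  Prod.Lex.le_iff

abbrev Z (X : Type u) [LinearOrder X] : Type u := LowerSet (Lex (X × Bool))

/-- the action of `g` on lower sets of `Lex (X × Bool)` -/
noncomputable def actZ (g : G) : Z X ≃o Z X := LowerSet.map (lexIso (actIso hm g))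

lemma mem_actZ {g : G} {S : Z X} {p : Lex (X × Bool)} :
    p ∈ actZ hm g S ↔ toLex (g⁻¹ • (ofLex p).1, (ofLex p).2) ∈ S := by
  rw [actZ, LowerSet.mem_map]
  rfl

/-- the canonical map from `X` to lower sets -/
noncomputable def nu0 (x : X) : Z X := LowerSet.Iic (toLex (x, false))

lemma actZ_nu0 (g : G) (x : X) : actZ hm g (nu0 x) = nu0 (g • x) := by
  refine SetLike.ext fun p => ?_
  rw [mem_actZ, nu0, nu0, LowerSet.mem_Iic_iff, LowerSet.mem_Iic_iff]
  rw [lex_le_iff, lex_le_iff]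
  simp only [ofLex_toLex]
  have h1 : g⁻¹ • (ofLex p).1 < x ↔ (ofLex p).1 < g • x := by
    constructor
    · intro h
      have := (actIso hm g).lt_iff_lt.2 h
      simpa [actIso] using this
    · intro h
      have h3 : x = g⁻¹ • (g • x) := by simp
      rw [h3]
      by_contra hc
      rw [not_lt] at hc
      have := hm g _ _ hc
      simp only [smul_inv_smul] at this
      exact absurd h (not_lt.2 this)
  have h2 : g⁻¹ • (ofLex p).1 = x ↔ (ofLex p).1 = g • x := by
    constructor
    · intro h; rw [← h]; simp
    · intro h; rw [h]; simp
  rw [h1, h2]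

lemma toLexF_mono {x y : X} (h : x ≤ y) :
    (toLex (x, false) : Lex (X × Bool)) ≤ toLex (y, false) := by
  rw [lex_le_iff]
  simp only [ofLex_toLex]
  rcases lt_or_eq_of_le h with h' | h'
  · exact Or.inl h'
  · exact Or.inr ⟨h', le_rfl⟩

lemma nu0_injective : Function.Injective (nu0 : X → Z X) := by
  intro x y h
  have := LowerSet.Iic_injective h
  have := congrArg (fun p : Lex (X × Bool) => (ofLex p).1) this
  simpa using this

lemma nu0_mono {x y : X} (h : x ≤ y) : nu0 x ≤ (nu0 y : Z X) :=
  SetLike.le_def.2 fun q hq =>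
    LowerSet.mem_Iic_iff.2 (le_trans (LowerSet.mem_Iic_iff.1 hq) (toLexF_mono h))

/-- every `nu0 x` is an isolated point -/
lemma isOpen_singleton_nu0 (x : X) : IsOpen ({nu0 x} : Set (Z X)) := by
  have : ({nu0 x} : Set (Z X)) =
      {S | toLex (x, false) ∈ S} ∩ {S | toLex (x, true) ∉ S} := by
    ext S
    simp only [mem_singleton_iff, mem_inter_iff, mem_setOf_eq]
    constructor
    · rintro rfl
      refine ⟨LowerSet.mem_Iic_iff.2 le_rfl, ?_⟩
      intro h
      have : (toLex ((x : X), true) : Lex (X × Bool)) ≤ toLex (x, false) :=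
        LowerSet.mem_Iic_iff.1 h
      rw [lex_le_iff] at this
      simp only [ofLex_toLex] at this
      rcases this with h | ⟨-, h⟩
      · exact lt_irrefl x h
      · exact absurd h (by decide)
    · rintro ⟨h1, h2⟩
      refine SetLike.ext fun q => ?_
      rw [nu0, LowerSet.mem_Iic_iff]
      constructor
      · intro hq
        by_contra h
        apply h2
        apply S.lower _ hq
        rw [not_le] at h
        rw [lex_le_iff]
        rw [show ((toLex (x, false) : Lex (X × Bool)) < q) ↔ _ from
          Prod.Lex.lt_iff (x := toLex (x, false)) (y := q)] at h
        simp only [ofLex_toLex]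
        rcases h with h | ⟨h, h'⟩
        · exact Or.inl h
        · refine Or.inr ⟨h, ?_⟩
          have hb : false < (ofLex q).2 := h'
          have : (ofLex q).2 = true := by
            rcases hB : (ofLex q).2 with _ | _
            · rw [hB] at hb; exact absurd hb (by decide)
            · rfl
          rw [this]
      · intro hq
        exact S.lower hq h1
  rw [this]
  exact (isOpen_memCut _).inter (isOpen_notMemCut _)

/-- key: non-inclusion as an existential, used for joint continuity -/
lemma lt_iff_exists_cut {A B : Z X} : A < B ↔ ∃ p, p ∈ B ∧ p ∉ A := by
  constructor
  · intro h
    exact SetLike.exists_of_lt h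
  · rintro ⟨p, hpB, hpA⟩
    rcases le_total B A with h | h
    · exact absurd (h hpB) hpA
    · exact lt_of_le_of_ne h (by rintro rfl; exact hpA hpB)


section Ydef

variable (X)

/-- the compactification: closure of the image of `X` -/
noncomputable def CC : Set (Z X) := closure (Set.range (nu0 : X → Z X))

lemma isClosed_CC : IsClosed (CC X) := isClosed_closure

lemma range_nu0_subset_CC : Set.range (nu0 : X → Z X) ⊆ CC X := subset_closure

/-- the compactification as a type -/
abbrev Yt : Type u := ↥(CC X)

lemma subspace_le_order :
    (instTopologicalSpaceSubtype : TopologicalSpace (Yt X)) ≤ Preorder.topology (Yt X) := by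
  show (instTopologicalSpaceSubtype : TopologicalSpace (Yt X)) ≤
    TopologicalSpace.generateFrom {s | ∃ a, s = Ioi a ∨ s = Iio a}
  apply le_generateFrom
  rintro s ⟨a, rfl | rfl⟩
  · have : (Ioi a : Set (Yt X)) = Subtype.val ⁻¹' (Ioi (a : Z X)) := by
      ext y; exact Iff.rfl
    rw [this]
    exact isOpen_Ioi.preimage continuous_subtype_val
  · have : (Iio a : Set (Yt X)) = Subtype.val ⁻¹' (Iio (a : Z X)) := by
      ext y; exact Iff.rfl
    rw [this]
    exact isOpen_Iio.preimage continuous_subtype_val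

lemma compact_Yt : CompactSpace (Yt X) :=
  isCompact_iff_compactSpace.mp ((isClosed_CC X).isCompact)

section generic
variable {β : Type*} [LinearOrder β]

lemma ordT2' : @T2Space β (Preorder.topology β) := by
  letI : TopologicalSpace β := Preorder.topology β
  haveI : OrderTopology β := ⟨rfl⟩
  exact inferInstance

lemma topeq (ts : TopologicalSpace β) (h1 : ts ≤ Preorder.topology β)
    (hc : @CompactSpace β ts) : ts = Preorder.topology β := by
  haveI hT2 : @T2Space β (Preorder.topology β) := ordT2'
  have hcont : @Continuous _ _ ts (Preorder.topology β) id := continuous_id_iff_le.2 h1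
  have key : ∀ C : Set β, @IsClosed β ts C → @IsClosed β (Preorder.topology β) C := by
    intro C hC
    have h1c : @IsCompact β ts C := @IsClosed.isCompact β ts C hc hC
    have h2c : @IsCompact β (Preorder.topology β) C := by
      have := @IsCompact.image β β ts (Preorder.topology β) C id h1c hcont
      simpa using this
    exact @IsCompact.isClosed β (Preorder.topology β) hT2 C h2c
  refine le_antisymm h1 ?_
  intro U hU
  have hclosed : @IsClosed β (Preorder.topology β) Uᶜ :=
    key Uᶜ (@isClosed_compl_iff β ts U |>.2 hU)
  exact (@isClosed_compl_iff β (Preorder.topology β) U).1 hclosed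

end generic

lemma subtype_topology_eq :
    (instTopologicalSpaceSubtype : TopologicalSpace (Yt X)) = Preorder.topology (Yt X) :=
  topeq _ (subspace_le_order X) (compact_Yt X)

lemma orderTopology_Yt :
    @OrderTopology (Yt X) instTopologicalSpaceSubtype _ :=
  ⟨subtype_topology_eq X⟩

end Ydef


section action

variable {G : Type v} [Group G] [MulAction G X]
variable (hm : ∀ (g : G) (x y : X), x ≤ y → g • x ≤ g • y)

lemma actZ_image_range (g : G) :
    (actZ hm g) '' Set.range (nu0 : X → Z X) = Set.range nu0 := by
  rw [← Set.range_comp]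
  have h1 : (actZ hm g) ∘ (nu0 : X → Z X) = nu0 ∘ (fun x : X => g • x) :=
    funext fun x => actZ_nu0 hm g x
  rw [h1, Set.range_comp, (MulAction.surjective g).range_eq, Set.image_univ]

lemma actZ_mem_CC (g : G) {S : Z X} (h : S ∈ CC X) : actZ hm g S ∈ CC X := by
  have him := ((actZ hm g).toHomeomorph).image_closure (Set.range (nu0 : X → Z X))
  have : actZ hm g S ∈ (actZ hm g).toHomeomorph '' (CC X) := ⟨S, h, rfl⟩
  rw [CC] at this ⊢
  rw [him] at this
  rwa [show (actZ hm g).toHomeomorph '' Set.range (nu0 : X → Z X) = Set.range nu0 from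
    actZ_image_range hm g] at this

lemma actZ_one (S : Z X) : actZ hm 1 S = S := by
  refine SetLike.ext fun p => ?_
  rw [mem_actZ]
  have : (toLex (((1 : G))⁻¹ • (ofLex p).1, (ofLex p).2) : Lex (X × Bool)) = p := by
    simp
  rw [this]

lemma actZ_mul (g h : G) (S : Z X) : actZ hm (g * h) S = actZ hm g (actZ hm h S) := by
  refine SetLike.ext fun p => ?_
  rw [mem_actZ, mem_actZ, mem_actZ]
  simp only [ofLex_toLex, mul_inv_rev, mul_smul]

/-- the action on the compactification -/
noncomputable def actY (g : G) : Yt X ≃ Yt X where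
  toFun y := ⟨actZ hm g y.1, actZ_mem_CC hm g y.2⟩
  invFun y := ⟨actZ hm g⁻¹ y.1, actZ_mem_CC hm g⁻¹ y.2⟩
  left_inv y := by
    refine Subtype.ext ?_
    show actZ hm g⁻¹ (actZ hm g y.1) = y.1
    rw [← actZ_mul hm, inv_mul_cancel, actZ_one hm]
  right_inv y := by
    refine Subtype.ext ?_
    show actZ hm g (actZ hm g⁻¹ y.1) = y.1
    rw [← actZ_mul hm, mul_inv_cancel, actZ_one hm]

/-- the action as a homomorphism into permutations -/
noncomputable def actHom : G →* Equiv.Perm (Yt X) where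
  toFun := actY hm
  map_one' := by
    refine Equiv.ext fun y => Subtype.ext ?_
    show actZ hm 1 y.1 = y.1
    exact actZ_one hm y.1
  map_mul' g h := by
    refine Equiv.ext fun y => Subtype.ext ?_
    show actZ hm (g * h) y.1 = actZ hm g (actZ hm h y.1)
    exact actZ_mul hm g h y.1

lemma actHom_monotone (g : G) : Monotone (actHom hm g) := by
  intro y z h
  show (actZ hm g y.1 : Z X) ≤ actZ hm g z.1
  exact (actZ hm g).monotone (Subtype.coe_le_coe.2 h)

lemma actHom_continuous (g : G) : Continuous (actHom hm g : Yt X → Yt X) := by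
  refine Continuous.subtype_mk ?_ _
  show Continuous fun y : Yt X => actZ hm g y.1
  exact ((actZ hm g).toHomeomorph.continuous).comp continuous_subtype_val

end action

section nuY

variable (X)

/-- the embedding of `X` into the compactification -/
noncomputable def nuY (x : X) : Yt X := ⟨nu0 x, range_nu0_subset_CC X ⟨x, rfl⟩⟩

lemma nuY_injective : Function.Injective (nuY X) := fun x y h =>
  nu0_injective (congrArg Subtype.val h)

lemma nuY_mono {x y : X} (h : x ≤ y) : nuY X x ≤ nuY X y :=
  Subtype.coe_le_coe.1 (nu0_mono h)

lemma dense_range_nuY : Dense (Set.range (nuY X)) := by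
  intro y
  rw [closure_subtype]
  have : Subtype.val '' Set.range (nuY X) = Set.range (nu0 : X → Z X) := by
    rw [← Set.range_comp]
    rfl
  rw [this]
  exact y.2

lemma discrete_range_nuY : DiscreteTopology (Set.range (nuY X)) := by
  rw [discreteTopology_iff_isOpen_singleton]
  rintro ⟨y, hy⟩
  have hyo : IsOpen ({y} : Set (Yt X)) := by
    obtain ⟨x, rfl⟩ := hy
    have : ({nuY X x} : Set (Yt X)) = Subtype.val ⁻¹' {nu0 x} := by
      ext z
      simp only [mem_singleton_iff, mem_preimage]
      exact ⟨fun h => congrArg Subtype.val h, fun h => Subtype.ext h⟩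
    rw [this]
    exact (isOpen_singleton_nu0 x).preimage continuous_subtype_val
  have : ({⟨y, hy⟩} : Set (Set.range (nuY X))) = Subtype.val ⁻¹' {y} := by
    ext z
    simp only [mem_singleton_iff, mem_preimage]
    exact ⟨fun h => congrArg Subtype.val h, fun h => Subtype.ext h⟩
  rw [this]
  exact hyo.preimage continuous_subtype_val

end nuY


section joint

variable {G : Type v} [Group G] [MulAction G X]
variable (hm : ∀ (g : G) (x y : X), x ≤ y → g • x ≤ g • y)

lemma joint_continuous [tG : TopologicalSpace G]
    (hg : ∀ (s : X) (V : Set X), IsOpen ((fun g : G => g • s) ⁻¹' V)) :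
    Continuous (fun p : G × Yt X => actY hm p.1 p.2) := by
  refine Continuous.subtype_mk ?_ _
  show Continuous fun p : G × Yt X => actZ hm p.1 (p.2 : Z X)
  refine (@continuous_generateFrom_iff (G × Yt X) (Z X) _ _
    {s | ∃ a, s = Ioi a ∨ s = Iio a}).2 ?_
  rintro s ⟨A, rfl | rfl⟩
  · have heq : (fun p : G × Yt X => actZ hm p.1 (p.2 : Z X)) ⁻¹' (Ioi A) =
        ⋃ q : X × Bool, ((fun g : G => g • q.1) ⁻¹' {x : X | toLex (x, q.2) ∉ A}) ×ˢ
          {y : Yt X | toLex q ∈ (y : Z X)} := by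
      ext ⟨g, y⟩
      simp only [mem_preimage, mem_Ioi, mem_iUnion, mem_prod, mem_setOf_eq]
      constructor
      · intro h
        obtain ⟨p, hp1, hp2⟩ := lt_iff_exists_cut.1 h
        refine ⟨(g⁻¹ • (ofLex p).1, (ofLex p).2), ?_, (mem_actZ hm).1 hp1⟩
        show toLex (g • (g⁻¹ • (ofLex p).1), (ofLex p).2) ∉ A
        simpa using hp2
      · rintro ⟨q, hq1, hq2⟩
        refine lt_iff_exists_cut.2 ⟨toLex (g • q.1, q.2), ?_, hq1⟩
        rw [mem_actZ]
        simpa using hq2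
    rw [heq]
    refine isOpen_iUnion fun q => IsOpen.prod (hg _ _) ?_
    show IsOpen (Subtype.val ⁻¹' {S : Z X | toLex q ∈ S})
    exact (isOpen_memCut _).preimage continuous_subtype_val
  · have heq : (fun p : G × Yt X => actZ hm p.1 (p.2 : Z X)) ⁻¹' (Iio A) =
        ⋃ q : X × Bool, ((fun g : G => g • q.1) ⁻¹' {x : X | toLex (x, q.2) ∈ A}) ×ˢ
          {y : Yt X | toLex q ∉ (y : Z X)} := by
      ext ⟨g, y⟩
      simp only [mem_preimage, mem_Iio, mem_iUnion, mem_prod, mem_setOf_eq]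
      constructor
      · intro h
        obtain ⟨p, hp1, hp2⟩ := lt_iff_exists_cut.1 h
        refine ⟨(g⁻¹ • (ofLex p).1, (ofLex p).2), ?_, ?_⟩
        · show toLex (g • (g⁻¹ • (ofLex p).1), (ofLex p).2) ∈ A
          simpa using hp1
        · intro hmem
          exact hp2 ((mem_actZ hm).2 hmem)
      · rintro ⟨q, hq1, hq2⟩
        refine lt_iff_exists_cut.2 ⟨toLex (g • q.1, q.2), hq1, ?_⟩
        rw [mem_actZ]
        simpa using hq2
    rw [heq]
    refine isOpen_iUnion fun q => IsOpen.prod (hg _ _) ?_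
    show IsOpen (Subtype.val ⁻¹' {S : Z X | toLex q ∉ S})
    exact (isOpen_notMemCut _).preimage continuous_subtype_val

lemma actY_mono_orbit (loG : LinearOrder G)
    (horb : ∀ (x : X) (g h : G), loG.le g h → g • x ≤ h • x)
    (a : Yt X) {g h : G} (hgh : loG.le g h) : actY hm g a ≤ actY hm h a := by
  show (actZ hm g (a : Z X) : Z X) ≤ actZ hm h (a : Z X)
  refine SetLike.le_def.2 fun p hp => ?_
  rw [mem_actZ] at hp ⊢
  refine (a : Z X).lower ?_ hp
  rw [lex_le_iff]
  simp only [ofLex_toLex]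
  have key : h⁻¹ • (ofLex p).1 ≤ g⁻¹ • (ofLex p).1 := by
    have h1 : g • (h⁻¹ • (ofLex p).1) ≤ h • (h⁻¹ • (ofLex p).1) :=
      horb (h⁻¹ • (ofLex p).1) g h hgh
    have h2 : h • (h⁻¹ • (ofLex p).1) = g • (g⁻¹ • (ofLex p).1) := by simp
    rw [h2] at h1
    have := hm g⁻¹ _ _ h1
    simpa using this
  rcases lt_or_eq_of_le key with h' | h'
  · exact Or.inl h'
  · exact Or.inr ⟨h', le_rfl⟩

end joint

lemma metrizable_Yt [Countable X] : MetrizableSpace (Yt X) := by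
  classical
  let f : Yt X → ((X × Bool) → Bool) := fun y q => decide (toLex q ∈ (y : Z X))
  have hinj : Function.Injective f := by
    intro y z h
    refine Subtype.ext (SetLike.ext fun p => ?_)
    have h1 := congrFun h (ofLex p)
    simp only [f] at h1
    exact decide_eq_decide.1 h1
  have hcont : Continuous f := by
    refine continuous_pi fun q => ?_
    refine continuous_discrete_rng.2 fun b => ?_
    rcases b with _ | _
    · have : (fun y : Yt X => decide (toLex q ∈ (y : Z X))) ⁻¹' {false} =
          Subtype.val ⁻¹' {S : Z X | toLex q ∉ S} := by
        ext y
        simp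
      rw [show (fun y : Yt X => f y q) = fun y : Yt X => decide (toLex q ∈ (y : Z X)) from rfl,
        this]
      exact (isOpen_notMemCut _).preimage continuous_subtype_val
    · have : (fun y : Yt X => decide (toLex q ∈ (y : Z X))) ⁻¹' {true} =
          Subtype.val ⁻¹' {S : Z X | toLex q ∈ S} := by
        ext y
        simp
      rw [show (fun y : Yt X => f y q) = fun y : Yt X => decide (toLex q ∈ (y : Z X)) from rfl,
        this]
      exact (isOpen_memCut _).preimage continuous_subtype_val
  haveI : CompactSpace (Yt X) := compact_Yt X
  have hemb := hcont.isClosedEmbedding hinj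
  exact hemb.isEmbedding.metrizableSpace

end LinInvLimit


/-- Every effective order-preserving action of a group `G` on a linearly
ordered set `X` extends to an action by order-preserving homeomorphisms on a compact Hausdorff
totally disconnected linearly ordered space `X∞` (carrying its order topology), jointly
continuous for the pointwise topology on `G` w.r.t. the discrete set `X`, together with a
`G`-equivariant injective order-preserving map `ν : X → X∞` with dense, discrete image.
Moreover: (i) any linear order on `G` making all orbit maps `g ↦ g • x` (`x ∈ X`) monotone
makes all orbit maps `g ↦ g • a` (`a ∈ X∞`) monotone; (ii) if `X` is countable then `X∞` is
metrizable. -/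
theorem linear_inverse_limit_compactification
    {X : Type u} [LinearOrder X] {G : Type v} [Group G] [MulAction G X]
    (heff : ∀ g : G, (∀ x : X, g • x = x) → g = 1)
    (hmono : ∀ (g : G) (x y : X), x ≤ y → g • x ≤ g • y) :
    ∃ (Y : Type u) (loY : LinearOrder Y) (tY : TopologicalSpace Y)
      (act : G →* Equiv.Perm Y) (ν : X → Y),
      letI := loY
      letI := tY
      letI : TopologicalSpace G :=
        TopologicalSpace.induced (fun (g : G) (x : X) => g • x)
          (@Pi.topologicalSpace X (fun _ => X) (fun _ => ⊥))
      OrderTopology Y ∧ CompactSpace Y ∧ T2Space Y ∧ TotallyDisconnectedSpace Y ∧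
      (∀ g : G, Monotone (act g)) ∧
      (∀ g : G, Continuous (act g)) ∧
      Continuous (fun p : G × Y => act p.1 p.2) ∧
      Function.Injective ν ∧
      (∀ (g : G) (x : X), ν (g • x) = act g (ν x)) ∧
      (∀ x y : X, x ≤ y → ν x ≤ ν y) ∧
      Dense (Set.range ν) ∧
      DiscreteTopology (Set.range ν) ∧
      (∀ loG : LinearOrder G,
        (∀ (x : X) (g h : G), loG.le g h → g • x ≤ h • x) →
          ∀ (a : Y) (g h : G), loG.le g h → act g a ≤ act h a) ∧
      (Countable X → TopologicalSpace.MetrizableSpace Y) := by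

  classical
  refine ⟨LinInvLimit.Yt X, inferInstance, inferInstance, LinInvLimit.actHom hmono,
    LinInvLimit.nuY X, LinInvLimit.orderTopology_Yt X, LinInvLimit.compact_Yt X,
    inferInstance, inferInstance, LinInvLimit.actHom_monotone hmono,
    LinInvLimit.actHom_continuous hmono, ?_, LinInvLimit.nuY_injective X, ?_,
    fun x y h => LinInvLimit.nuY_mono X h, LinInvLimit.dense_range_nuY X,
    LinInvLimit.discrete_range_nuY X, ?_, ?_⟩
  · -- joint continuity
    letI tG : TopologicalSpace G :=
      TopologicalSpace.induced (fun (g : G) (x : X) => g • x)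
        (@Pi.topologicalSpace X (fun _ => X) (fun _ => ⊥))
    refine LinInvLimit.joint_continuous hmono ?_
    intro s V
    letI tX : TopologicalSpace X := ⊥
    haveI : DiscreteTopology X := ⟨rfl⟩
    have hcont : Continuous fun g : G => g • s :=
      (continuous_apply s).comp continuous_induced_dom
    exact hcont.isOpen_preimage V (isOpen_discrete V)
  · -- equivariance
    intro g x
    exact Subtype.ext (LinInvLimit.actZ_nu0 hmono g x).symm
  · -- orbit monotonicity
    intro loG horb a g h hgh
    exact LinInvLimit.actY_mono_orbit hmono loG horb a hgh
  · -- metrizability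
    intro hc
    haveI := hc
    exact LinInvLimit.metrizable_Yt (X := X)
end

section
/- Let K be a compact Hausdorff topological space equipped with a linear order whose order (interval) topology coincides with the topology of K, and let G be a topological group acting continuously and effectively on K such that every g ∈ G acts as an order automorphism of K. If g ∈ G satisfies 1 ∈ closure {gⁿ : n ∈ ℕ, n ≥ 1}, then g = 1. In other words, the neutral element is the only weakly topologically torsion element of G. -/
/-- Let a topological group `G` act continuously and effectively on a compact
Hausdorff space `K` with a linear order inducing its topology, each `g` acting as an order
automorphism. If `1 ∈ closure {gⁿ : n ≥ 1}` then `g = 1`: the identity is the only weakly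
topologically torsion element of `G`. -/
theorem orderly_no_weakly_topologically_torsion
    {K : Type*} [TopologicalSpace K] [LinearOrder K] [OrderTopology K]
    [CompactSpace K] [T2Space K]
    {G : Type*} [Group G] [TopologicalSpace G] [IsTopologicalGroup G] [MulAction G K]
    (hcont : Continuous (fun p : G × K => p.1 • p.2))
    (heff : ∀ g : G, (∀ x : K, g • x = x) → g = 1)
    (hmono : ∀ g : G, Monotone (fun x : K => g • x))
    (g : G) (hg : (1 : G) ∈ closure {h : G | ∃ n : ℕ, 1 ≤ n ∧ h = g ^ n}) :
    g = 1 := by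
  apply heff
  intro x
  by_contra hx
  -- orbit map at x is continuous
  have horb : Continuous (fun h : G => h • x) :=
    hcont.comp (continuous_id.prodMk continuous_const)
  set S := {h : G | ∃ n : ℕ, 1 ≤ n ∧ h = g ^ n} with hS
  have hxcl : x ∈ closure ((fun h : G => h • x) '' S) := by
    have := image_closure_subset_closure_image (f := fun h : G => h • x) horb
      (Set.mem_image_of_mem _ hg)
    simpa using this
  rcases lt_or_gt_of_ne hx with hlt | hgt
  · -- g • x < x
    have key : ∀ n : ℕ, 1 ≤ n → g ^ n • x ≤ g • x := by
      intro n hn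
      induction n with
      | zero => omega
      | succ m ih =>
        rcases Nat.eq_or_lt_of_le hn with h | h
        · simp [← h]
        · have hm : 1 ≤ m := by omega
          have : g ^ (m + 1) • x = g ^ m • (g • x) := by
            rw [pow_succ, mul_smul]
          rw [this]
          calc g ^ m • (g • x) ≤ g ^ m • x := hmono (g ^ m) hlt.le
            _ ≤ g • x := ih hm
    have hsub : (fun h : G => h • x) '' S ⊆ Set.Iic (g • x) := by
      rintro _ ⟨h, ⟨n, hn, rfl⟩, rfl⟩
      exact key n hn
    have : x ∈ Set.Iic (g • x) :=
      (closure_minimal hsub isClosed_Iic) hxcl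
    exact absurd this (not_le.mpr hlt)
  · -- x < g • x
    have key : ∀ n : ℕ, 1 ≤ n → g • x ≤ g ^ n • x := by
      intro n hn
      induction n with
      | zero => omega
      | succ m ih =>
        rcases Nat.eq_or_lt_of_le hn with h | h
        · simp [← h]
        · have hm : 1 ≤ m := by omega
          have he : g ^ (m + 1) • x = g ^ m • (g • x) := by
            rw [pow_succ, mul_smul]
          rw [he]
          calc g • x ≤ g ^ m • x := ih hm
            _ ≤ g ^ m • (g • x) := hmono (g ^ m) hgt.le
    have hsub : (fun h : G => h • x) '' S ⊆ Set.Ici (g • x) := by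
      rintro _ ⟨h, ⟨n, hn, rfl⟩, rfl⟩
      exact key n hn
    have : x ∈ Set.Ici (g • x) :=
      (closure_minimal hsub isClosed_Ici) hxcl
    exact absurd this (not_le.mpr hgt)
end

section
/- Let G be a topological group acting continuously and effectively on a compact Hausdorff space K equipped with a linear order whose order topology coincides with the topology of K, such that every g ∈ G acts as an order automorphism of K. Then every compact subgroup of G is trivial (equal to {1}). -/
/-- Let a topological group `G` act continuously and effectively on a compact
Hausdorff space `K` with a linear order inducing its topology, every `g` acting as an order
automorphism. Then every compact subgroup of `G` is trivial. -/
theorem orderly_compact_subgroups_trivial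
    {K : Type*} [TopologicalSpace K] [LinearOrder K] [OrderTopology K]
    [CompactSpace K] [T2Space K]
    {G : Type*} [Group G] [TopologicalSpace G] [IsTopologicalGroup G] [MulAction G K]
    (hcont : Continuous (fun p : G × K => p.1 • p.2))
    (heff : ∀ g : G, (∀ x : K, g • x = x) → g = 1)
    (hmono : ∀ g : G, Monotone (fun x : K => g • x))
    (H : Subgroup G) (hH : IsCompact (H : Set G)) :
    H = ⊥ := by
  have key : ∀ g ∈ H, ∀ x : K, ¬ x < g • x := by
    intro g hg x hx
    -- the orbit of `x` under powers of `g` is increasing and stays ≥ `g • x`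
    have hstep : ∀ n : ℕ, g ^ n • x ≤ g ^ (n + 1) • x := by
      intro n
      have h1 : g ^ (n + 1) • x = g ^ n • (g • x) := by rw [pow_succ, mul_smul]
      rw [h1]
      exact hmono (g ^ n) hx.le
    have hmonoseq : Monotone fun n : ℕ => g ^ n • x := monotone_nat_of_le_succ hstep
    have hge : ∀ n : ℕ, 1 ≤ n → g • x ≤ g ^ n • x := by
      intro n hn
      have := hmonoseq hn
      simpa using this
    -- compactness: some `g ^ n` (with `n ≥ 1`) lies in any neighborhood of `1`
    have hpow : ∀ n : ℕ, g ^ n ∈ (H : Set G) := fun n => pow_mem hg n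
    have hFle : Filter.map (fun n : ℕ => g ^ n) Filter.atTop ≤ Filter.principal (H : Set G) := by
      rw [Filter.le_principal_iff]
      exact Filter.mem_map.2 (Filter.eventually_atTop.2 ⟨0, fun n _ => hpow n⟩)
    obtain ⟨c, -, hc⟩ := hH.exists_clusterPt hFle
    have hfreq : ∀ W ∈ nhds c, ∀ N : ℕ, ∃ n ≥ N, g ^ n ∈ W := by
      intro W hW N
      have hV : {y : G | ∃ m ≥ N, g ^ m = y} ∈ Filter.map (fun n : ℕ => g ^ n) Filter.atTop :=
        Filter.mem_map.2 (Filter.eventually_atTop.2 ⟨N, fun n hn => ⟨n, hn, rfl⟩⟩)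
      obtain ⟨y, hyW, m, hm, rfl⟩ := clusterPt_iff_nonempty.1 hc hW hV
      exact ⟨m, hm, hyW⟩
    -- the set of elements moving `x` below `g • x` is an open neighborhood of 1
    have hcx : Continuous fun h : G => h • x :=
      hcont.comp (continuous_id.prodMk continuous_const)
    have hUopen : IsOpen {h : G | h • x < g • x} := isOpen_Iio.preimage hcx
    have hU1 : (1 : G) ∈ {h : G | h • x < g • x} := by simpa using hx
    have hUnhds : {h : G | h • x < g • x} ∈ nhds (1 : G) := hUopen.mem_nhds hU1
    -- find a neighborhood `W` of `c` with `W * W⁻¹ ⊆ U`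
    have hdiv : Filter.Tendsto (fun p : G × G => p.1 * p.2⁻¹) (nhds (c, c)) (nhds 1) := by
      have h1 : Continuous fun p : G × G => p.1 * p.2⁻¹ :=
        continuous_fst.mul continuous_snd.inv
      have := h1.tendsto (c, c)
      simpa using this
    have hpre : (fun p : G × G => p.1 * p.2⁻¹) ⁻¹' {h : G | h • x < g • x} ∈ nhds (c, c) :=
      hdiv hUnhds
    rw [nhds_prod_eq] at hpre
    obtain ⟨s, hs, t, ht, hst⟩ := Filter.mem_prod_iff.1 hpre
    obtain ⟨n, hn1, hns⟩ := hfreq (s ∩ t) (Filter.inter_mem hs ht) 1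
    obtain ⟨m, hmn, hms⟩ := hfreq (s ∩ t) (Filter.inter_mem hs ht) (n + 1)
    have hnm : n ≤ m := le_trans (Nat.le_succ n) hmn
    have hmem : g ^ m * (g ^ n)⁻¹ ∈ {h : G | h • x < g • x} :=
      hst (Set.mk_mem_prod hms.1 hns.2)
    rw [← pow_sub g hnm] at hmem
    have h1mn : 1 ≤ m - n := Nat.le_sub_of_add_le (by omega)
    exact absurd hmem (not_lt.2 (hge _ h1mn))
  -- conclude: every element of `H` fixes every point, hence is 1
  ext g
  simp only [Subgroup.mem_bot]
  constructor
  · intro hg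
    apply heff
    intro x
    have h1 : g • x ≤ x := not_lt.1 (key g hg x)
    have h2 : g⁻¹ • x ≤ x := not_lt.1 (key g⁻¹ (inv_mem hg) x)
    have h3 : x ≤ g • x := by
      have := hmono g h2
      simpa using this
    exact le_antisymm h1 h3
  · rintro rfl
    exact one_mem H
end

section
/- Let G₁ and G₂ be topological groups. Suppose that for i = 1, 2 there is a compact Hausdorff space Kᵢ with a linear order whose order topology coincides with its topology, together with a continuous effective action of Gᵢ on Kᵢ by order automorphisms such that the induced map Gᵢ → C(Kᵢ,Kᵢ) (with the compact-open topology) is a topological embedding. Then there exists a compact Hausdorff space K with a linear order whose order topology coincides with its topology, together with a continuous effective action of G₁ × G₂ on K by order automorphisms, such that the induced map G₁ × G₂ → C(K,K) is a topological embedding. (One may take K to be the disjoint union K₁ ⊔ K₂ with the ordered-sum linear order placing all of K₁ below K₂, with (g₁,g₂) acting by g₁ on K₁ and by g₂ on K₂.) -/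
open Set Topology TopologicalSpace

universe u v

namespace ProdOrderlyAux

variable {α : Type u} {β : Type v}

instance instTopLex [TopologicalSpace α] [TopologicalSpace β] :
    TopologicalSpace (α ⊕ₗ β) := instTopologicalSpaceSum

lemma continuous_inlLex [TopologicalSpace α] [TopologicalSpace β] :
    Continuous (fun x : α => (toLex (Sum.inl x) : α ⊕ₗ β)) :=
  continuous_inl

lemma continuous_inrLex [TopologicalSpace α] [TopologicalSpace β] :
    Continuous (fun y : β => (toLex (Sum.inr y) : α ⊕ₗ β)) :=
  continuous_inr

lemma isEmbedding_inlLex [TopologicalSpace α] [TopologicalSpace β] :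
    Topology.IsEmbedding (fun x : α => (toLex (Sum.inl x) : α ⊕ₗ β)) :=
  Topology.IsEmbedding.inl

lemma isEmbedding_inrLex [TopologicalSpace α] [TopologicalSpace β] :
    Topology.IsEmbedding (fun y : β => (toLex (Sum.inr y) : α ⊕ₗ β)) :=
  Topology.IsEmbedding.inr

lemma isOpen_lex_iff [TopologicalSpace α] [TopologicalSpace β] {s : Set (α ⊕ₗ β)} :
    IsOpen s ↔ IsOpen ((fun x : α => toLex (Sum.inl x)) ⁻¹' s) ∧
      IsOpen ((fun y : β => toLex (Sum.inr y)) ⁻¹' s) :=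
  isOpen_sum_iff (s := s)

/-- An auxiliary pointwise openness criterion for a bare topology. -/
lemma isOpen_of_forall_mem {γ : Type*} (t : TopologicalSpace γ) {s : Set γ}
    (h : ∀ p ∈ s, ∃ W, t.IsOpen W ∧ p ∈ W ∧ W ⊆ s) : t.IsOpen s := by
  letI := t
  exact isOpen_iff_forall_mem_open.2 fun p hp => by
    obtain ⟨W, hW, hpW, hWs⟩ := h p hp; exact ⟨W, hWs, hW, hpW⟩

section Order
variable [TopologicalSpace α] [LinearOrder α] [OrderTopology α] [CompactSpace α]
  [TopologicalSpace β] [LinearOrder β] [OrderTopology β] [CompactSpace β]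

variable (α β) in
def genTop : TopologicalSpace (α ⊕ₗ β) :=
  generateFrom {s : Set (α ⊕ₗ β) | ∃ a, s = Ioi a ∨ s = Iio a}

lemma gen_Ioi (a : α ⊕ₗ β) : (genTop α β).IsOpen (Ioi a) := .basic _ ⟨a, Or.inl rfl⟩
lemma gen_Iio (a : α ⊕ₗ β) : (genTop α β).IsOpen (Iio a) := .basic _ ⟨a, Or.inr rfl⟩

/-- Every point of a sum-open set has a `gen`-open neighborhood inside it. -/
lemma exists_gen_nbhd {s : Set (α ⊕ₗ β)} (hs : IsOpen s) (p : α ⊕ₗ β) (hp : p ∈ s) :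
    ∃ W, (genTop α β).IsOpen W ∧ p ∈ W ∧ W ⊆ s := by
  rcases h : ofLex p with x | y
  · -- p = inl x
    have hpx : p = toLex (Sum.inl x) := by rw [← h]; rfl
    subst hpx
    set U : Set α := (fun z : α => (toLex (Sum.inl z) : α ⊕ₗ β)) ⁻¹' s with hU
    have hUopen : IsOpen U := (isOpen_lex_iff.1 hs).1
    have hxU : x ∈ U := hp
    have hUnhds : U ∈ 𝓝 x := hUopen.mem_nhds hxU
    -- lower neighborhood
    have hlo : ∃ Lo, (genTop α β).IsOpen Lo ∧ (toLex (Sum.inl x) : α ⊕ₗ β) ∈ Lo ∧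
        ∀ q ∈ Lo, q ≤ toLex (Sum.inl x) → q ∈ s := by
      by_cases hbot : ∃ a, a < x
      · obtain ⟨a, ha, haU⟩ := exists_Ioc_subset_of_mem_nhds hUnhds hbot
        refine ⟨Ioi (toLex (Sum.inl a)), gen_Ioi _, Sum.Lex.inl_lt_inl_iff.2 ha, ?_⟩
        rintro q hq hqle
        rcases hq2 : ofLex q with z | w
        · have hqz : q = toLex (Sum.inl z) := by rw [← hq2]; rfl
          subst hqz
          exact haU ⟨Sum.Lex.inl_lt_inl_iff.1 hq, Sum.Lex.inl_le_inl_iff.1 hqle⟩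
        · have hqw : q = toLex (Sum.inr w) := by rw [← hq2]; rfl
          subst hqw
          exact absurd hqle Sum.Lex.not_inr_le_inl
      · refine ⟨univ, .univ, trivial, ?_⟩
        rintro q - hqle
        rcases hq2 : ofLex q with z | w
        · have hqz : q = toLex (Sum.inl z) := by rw [← hq2]; rfl
          subst hqz
          have : z = x := le_antisymm (Sum.Lex.inl_le_inl_iff.1 hqle)
            (not_lt.1 fun hlt => hbot ⟨z, hlt⟩)
          subst this; exact hp
        · have hqw : q = toLex (Sum.inr w) := by rw [← hq2]; rfl
          subst hqw
          exact absurd hqle Sum.Lex.not_inr_le_inl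
    -- upper neighborhood
    have hhi : ∃ Hi, (genTop α β).IsOpen Hi ∧ (toLex (Sum.inl x) : α ⊕ₗ β) ∈ Hi ∧
        ∀ q ∈ Hi, toLex (Sum.inl x) ≤ q → q ∈ s := by
      by_cases htop : ∃ b, x < b
      · obtain ⟨b, hb, hbU⟩ := exists_Ico_subset_of_mem_nhds hUnhds htop
        refine ⟨Iio (toLex (Sum.inl b)), gen_Iio _, Sum.Lex.inl_lt_inl_iff.2 hb, ?_⟩
        rintro q hq hqle
        rcases hq2 : ofLex q with z | w
        · have hqz : q = toLex (Sum.inl z) := by rw [← hq2]; rfl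
          subst hqz
          exact hbU ⟨Sum.Lex.inl_le_inl_iff.1 hqle, Sum.Lex.inl_lt_inl_iff.1 hq⟩
        · have hqw : q = toLex (Sum.inr w) := by rw [← hq2]; rfl
          subst hqw
          exact absurd hq Sum.Lex.not_inr_lt_inl
      · rcases isEmpty_or_nonempty β with hβ | hβ
        · refine ⟨univ, .univ, trivial, ?_⟩
          rintro q - hqle
          rcases hq2 : ofLex q with z | w
          · have hqz : q = toLex (Sum.inl z) := by rw [← hq2]; rfl
            subst hqz
            have : z = x := le_antisymm (not_lt.1 fun hlt => htop ⟨z, hlt⟩)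
              (Sum.Lex.inl_le_inl_iff.1 hqle)
            subst this; exact hp
          · exact absurd trivial (fun _ => hβ.elim w)
        · obtain ⟨b₀, -, hb₀⟩ := (isCompact_univ (X := β)).exists_isLeast univ_nonempty
          refine ⟨Iio (toLex (Sum.inr b₀)), gen_Iio _, Sum.Lex.inl_lt_inr _ _, ?_⟩
          rintro q hq hqle
          rcases hq2 : ofLex q with z | w
          · have hqz : q = toLex (Sum.inl z) := by rw [← hq2]; rfl
            subst hqz
            have : z = x := le_antisymm (not_lt.1 fun hlt => htop ⟨z, hlt⟩)
              (Sum.Lex.inl_le_inl_iff.1 hqle)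
            subst this; exact hp
          · have hqw : q = toLex (Sum.inr w) := by rw [← hq2]; rfl
            subst hqw
            exact absurd (hb₀ (mem_univ w)) (not_le.2 (Sum.Lex.inr_lt_inr_iff.1 hq))
    obtain ⟨Lo, hLo, hpLo, hLos⟩ := hlo
    obtain ⟨Hi, hHi, hpHi, hHis⟩ := hhi
    refine ⟨Lo ∩ Hi, (genTop α β).isOpen_inter _ _ hLo hHi, ⟨hpLo, hpHi⟩, ?_⟩
    rintro q ⟨hq1, hq2⟩
    rcases le_total q (toLex (Sum.inl x)) with hle | hle
    · exact hLos q hq1 hle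
    · exact hHis q hq2 hle
  · -- p = inr y
    have hpy : p = toLex (Sum.inr y) := by rw [← h]; rfl
    subst hpy
    set U : Set β := (fun z : β => (toLex (Sum.inr z) : α ⊕ₗ β)) ⁻¹' s with hU
    have hUopen : IsOpen U := (isOpen_lex_iff.1 hs).2
    have hxU : y ∈ U := hp
    have hUnhds : U ∈ 𝓝 y := hUopen.mem_nhds hxU
    have hlo : ∃ Lo, (genTop α β).IsOpen Lo ∧ (toLex (Sum.inr y) : α ⊕ₗ β) ∈ Lo ∧
        ∀ q ∈ Lo, q ≤ toLex (Sum.inr y) → q ∈ s := by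
      by_cases hbot : ∃ a, a < y
      · obtain ⟨a, ha, haU⟩ := exists_Ioc_subset_of_mem_nhds hUnhds hbot
        refine ⟨Ioi (toLex (Sum.inr a)), gen_Ioi _, Sum.Lex.inr_lt_inr_iff.2 ha, ?_⟩
        rintro q hq hqle
        rcases hq2 : ofLex q with z | w
        · have hqz : q = toLex (Sum.inl z) := by rw [← hq2]; rfl
          subst hqz
          exact absurd hq Sum.Lex.not_inr_lt_inl
        · have hqw : q = toLex (Sum.inr w) := by rw [← hq2]; rfl
          subst hqw
          exact haU ⟨Sum.Lex.inr_lt_inr_iff.1 hq, Sum.Lex.inr_le_inr_iff.1 hqle⟩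
      · rcases isEmpty_or_nonempty α with hα | hα
        · refine ⟨univ, .univ, trivial, ?_⟩
          rintro q - hqle
          rcases hq2 : ofLex q with z | w
          · exact absurd trivial fun _ => hα.elim z
          · have hqw : q = toLex (Sum.inr w) := by rw [← hq2]; rfl
            subst hqw
            have : w = y := le_antisymm (Sum.Lex.inr_le_inr_iff.1 hqle)
              (not_lt.1 fun hlt => hbot ⟨w, hlt⟩)
            subst this; exact hp
        · obtain ⟨a₀, -, ha₀⟩ := (isCompact_univ (X := α)).exists_isGreatest univ_nonempty
          refine ⟨Ioi (toLex (Sum.inl a₀)), gen_Ioi _, Sum.Lex.inl_lt_inr _ _, ?_⟩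
          rintro q hq hqle
          rcases hq2 : ofLex q with z | w
          · have hqz : q = toLex (Sum.inl z) := by rw [← hq2]; rfl
            subst hqz
            exact absurd (ha₀ (mem_univ z)) (not_le.2 (Sum.Lex.inl_lt_inl_iff.1 hq))
          · have hqw : q = toLex (Sum.inr w) := by rw [← hq2]; rfl
            subst hqw
            have : w = y := le_antisymm (Sum.Lex.inr_le_inr_iff.1 hqle)
              (not_lt.1 fun hlt => hbot ⟨w, hlt⟩)
            subst this; exact hp
    have hhi : ∃ Hi, (genTop α β).IsOpen Hi ∧ (toLex (Sum.inr y) : α ⊕ₗ β) ∈ Hi ∧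
        ∀ q ∈ Hi, toLex (Sum.inr y) ≤ q → q ∈ s := by
      by_cases htop : ∃ b, y < b
      · obtain ⟨b, hb, hbU⟩ := exists_Ico_subset_of_mem_nhds hUnhds htop
        refine ⟨Iio (toLex (Sum.inr b)), gen_Iio _, Sum.Lex.inr_lt_inr_iff.2 hb, ?_⟩
        rintro q hq hqle
        rcases hq2 : ofLex q with z | w
        · have hqz : q = toLex (Sum.inl z) := by rw [← hq2]; rfl
          subst hqz
          exact absurd hqle Sum.Lex.not_inr_le_inl
        · have hqw : q = toLex (Sum.inr w) := by rw [← hq2]; rfl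
          subst hqw
          exact hbU ⟨Sum.Lex.inr_le_inr_iff.1 hqle, Sum.Lex.inr_lt_inr_iff.1 hq⟩
      · refine ⟨univ, .univ, trivial, ?_⟩
        rintro q - hqle
        rcases hq2 : ofLex q with z | w
        · have hqz : q = toLex (Sum.inl z) := by rw [← hq2]; rfl
          subst hqz
          exact absurd hqle Sum.Lex.not_inr_le_inl
        · have hqw : q = toLex (Sum.inr w) := by rw [← hq2]; rfl
          subst hqw
          have : w = y := le_antisymm (not_lt.1 fun hlt => htop ⟨w, hlt⟩)
            (Sum.Lex.inr_le_inr_iff.1 hqle)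
          subst this; exact hp
    obtain ⟨Lo, hLo, hpLo, hLos⟩ := hlo
    obtain ⟨Hi, hHi, hpHi, hHis⟩ := hhi
    refine ⟨Lo ∩ Hi, (genTop α β).isOpen_inter _ _ hLo hHi, ⟨hpLo, hpHi⟩, ?_⟩
    rintro q ⟨hq1, hq2⟩
    rcases le_total q (toLex (Sum.inr y)) with hle | hle
    · exact hLos q hq1 hle
    · exact hHis q hq2 hle

end Order

section Order2
variable [TopologicalSpace α] [LinearOrder α] [OrderTopology α] [CompactSpace α]
  [TopologicalSpace β] [LinearOrder β] [OrderTopology β] [CompactSpace β]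

lemma isOpen_rays (s : Set (α ⊕ₗ β)) (hs : ∃ a, s = Ioi a ∨ s = Iio a) : IsOpen s := by
  obtain ⟨a, rfl | rfl⟩ := hs <;> rcases h : ofLex a with x | y
  · have ha : a = toLex (Sum.inl x) := by rw [← h]; rfl
    subst ha
    refine isOpen_lex_iff.2 ⟨?_, ?_⟩
    · have : (fun z : α => toLex (Sum.inl z)) ⁻¹' (Ioi (toLex (Sum.inl x) : α ⊕ₗ β)) = Ioi x := by
        ext z; exact Sum.Lex.inl_lt_inl_iff
      rw [this]; exact isOpen_Ioi
    · have : (fun z : β => toLex (Sum.inr z)) ⁻¹' (Ioi (toLex (Sum.inl x) : α ⊕ₗ β)) = univ := by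
        ext z; simp [Sum.Lex.inl_lt_inr]
      rw [this]; exact isOpen_univ
  · have ha : a = toLex (Sum.inr y) := by rw [← h]; rfl
    subst ha
    refine isOpen_lex_iff.2 ⟨?_, ?_⟩
    · have : (fun z : α => toLex (Sum.inl z)) ⁻¹' (Ioi (toLex (Sum.inr y) : α ⊕ₗ β)) = ∅ := by
        ext z; simp [mem_Ioi, Sum.Lex.not_inr_lt_inl]
      rw [this]; exact isOpen_empty
    · have : (fun z : β => toLex (Sum.inr z)) ⁻¹' (Ioi (toLex (Sum.inr y) : α ⊕ₗ β)) = Ioi y := by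
        ext z; exact Sum.Lex.inr_lt_inr_iff
      rw [this]; exact isOpen_Ioi
  · have ha : a = toLex (Sum.inl x) := by rw [← h]; rfl
    subst ha
    refine isOpen_lex_iff.2 ⟨?_, ?_⟩
    · have : (fun z : α => toLex (Sum.inl z)) ⁻¹' (Iio (toLex (Sum.inl x) : α ⊕ₗ β)) = Iio x := by
        ext z; exact Sum.Lex.inl_lt_inl_iff
      rw [this]; exact isOpen_Iio
    · have : (fun z : β => toLex (Sum.inr z)) ⁻¹' (Iio (toLex (Sum.inl x) : α ⊕ₗ β)) = ∅ := by
        ext z; simp [mem_Iio, Sum.Lex.not_inr_lt_inl]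
      rw [this]; exact isOpen_empty
  · have ha : a = toLex (Sum.inr y) := by rw [← h]; rfl
    subst ha
    refine isOpen_lex_iff.2 ⟨?_, ?_⟩
    · have : (fun z : α => toLex (Sum.inl z)) ⁻¹' (Iio (toLex (Sum.inr y) : α ⊕ₗ β)) = univ := by
        ext z; simp [Sum.Lex.inl_lt_inr]
      rw [this]; exact isOpen_univ
    · have : (fun z : β => toLex (Sum.inr z)) ⁻¹' (Iio (toLex (Sum.inr y) : α ⊕ₗ β)) = Iio y := by
        ext z; exact Sum.Lex.inr_lt_inr_iff
      rw [this]; exact isOpen_Iio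

lemma orderTopology_lex : OrderTopology (α ⊕ₗ β) := by
  constructor
  refine le_antisymm (le_generateFrom fun s hs => isOpen_rays s hs) ?_
  intro s hs
  exact isOpen_of_forall_mem _ (fun p hp => exists_gen_nbhd hs p hp)

end Order2

end ProdOrderlyAux


universe u₁ u₂

open ProdOrderlyAux in
/-- If topological groups `G₁` and `G₂` each admit a continuous effective
order-preserving action on a compact linearly ordered space for which the induced map into
`C(Kᵢ,Kᵢ)` (compact-open topology) is a topological embedding, then so does `G₁ × G₂`. -/
theorem product_of_orderly_is_orderly
    {G₁ G₂ : Type*} [Group G₁] [Group G₂]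
    [TopologicalSpace G₁] [TopologicalSpace G₂] [IsTopologicalGroup G₁] [IsTopologicalGroup G₂]
    {K₁ : Type u₁} {K₂ : Type u₂}
    [TopologicalSpace K₁] [LinearOrder K₁] [OrderTopology K₁] [CompactSpace K₁] [T2Space K₁]
    [TopologicalSpace K₂] [LinearOrder K₂] [OrderTopology K₂] [CompactSpace K₂] [T2Space K₂]
    [MulAction G₁ K₁] [MulAction G₂ K₂]
    (hcont₁ : Continuous (fun p : G₁ × K₁ => p.1 • p.2))
    (hcont₂ : Continuous (fun p : G₂ × K₂ => p.1 • p.2))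
    (heff₁ : ∀ g : G₁, (∀ x : K₁, g • x = x) → g = 1)
    (heff₂ : ∀ g : G₂, (∀ x : K₂, g • x = x) → g = 1)
    (hmono₁ : ∀ g : G₁, Monotone (fun x : K₁ => g • x))
    (hmono₂ : ∀ g : G₂, Monotone (fun x : K₂ => g • x))
    (j₁ : G₁ → C(K₁, K₁)) (hj₁ : ∀ (g : G₁) (x : K₁), j₁ g x = g • x)
    (hemb₁ : Topology.IsEmbedding j₁)
    (j₂ : G₂ → C(K₂, K₂)) (hj₂ : ∀ (g : G₂) (x : K₂), j₂ g x = g • x)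
    (hemb₂ : Topology.IsEmbedding j₂) :
    ∃ (K : Type (max u₁ u₂)) (tK : TopologicalSpace K) (loK : LinearOrder K)
      (act : MulAction (G₁ × G₂) K),
      letI := tK
      letI := loK
      letI := act
      CompactSpace K ∧ T2Space K ∧ OrderTopology K ∧
      Continuous (fun p : (G₁ × G₂) × K => p.1 • p.2) ∧
      (∀ g : G₁ × G₂, Monotone (fun x : K => g • x)) ∧
      (∀ g : G₁ × G₂, (∀ x : K, g • x = x) → g = 1) ∧
      ∃ j : (G₁ × G₂) → C(K, K),
        (∀ (g : G₁ × G₂) (x : K), j g x = g • x) ∧ Topology.IsEmbedding j := by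
  classical
  letI act : MulAction (G₁ × G₂) (K₁ ⊕ₗ K₂) :=
  { smul := fun g p => toLex (Sum.map (fun x => g.1 • x) (fun y => g.2 • y) (ofLex p))
    one_smul := fun p => by
      rcases p with x | y
      · show toLex (Sum.inl ((1 : G₁ × G₂).1 • x)) = _
        rw [Prod.fst_one, one_smul]; rfl
      · show toLex (Sum.inr ((1 : G₁ × G₂).2 • y)) = _
        rw [Prod.snd_one, one_smul]; rfl
    mul_smul := fun g h p => by
      rcases p with x | y
      · show toLex (Sum.inl ((g * h).1 • x)) = toLex (Sum.inl (g.1 • h.1 • x))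
        rw [Prod.fst_mul, mul_smul]
      · show toLex (Sum.inr ((g * h).2 • y)) = toLex (Sum.inr (g.2 • h.2 • y))
        rw [Prod.snd_mul, mul_smul] }
  have hsmul_inl : ∀ (g : G₁ × G₂) (x : K₁),
      g • (toLex (Sum.inl x) : K₁ ⊕ₗ K₂) = toLex (Sum.inl (g.1 • x)) := fun _ _ => rfl
  have hsmul_inr : ∀ (g : G₁ × G₂) (y : K₂),
      g • (toLex (Sum.inr y) : K₁ ⊕ₗ K₂) = toLex (Sum.inr (g.2 • y)) := fun _ _ => rfl
  -- continuity of the action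
  have hcont : Continuous (fun p : (G₁ × G₂) × (K₁ ⊕ₗ K₂) => p.1 • p.2) := by
    have h1 : Continuous (fun q : (G₁ × G₂) × K₁ => (toLex (Sum.inl (q.1.1 • q.2)) : K₁ ⊕ₗ K₂)) :=
      continuous_inlLex.comp
        (hcont₁.comp (((continuous_fst.comp continuous_fst).prodMk continuous_snd)))
    have h2 : Continuous (fun q : (G₁ × G₂) × K₂ => (toLex (Sum.inr (q.1.2 • q.2)) : K₁ ⊕ₗ K₂)) :=
      continuous_inrLex.comp
        (hcont₂.comp (((continuous_snd.comp continuous_fst).prodMk continuous_snd)))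
    have key : (fun p : (G₁ × G₂) × (K₁ ⊕ₗ K₂) => p.1 • p.2) =
        (Sum.elim
          (fun q : (G₁ × G₂) × K₁ => (toLex (Sum.inl (q.1.1 • q.2)) : K₁ ⊕ₗ K₂))
          (fun q : (G₁ × G₂) × K₂ => (toLex (Sum.inr (q.1.2 • q.2)) : K₁ ⊕ₗ K₂))) ∘
          ((Homeomorph.prodSumDistrib :
            (G₁ × G₂) × (K₁ ⊕ K₂) ≃ₜ ((G₁ × G₂) × K₁) ⊕ ((G₁ × G₂) × K₂)) :
            (G₁ × G₂) × (K₁ ⊕ K₂) → ((G₁ × G₂) × K₁) ⊕ ((G₁ × G₂) × K₂)) := by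
      funext p
      rcases p with ⟨g, x | y⟩ <;> rfl
    rw [key]
    exact (h1.sumElim h2).comp (Homeomorph.continuous _)
  -- the induced map into C(K,K)
  let A : C((G₁ × G₂) × (K₁ ⊕ₗ K₂), K₁ ⊕ₗ K₂) := ⟨fun p => p.1 • p.2, hcont⟩
  let j : (G₁ × G₂) → C(K₁ ⊕ₗ K₂, K₁ ⊕ₗ K₂) := fun g => A.curry g
  have hj : ∀ (g : G₁ × G₂) (p : K₁ ⊕ₗ K₂), j g p = g • p := fun _ _ => rfl
  have hjcont : Continuous j := A.curry.continuous
  -- effectiveness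
  have heff : ∀ g : G₁ × G₂, (∀ p : K₁ ⊕ₗ K₂, g • p = p) → g = 1 := by
    intro g hg
    have h1 : ∀ x : K₁, g.1 • x = x := fun x => by
      have := hg (toLex (Sum.inl x))
      rw [hsmul_inl] at this
      exact Sum.inl.inj (toLex.injective this)
    have h2 : ∀ y : K₂, g.2 • y = y := fun y => by
      have := hg (toLex (Sum.inr y))
      rw [hsmul_inr] at this
      exact Sum.inr.inj (toLex.injective this)
    exact Prod.ext (heff₁ g.1 h1) (heff₂ g.2 h2)
  refine ⟨K₁ ⊕ₗ K₂, instTopLex, Sum.Lex.linearOrder, act,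
    (inferInstance : CompactSpace (K₁ ⊕ K₂)), (inferInstance : T2Space (K₁ ⊕ K₂)),
    orderTopology_lex, hcont, ?_, heff, j, hj, ?_⟩
  · -- monotone
    intro g p q hpq
    rcases p with x | y <;> rcases q with x' | y'
    · exact Sum.Lex.inl_le_inl_iff.2 (hmono₁ g.1 (Sum.Lex.inl_le_inl_iff.1 hpq))
    · exact Sum.Lex.inl_le_inr _ _
    · exact absurd hpq Sum.Lex.not_inr_le_inl
    · exact Sum.Lex.inr_le_inr_iff.2 (hmono₂ g.2 (Sum.Lex.inr_le_inr_iff.1 hpq))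
  · -- embedding
    have hinj : Function.Injective j := by
      intro g g' hgg'
      have hfix : ∀ p : K₁ ⊕ₗ K₂, (g'⁻¹ * g) • p = p := fun p => by
        have h := ContinuousMap.congr_fun hgg' p
        rw [hj, hj] at h
        rw [mul_smul, h, inv_smul_smul]
      exact (inv_mul_eq_one.1 (heff _ hfix)).symm
    let inlCM : C(K₁, K₁ ⊕ₗ K₂) := ⟨fun x => toLex (Sum.inl x), continuous_inlLex⟩
    let inrCM : C(K₂, K₁ ⊕ₗ K₂) := ⟨fun y => toLex (Sum.inr y), continuous_inrLex⟩
    let Φ : C(K₁ ⊕ₗ K₂, K₁ ⊕ₗ K₂) → C(K₁, K₁ ⊕ₗ K₂) × C(K₂, K₁ ⊕ₗ K₂) :=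
      fun f => (f.comp inlCM, f.comp inrCM)
    have hΦ : Continuous Φ :=
      (ContinuousMap.continuous_precomp inlCM).prodMk (ContinuousMap.continuous_precomp inrCM)
    have hF₁ : Topology.IsInducing ((fun f : C(K₁, K₁) => inlCM.comp f) ∘ j₁) :=
      (ContinuousMap.isInducing_postcomp inlCM isEmbedding_inlLex.toIsInducing).comp
        hemb₁.toIsInducing
    have hF₂ : Topology.IsInducing ((fun f : C(K₂, K₂) => inrCM.comp f) ∘ j₂) :=
      (ContinuousMap.isInducing_postcomp inrCM isEmbedding_inrLex.toIsInducing).comp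
        hemb₂.toIsInducing
    have hcomp : Φ ∘ j = Prod.map ((fun f : C(K₁, K₁) => inlCM.comp f) ∘ j₁)
        ((fun f : C(K₂, K₂) => inrCM.comp f) ∘ j₂) := by
      funext g
      refine Prod.ext ?_ ?_
      · exact ContinuousMap.ext fun x => by
          show j g (toLex (Sum.inl x)) = toLex (Sum.inl (j₁ g.1 x))
          rw [hj, hsmul_inl, hj₁]
      · exact ContinuousMap.ext fun y => by
          show j g (toLex (Sum.inr y)) = toLex (Sum.inr (j₂ g.2 y))
          rw [hj, hsmul_inr, hj₂]
    have hind : Topology.IsInducing j :=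
      Topology.IsInducing.of_comp hjcont hΦ (hcomp ▸ hF₁.prodMap hF₂)
    exact ⟨hind, hinj⟩
end

section
/- Let ≤_G be a linear order on a group G, let K be a compact Hausdorff space with a linear order ≤ whose order topology coincides with its topology, and let G act effectively on K by order automorphisms such that the action is strongly monotone: for every x ∈ K the orbit map g ↦ g•x from (G, ≤_G) to (K, ≤) is monotone. Let E(K) be the closure in the product space K^K (pointwise topology) of the set of translations {x ↦ g•x | g ∈ G}, and define p ⪯ q iff p(a) ≤ q(a) for every a ∈ K. Then: (i) ⪯ is a linear order on E(K), i.e., any two elements of E(K) are ⪯-comparable; (ii) ⪯ is bi-invariant under composition: for s₁, s₂, p ∈ E(K) with s₁ ⪯ s₂, both s₁ ∘ p ⪯ s₂ ∘ p and p ∘ s₁ ⪯ p ∘ s₂; (iii) the map j : G → E(K), j(g) = (x ↦ g•x), is injective and an order embedding: g₁ ≤_G g₂ if and only if j(g₁) ⪯ j(g₂). -/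
/-- Order separation in an order topology: strictly smaller points have open
neighborhoods lying entirely below. -/
lemma aux_order_sep {K : Type*} [TopologicalSpace K] [LinearOrder K] [OrderTopology K]
    {x y : K} (h : x < y) :
    ∃ U V : Set K, IsOpen U ∧ IsOpen V ∧ x ∈ U ∧ y ∈ V ∧ ∀ u ∈ U, ∀ v ∈ V, u < v := by
  by_cases h' : ∃ z, x < z ∧ z < y
  · obtain ⟨z, hz1, hz2⟩ := h'
    exact ⟨Set.Iio z, Set.Ioi z, isOpen_Iio, isOpen_Ioi, hz1, hz2,
      fun u hu v hv => lt_trans hu hv⟩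
  · refine ⟨Set.Iio y, Set.Ioi x, isOpen_Iio, isOpen_Ioi, h, h, fun u hu v hv => ?_⟩
    have : u ≤ x := by
      by_contra hc
      exact h' ⟨u, lt_of_not_ge hc, hu⟩
    exact lt_of_le_of_lt this hv

lemma aux_closure_monotone {K : Type*} [TopologicalSpace K] [LinearOrder K] [OrderTopology K]
    {S : Set (K → K)} (hS : ∀ f ∈ S, Monotone f) {p : K → K} (hp : p ∈ closure S) :
    Monotone p := by
  intro x y hxy
  have hcl : IsClosed {f : K → K | f x ≤ f y} :=
    isClosed_le (continuous_apply x) (continuous_apply y)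
  have : closure S ⊆ {f : K → K | f x ≤ f y} :=
    closure_minimal (fun f hf => hS f hf hxy) hcl
  exact this hp

/-- Let a group `G` with a linear order `≤_G` act effectively by order
automorphisms on a compact linearly ordered space `K`, strongly monotonically (all orbit maps
are monotone). Let `E(K)` be the closure in `K^K` (pointwise topology) of the set of
translations, ordered pointwise. Then: (i) the pointwise order is total on `E(K)`; (ii) it is
bi-invariant under composition; (iii) `j : G → E(K)`, `j g = (x ↦ g • x)`, is injective and an
order embedding. -/
theorem enveloping_semigroup_linearly_ordered
    {K : Type*} [TopologicalSpace K] [LinearOrder K] [OrderTopology K]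
    [CompactSpace K] [T2Space K]
    {G : Type*} [Group G] [MulAction G K]
    (heff : ∀ g : G, (∀ x : K, g • x = x) → g = 1)
    (hmono : ∀ g : G, Monotone (fun x : K => g • x))
    (leG : LinearOrder G)
    (hstrong : ∀ g h : G, leG.le g h → ∀ x : K, g • x ≤ h • x) :
    ∀ E : Set (K → K), E = closure {f : K → K | ∃ g : G, f = fun x => g • x} →
      (∀ p ∈ E, ∀ q ∈ E, (∀ a : K, p a ≤ q a) ∨ (∀ a : K, q a ≤ p a)) ∧
      (∀ s₁ ∈ E, ∀ s₂ ∈ E, ∀ p ∈ E, (∀ a : K, s₁ a ≤ s₂ a) →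
        ((∀ a : K, (s₁ ∘ p) a ≤ (s₂ ∘ p) a) ∧ (∀ a : K, (p ∘ s₁) a ≤ (p ∘ s₂) a))) ∧
      (Function.Injective (fun g : G => (fun x : K => g • x)) ∧
        ∀ g₁ g₂ : G, leG.le g₁ g₂ ↔ ∀ a : K, g₁ • a ≤ g₂ • a) := by
  intro E hE
  set S := {f : K → K | ∃ g : G, f = fun x => g • x} with hS
  have hinj : Function.Injective (fun g : G => (fun x : K => g • x)) := by
    intro g₁ g₂ h
    have hfix : ∀ x : K, (g₂⁻¹ * g₁) • x = x := by
      intro x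
      have := congrFun h x
      simp only at this
      rw [mul_smul, this, inv_smul_smul]
    have := heff _ hfix
    have : g₁ = g₂ := by
      have h1 : g₂ * (g₂⁻¹ * g₁) = g₂ * 1 := by rw [this]
      simpa [mul_assoc] using h1
    exact this
  have hemb : ∀ g₁ g₂ : G, leG.le g₁ g₂ ↔ ∀ a : K, g₁ • a ≤ g₂ • a := by
    intro g₁ g₂
    constructor
    · exact fun h => hstrong g₁ g₂ h
    · intro h
      rcases leG.le_total g₁ g₂ with h' | h'
      · exact h'
      · have h2 := hstrong g₂ g₁ h'
        have heq : ∀ a : K, g₁ • a = g₂ • a := fun a => le_antisymm (h a) (h2 a)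
        have : g₁ = g₂ := hinj (funext heq)
        exact this ▸ leG.le_refl g₁
  refine ⟨?_, ?_, hinj, hemb⟩
  · -- totality
    intro p hp q hq
    by_contra hcon
    push_neg at hcon
    obtain ⟨⟨a, ha⟩, ⟨b, hb⟩⟩ := hcon
    -- q a < p a and p b < q b
    obtain ⟨U1, V1, hU1, hV1, hqa, hpa, hsep1⟩ := aux_order_sep ha
    obtain ⟨U2, V2, hU2, hV2, hpb, hqb, hsep2⟩ := aux_order_sep hb
    have hpE : p ∈ closure S := hE ▸ hp
    have hqE : q ∈ closure S := hE ▸ hq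
    have hWp : IsOpen {f : K → K | f a ∈ V1 ∧ f b ∈ U2} :=
      ((hV1.preimage (continuous_apply a)).inter (hU2.preimage (continuous_apply b)))
    have hWq : IsOpen {f : K → K | f a ∈ U1 ∧ f b ∈ V2} :=
      ((hU1.preimage (continuous_apply a)).inter (hV2.preimage (continuous_apply b)))
    obtain ⟨f, hfW, hfS⟩ := mem_closure_iff.mp hpE _ hWp ⟨hpa, hpb⟩
    obtain ⟨h, hhW, hhS⟩ := mem_closure_iff.mp hqE _ hWq ⟨hqa, hqb⟩
    obtain ⟨g₁, rfl⟩ := hfS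
    obtain ⟨g₂, rfl⟩ := hhS
    have h1 : g₂ • a < g₁ • a := hsep1 _ hhW.1 _ hfW.1
    have h2 : g₁ • b < g₂ • b := hsep2 _ hfW.2 _ hhW.2
    rcases leG.le_total g₁ g₂ with hg | hg
    · exact absurd (hstrong g₁ g₂ hg a) (not_le.mpr h1)
    · exact absurd (hstrong g₂ g₁ hg b) (not_le.mpr h2)
  · -- bi-invariance
    intro s₁ _ s₂ _ p hp hle
    have hpmono : Monotone p := by
      refine aux_closure_monotone (S := S) ?_ (hE ▸ hp)
      rintro f ⟨g, rfl⟩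
      exact hmono g
    exact ⟨fun a => hle (p a), fun a => hpmono (hle a)⟩
end

section
/- For an abstract group G the following are equivalent: (a) G admits a bi-invariant linear order, i.e., a linear order ≤ on G such that x ≤ y implies g*x ≤ g*y and x*g ≤ y*g for all g; (b) there exist a compact Hausdorff space S with a linear order whose order topology coincides with its topology and a semigroup structure on S such that every right translation s ↦ s*t is continuous and the order is bi-invariant (x ≤ y implies x*s ≤ y*s and s*x ≤ s*y for all s), together with an injective semigroup homomorphism γ : G → S whose image is dense in S and is a discrete subspace of S, and such that left translation by γ(g) is continuous on S for every g ∈ G. -/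
universe u

set_option linter.unusedSectionVars false
set_option linter.unusedVariables false
set_option linter.unreachableTactic false
set_option linter.unusedTactic false


namespace S18

open Set

variable {G : Type u}

section OrderDefs
variable [LinearOrder G]

/-- `U` is a down-set. -/
def DS (U : Set G) : Prop := ∀ ⦃x y : G⦄, x ≤ y → y ∈ U → x ∈ U

/-- `U` has no greatest element. -/
def MaxFree (U : Set G) : Prop := ∀ x ∈ U, ∃ y ∈ U, x < y

/-- the complement of `U` has no least element. -/
def MinFreeC (U : Set G) : Prop := ∀ x, x ∉ U → ∃ y, y ∉ U ∧ y < x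

theorem DS.lt_of_mem_of_not_mem {U : Set G} (h : DS U) {x y : G}
    (hx : x ∈ U) (hy : y ∉ U) : x < y := by
  rcases lt_or_ge x y with h' | h'
  · exact h'
  · exact absurd (h h' hx) hy

theorem DS.Iic_subset {U : Set G} (h : DS U) {g : G} (hg : g ∈ U) : Set.Iic g ⊆ U :=
  fun _ hx => h hx hg

theorem DS.subset_of_not_mem {U : Set G} (h : DS U) {g : G} (hg : g ∉ U) :
    U ⊆ Iio g := fun _ hx => h.lt_of_mem_of_not_mem hx hg

theorem DS.total {U V : Set G} (hU : DS U) (hV : DS V) : U ⊆ V ∨ V ⊆ U := by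
  by_cases h : U ⊆ V
  · exact Or.inl h
  · right
    rcases not_subset.1 h with ⟨x, hxU, hxV⟩
    intro y hy
    exact hU (hV.lt_of_mem_of_not_mem hy hxV).le hxU

/-- The linearly ordered compactification of `G`: points of `G`, lower cuts (down-sets
without maximum), and upper cuts (down-sets whose complement has no minimum). -/
inductive S (G : Type u) [LinearOrder G] : Type u
  | pt : G → S G
  | low : (U : Set G) → DS U → MaxFree U → U.Nonempty → S G
  | up : (U : Set G) → DS U → MinFreeC U → Uᶜ.Nonempty → S G

namespace S

/-- The defining invariant embedding into a lexicographic product. -/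
def toPair : S G → (Set G) ×ₗ ℕ
  | pt g => toLex (Iic g, 1)
  | low U _ _ _ => toLex (U, 0)
  | up U _ _ _ => toLex (U, 2)

theorem low_eq_low {U V : Set G} {h1 h2 h3 k1 k2 k3} (h : U = V) :
    (low U h1 h2 h3 : S G) = low V k1 k2 k3 := by subst h; rfl

theorem up_eq_up {U V : Set G} {h1 h2 h3 k1 k2 k3} (h : U = V) :
    (up U h1 h2 h3 : S G) = up V k1 k2 k3 := by subst h; rfl

theorem not_maxFree_of_max {U : Set G} {m : G} (hm : m ∈ U) (hmax : ∀ x ∈ U, x ≤ m) :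
    ¬ MaxFree U := by
  intro h
  rcases h m hm with ⟨y, hy, hy'⟩
  exact absurd (hmax y hy) (not_le.2 hy')

theorem toPair_injective : Function.Injective (toPair : S G → (Set G) ×ₗ ℕ) := by
  intro a b h
  cases a <;> cases b <;>
    simp only [toPair, toLex_inj, Prod.mk.injEq] at h <;> try omega
  · rw [Iic_injective h.1]
  all_goals first
    | (obtain ⟨rfl, -⟩ := h; rfl)
    | omega
  
end S
end OrderDefs
end S18

namespace S18
open Set
variable {G : Type u} [LinearOrder G]
namespace S

instance : PartialOrder (S G) := PartialOrder.lift toPair toPair_injective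

theorem le_def {a b : S G} : a ≤ b ↔ toPair a ≤ toPair b := Iff.rfl

@[simp] theorem pt_le_pt {g h : G} : (pt g : S G) ≤ pt h ↔ g ≤ h := by
  rw [le_def]; show toLex ((Iic g : Set G), 1) ≤ toLex (Iic h, 1) ↔ _
  rw [Prod.Lex.le_iff]; simp only [ofLex_toLex]
  constructor
  · rintro (h1 | ⟨h1, -⟩)
    · exact Iic_subset_Iic.1 h1.le
    · exact Iic_subset_Iic.1 h1.le
  · intro hgh
    rcases eq_or_lt_of_le (Iic_subset_Iic.2 hgh : (Iic g : Set G) ≤ Iic h) with h1 | h1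
    · exact Or.inr ⟨h1, le_refl _⟩
    · exact Or.inl h1

@[simp] theorem pt_le_low {g : G} {U h1 h2 h3} :
    (pt g : S G) ≤ low U h1 h2 h3 ↔ g ∈ U := by
  rw [le_def]; show toLex ((Iic g : Set G), 1) ≤ toLex (U, 0) ↔ _
  rw [Prod.Lex.le_iff]; simp only [ofLex_toLex]
  constructor
  · rintro (hlt | ⟨heq, hn⟩)
    · exact hlt.le (mem_Iic.2 le_rfl)
    · omega
  · intro hg
    refine Or.inl (lt_of_le_of_ne (h1.Iic_subset hg) ?_)
    intro he
    exact not_maxFree_of_max (U := U) (m := g) hg (fun x hx => by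
      rw [← he] at hx; exact hx) h2

@[simp] theorem pt_le_up {g : G} {U h1 h2 h3} :
    (pt g : S G) ≤ up U h1 h2 h3 ↔ g ∈ U := by
  rw [le_def]; show toLex ((Iic g : Set G), 1) ≤ toLex (U, 2) ↔ _
  rw [Prod.Lex.le_iff]; simp only [ofLex_toLex]
  constructor
  · rintro (hlt | ⟨heq, -⟩)
    · exact hlt.le (mem_Iic.2 le_rfl)
    · exact heq ▸ (mem_Iic.2 le_rfl)
  · intro hg
    rcases eq_or_lt_of_le (h1.Iic_subset hg : (Iic g : Set G) ≤ U) with he | hlt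
    · exact Or.inr ⟨he, by omega⟩
    · exact Or.inl hlt

@[simp] theorem low_le_pt {g : G} {U h1 h2 h3} :
    (low U h1 h2 h3 : S G) ≤ pt g ↔ g ∉ U := by
  rw [le_def]; show toLex (U, 0) ≤ toLex ((Iic g : Set G), 1) ↔ _
  rw [Prod.Lex.le_iff]; simp only [ofLex_toLex]
  constructor
  · rintro (hlt | ⟨heq, -⟩) hg
    · exact absurd (le_antisymm hlt.le (h1.Iic_subset hg)) (ne_of_lt hlt)
    · exact not_maxFree_of_max (U := U) (m := g) (heq ▸ mem_Iic.2 le_rfl)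
        (fun x hx => by rw [heq] at hx; exact hx) h2
  · intro hg
    refine Or.inl (lt_of_le_of_ne (fun x hx => (h1.lt_of_mem_of_not_mem hx hg).le) ?_)
    intro he
    exact hg (he ▸ mem_Iic.2 le_rfl)

@[simp] theorem up_le_pt {g : G} {U h1 h2 h3} :
    (up U h1 h2 h3 : S G) ≤ pt g ↔ g ∉ U := by
  rw [le_def]; show toLex (U, 2) ≤ toLex ((Iic g : Set G), 1) ↔ _
  rw [Prod.Lex.le_iff]; simp only [ofLex_toLex]
  constructor
  · rintro (hlt | ⟨-, hn⟩) hg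
    · exact absurd (le_antisymm hlt.le (h1.Iic_subset hg)) (ne_of_lt hlt)
    · omega
  · intro hg
    refine Or.inl (lt_of_le_of_ne (fun x hx => (h1.lt_of_mem_of_not_mem hx hg).le) ?_)
    intro he
    exact hg (he ▸ mem_Iic.2 le_rfl)

@[simp] theorem low_le_low {U V : Set G} {h1 h2 h3 k1 k2 k3} :
    (low U h1 h2 h3 : S G) ≤ low V k1 k2 k3 ↔ U ⊆ V := by
  rw [le_def]; show toLex (U, 0) ≤ toLex (V, 0) ↔ _
  rw [Prod.Lex.le_iff]; simp only [ofLex_toLex]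
  constructor
  · rintro (hlt | ⟨heq, -⟩)
    · exact hlt.le
    · exact heq.le
  · intro hs
    rcases eq_or_lt_of_le (hs : U ≤ V) with he | hlt
    · exact Or.inr ⟨he, le_rfl⟩
    · exact Or.inl hlt

@[simp] theorem low_le_up {U V : Set G} {h1 h2 h3 k1 k2 k3} :
    (low U h1 h2 h3 : S G) ≤ up V k1 k2 k3 ↔ U ⊆ V := by
  rw [le_def]; show toLex (U, 0) ≤ toLex (V, 2) ↔ _
  rw [Prod.Lex.le_iff]; simp only [ofLex_toLex]
  constructor
  · rintro (hlt | ⟨heq, -⟩)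
    · exact hlt.le
    · exact heq.le
  · intro hs
    rcases eq_or_lt_of_le (hs : U ≤ V) with he | hlt
    · exact Or.inr ⟨he, by omega⟩
    · exact Or.inl hlt

@[simp] theorem up_le_up {U V : Set G} {h1 h2 h3 k1 k2 k3} :
    (up U h1 h2 h3 : S G) ≤ up V k1 k2 k3 ↔ U ⊆ V := by
  rw [le_def]; show toLex (U, 2) ≤ toLex (V, 2) ↔ _
  rw [Prod.Lex.le_iff]; simp only [ofLex_toLex]
  constructor
  · rintro (hlt | ⟨heq, -⟩)
    · exact hlt.le
    · exact heq.le
  · intro hs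
    rcases eq_or_lt_of_le (hs : U ≤ V) with he | hlt
    · exact Or.inr ⟨he, le_rfl⟩
    · exact Or.inl hlt

@[simp] theorem up_le_low {U V : Set G} {h1 h2 h3 k1 k2 k3} :
    (up U h1 h2 h3 : S G) ≤ low V k1 k2 k3 ↔ U ⊆ V ∧ U ≠ V := by
  rw [le_def]; show toLex (U, 2) ≤ toLex (V, 0) ↔ _
  rw [Prod.Lex.le_iff]; simp only [ofLex_toLex]
  constructor
  · rintro (hlt | ⟨-, hn⟩)
    · exact ⟨hlt.le, ne_of_lt hlt⟩
    · omega
  · rintro ⟨hs, hne⟩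
    exact Or.inl (lt_of_le_of_ne hs hne)

noncomputable instance : LinearOrder (S G) :=
  { (inferInstance : PartialOrder (S G)) with
    le_total := by
      intro a b
      cases a <;> cases b
      case pt.pt g h => rcases le_total g h with h' | h' <;> [left; right] <;> simpa
      case pt.low g U h1 h2 h3 => by_cases hg : g ∈ U <;> [left; right] <;> simp [hg]
      case pt.up g U h1 h2 h3 => by_cases hg : g ∈ U <;> [left; right] <;> simp [hg]
      case low.pt U h1 h2 h3 g => by_cases hg : g ∈ U <;> [right; left] <;> simp [hg]
      case up.pt U h1 h2 h3 g => by_cases hg : g ∈ U <;> [right; left] <;> simp [hg]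
      case low.low U h1 h2 h3 V k1 k2 k3 =>
        rcases h1.total k1 with h' | h' <;> [left; right] <;> simpa
      case low.up U h1 h2 h3 V k1 k2 k3 =>
        rcases h1.total k1 with h' | h'
        · left; simpa
        · by_cases he : V = U
          · left; simp [he]
          · right; simp [h', he]
      case up.low U h1 h2 h3 V k1 k2 k3 =>
        rcases h1.total k1 with h' | h'
        · by_cases he : U = V
          · right; simp [he.symm.subset]
          · left; simp [h', he]
        · right; simpa
      case up.up U h1 h2 h3 V k1 k2 k3 =>
        rcases h1.total k1 with h' | h' <;> [left; right] <;> simpa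
    toDecidableLE := Classical.decRel _ }

end S
end S18

namespace S18
open Set
variable {G : Type u} [LinearOrder G] [Nonempty G] [NoMinOrder G] [NoMaxOrder G]
namespace S

/-- The set of group elements lying (weakly) below an element of `S G`. -/
def reach : S G → Set G
  | pt g => Iic g
  | low U _ _ _ => U
  | up U _ _ _ => U

theorem reach_ds : ∀ t : S G, DS (reach t)
  | pt g => fun _ _ hxy hy => le_trans hxy hy
  | low U h1 _ _ => h1
  | up U h1 _ _ => h1

theorem pt_le_iff {g : G} : ∀ {t : S G}, pt g ≤ t ↔ g ∈ reach t
  | pt h => by simp [reach]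
  | low U h1 h2 h3 => by simp [reach]
  | up U h1 h2 h3 => by simp [reach]

theorem le_up_iff {V k1 k2 k3} : ∀ {t : S G}, t ≤ up V k1 k2 k3 ↔ reach t ⊆ V
  | pt h => by
      simp only [pt_le_up, reach]
      exact ⟨fun h' => k1.Iic_subset h', fun h' => h' (mem_Iic.2 le_rfl)⟩
  | low U h1 h2 h3 => by simp [reach]
  | up U h1 h2 h3 => by simp [reach]

theorem reach_subset_of_le : ∀ {s t : S G}, s ≤ t → reach s ⊆ reach t := by
  intro s t h
  cases s <;> cases t <;>
    simp only [reach, pt_le_pt, pt_le_low, pt_le_up, low_le_pt, low_le_low, low_le_up,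
      up_le_pt, up_le_low, up_le_up, Iic_subset_Iic] at h ⊢
  · exact h
  case pt.low g U h1 h2 h3 => exact h1.Iic_subset h
  case pt.up g U h1 h2 h3 => exact h1.Iic_subset h
  case low.pt U h1 h2 h3 g => exact fun x hx => (h1.lt_of_mem_of_not_mem hx h).le
  case up.pt U h1 h2 h3 g => exact fun x hx => (h1.lt_of_mem_of_not_mem hx h).le
  · exact h
  · exact h
  · exact h.1
  · exact h

theorem bot_le' {d m c} : ∀ t : S G, up ∅ d m c ≤ t
  | pt g => up_le_pt.2 (notMem_empty g)
  | low V k1 k2 k3 => up_le_low.2 ⟨empty_subset V, fun he => k3.ne_empty he.symm⟩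
  | up V k1 k2 k3 => up_le_up.2 (empty_subset V)

/-- The union of the reaches of a set of elements. -/
def W (T : Set (S G)) : Set G := {g | ∃ t ∈ T, g ∈ reach t}

theorem W_ds (T : Set (S G)) : DS (W T) := by
  rintro x y hxy ⟨t, ht, hy⟩
  exact ⟨t, ht, reach_ds t hxy hy⟩

theorem maxFree_W {T : Set (S G)} (hne : ¬ ∃ t ∈ T, ∀ s ∈ T, s ≤ t) : MaxFree (W T) := by
  intro m hm
  by_contra hc
  push_neg at hc
  have hWm : W T ⊆ Iic m := fun y hy => hc y hy
  -- every element's reach is contained in `Iic m`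
  have hre : ∀ s ∈ T, reach s ⊆ Iic m := fun s hs => (fun x hx => hWm ⟨s, hs, hx⟩)
  obtain ⟨t₀, ht₀, hmt₀⟩ := hm
  -- a helper: if some `up V ∈ T` has `m ∈ V`, then `V = Iic m` and `up V` is a max
  have hupmax : ∀ V k1 k2 k3, up V k1 k2 k3 ∈ T → m ∈ V → False := by
    intro V k1 k2 k3 hVT hmV
    have hVI : V = Iic m := le_antisymm (hre _ hVT) (k1.Iic_subset hmV)
    exact hne ⟨up V k1 k2 k3, hVT, fun s hs => le_up_iff.2 (by rw [hVI]; exact hre s hs)⟩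
  cases t₀ with
  | pt g =>
      have hg : g = m := le_antisymm (hWm ⟨pt g, ht₀, mem_Iic.2 le_rfl⟩) hmt₀
      subst hg
      refine hne ⟨pt g, ht₀, fun s hs => ?_⟩
      cases s with
      | pt h => exact pt_le_pt.2 (hre _ hs (mem_Iic.2 le_rfl))
      | low V k1 k2 k3 =>
          refine low_le_pt.2 ?_
          intro hgV
          rcases k2 g hgV with ⟨y, hyV, hy⟩
          exact absurd (hre _ hs hyV) (not_le.2 hy)
      | up V k1 k2 k3 =>
          refine up_le_pt.2 ?_
          intro hgV
          exact hupmax V k1 k2 k3 hs hgV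
  | low V k1 k2 k3 =>
      rcases k2 m hmt₀ with ⟨y, hyV, hy⟩
      exact absurd hy (not_lt.2 (hc y ⟨_, ht₀, hyV⟩))
  | up V k1 k2 k3 => exact hupmax V k1 k2 k3 ht₀ hmt₀

open Classical in
noncomputable instance : SupSet (S G) :=
  ⟨fun T =>
    if h : ∃ t ∈ T, ∀ s ∈ T, s ≤ t then h.choose
    else if hW : (W T).Nonempty then low (W T) (W_ds T) (maxFree_W h) hW
    else up ∅ (fun _ _ _ h => h.elim)
      (fun x _ => (exists_lt x).imp fun y hy => ⟨notMem_empty y, hy⟩)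
      (by simp)⟩

open Classical in
theorem isLUB_sSup' (T : Set (S G)) : IsLUB T (sSup T) := by
  show IsLUB T (dite _ _ _)
  split_ifs with h hW
  · obtain ⟨ht, hub⟩ := h.choose_spec
    exact ⟨hub, fun z hz => hz ht⟩
  · constructor
    · intro t ht
      cases t with
      | pt g => exact pt_le_low.2 ⟨_, ht, mem_Iic.2 le_rfl⟩
      | low V v1 v2 v3 => exact low_le_low.2 (fun x hx => ⟨_, ht, hx⟩)
      | up V v1 v2 v3 =>
          refine up_le_low.2 ⟨fun x hx => ⟨_, ht, hx⟩, ?_⟩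
          intro he
          exact h ⟨up V v1 v2 v3, ht, fun s hs =>
            le_up_iff.2 (he ▸ (fun x hx => ⟨s, hs, hx⟩ : reach s ⊆ W T))⟩
    · intro z hz
      cases z with
      | pt g =>
          refine low_le_pt.2 ?_
          rintro ⟨t, ht, hgt⟩
          have h1 : reach t ⊆ Iic g := reach_subset_of_le (hz ht)
          have h2 : Iic g ⊆ reach t := (reach_ds t).Iic_subset hgt
          have hre : reach t = Iic g := le_antisymm h1 h2
          refine h ⟨t, ht, ?_⟩
          intro s hs
          cases t with
          | pt a =>
              simp only [reach] at hre
              have : a = g := Iic_injective hre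
              subst this; exact hz hs
          | low V v1 v2 v3 =>
              simp only [reach] at hre
              exact absurd v2 (not_maxFree_of_max (m := g)
                (hre ▸ mem_Iic.2 le_rfl) (fun x hx => by
                  have : x ∈ Iic g := hre ▸ hx
                  exact this))
          | up V v1 v2 v3 =>
              simp only [reach] at hre
              exact le_up_iff.2 (by rw [hre]; exact reach_subset_of_le (hz hs))
      | low V v1 v2 v3 =>
          refine low_le_low.2 ?_
          rintro x ⟨t, ht, hxt⟩
          exact reach_subset_of_le (hz ht) hxt
      | up V v1 v2 v3 =>
          refine low_le_up.2 ?_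
          rintro x ⟨t, ht, hxt⟩
          exact reach_subset_of_le (hz ht) hxt
  · have hWe : W T = ∅ := not_nonempty_iff_eq_empty.1 hW
    refine ⟨fun t ht => ?_, fun z _ => bot_le' z⟩
    exfalso
    cases t with
    | pt g => exact hW ⟨g, _, ht, mem_Iic.2 le_rfl⟩
    | low V v1 v2 v3 => exact hW ⟨v3.choose, _, ht, v3.choose_spec⟩
    | up V v1 v2 v3 =>
        exact h ⟨up V v1 v2 v3, ht, fun s hs => le_up_iff.2 (fun x hx =>
          absurd (hWe ▸ (⟨s, hs, hx⟩ : x ∈ W T)) (notMem_empty x))⟩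

noncomputable instance : CompleteLattice (S G) := completeLatticeOfSup _ isLUB_sSup'

noncomputable instance : ConditionallyCompleteLinearOrder (S G) :=
  { (inferInstance : ConditionallyCompleteLattice (S G)),
    (inferInstance : LinearOrder (S G)) with
    csSup_of_not_bddAbove := fun s H => (H (OrderTop.bddAbove s)).elim
    csInf_of_not_bddBelow := fun s H => (H (OrderBot.bddBelow s)).elim }


noncomputable instance : TopologicalSpace (S G) := Preorder.topology (S G)

instance : OrderTopology (S G) := ⟨rfl⟩

instance : CompactSpace (S G) := ⟨by rw [← Icc_bot_top]; exact isCompact_Icc⟩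

theorem pt_lt_pt {g h : G} : (pt g : S G) < pt h ↔ g < h := by
  rw [lt_iff_le_not_ge, pt_le_pt, pt_le_pt, ← lt_iff_le_not_ge]

theorem exists_covby_lt (g : G) :
    ∃ a : S G, a < pt g ∧ ∀ y : S G, a < y → pt g ≤ y := by
  by_cases hp : ∃ p, p < g ∧ ∀ x, p < x → g ≤ x
  · obtain ⟨p, hpg, hps⟩ := hp
    refine ⟨pt p, pt_lt_pt.2 hpg, fun y hy => ?_⟩
    have hy' : ¬ y ≤ pt p := hy.not_ge
    cases y with
    | pt x =>
        simp only [pt_le_pt, not_le] at hy' ⊢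
        exact hps x hy'
    | low V k1 k2 k3 =>
        simp only [low_le_pt, not_not] at hy'
        rcases k2 p hy' with ⟨v, hvV, hpv⟩
        exact pt_le_low.2 (k1 (hps v hpv) hvV)
    | up V k1 k2 k3 =>
        simp only [up_le_pt, not_not] at hy'
        refine pt_le_up.2 ?_
        by_contra hgV
        rcases k2 g hgV with ⟨y, hyV, hyg⟩
        have : y ≤ p := by
          by_contra hpy
          exact absurd (hps y (not_le.1 hpy)) (not_le.2 hyg)
        exact hyV (k1 this hy')
  · push_neg at hp
    have hds : DS (Iio g : Set G) := fun x y hxy hy => lt_of_le_of_lt hxy hy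
    have hmf : MaxFree (Iio g : Set G) := fun x hx => by
      rcases hp x hx with ⟨y, hxy, hyg⟩
      exact ⟨y, hyg, hxy⟩
    have hne : (Iio g : Set G).Nonempty := exists_lt g
    refine ⟨low (Iio g) hds hmf hne, ?_, fun y hy => ?_⟩
    · exact lt_of_le_of_ne (low_le_pt.2 (by simp)) (by simp)
    · have hy' : ¬ y ≤ low (Iio g) hds hmf hne := hy.not_ge
      cases y with
      | pt x =>
          simp only [pt_le_low, mem_Iio, not_lt] at hy'
          simpa using hy'
      | low V k1 k2 k3 =>
          simp only [low_le_low] at hy'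
          rcases not_subset.1 hy' with ⟨v, hvV, hvg⟩
          exact pt_le_low.2 (k1 (not_lt.1 (by simpa using hvg)) hvV)
      | up V k1 k2 k3 =>
          simp only [up_le_low, not_and_or, not_not] at hy'
          rcases hy' with h' | h'
          · rcases not_subset.1 h' with ⟨v, hvV, hvg⟩
            exact pt_le_up.2 (k1 (not_lt.1 (by simpa using hvg)) hvV)
          · exfalso
            rcases k2 g (by rw [h']; simp) with ⟨y, hyV, hyg⟩
            rw [h'] at hyV
            exact hyV (by simpa using hyg)

theorem exists_covby_gt (g : G) :
    ∃ b : S G, pt g < b ∧ ∀ y : S G, y < b → y ≤ pt g := by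
  by_cases hs : ∃ s, g < s ∧ ∀ x, x < s → x ≤ g
  · obtain ⟨s, hgs, hss⟩ := hs
    refine ⟨pt s, pt_lt_pt.2 hgs, fun y hy => ?_⟩
    have hy' : ¬ pt s ≤ y := hy.not_ge
    cases y with
    | pt x =>
        simp only [pt_le_pt, not_le] at hy' ⊢
        exact hss x hy'
    | low V k1 k2 k3 =>
        simp only [pt_le_low] at hy'
        refine low_le_pt.2 ?_
        intro hgV
        rcases k2 g hgV with ⟨v, hvV, hgv⟩
        exact absurd (hss v (k1.lt_of_mem_of_not_mem hvV hy')) (not_le.2 hgv)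
    | up V k1 k2 k3 =>
        simp only [pt_le_up] at hy'
        refine up_le_pt.2 ?_
        intro hgV
        have hVI : V = Iic g := by
          refine le_antisymm (fun x hx => hss x (k1.lt_of_mem_of_not_mem hx hy')) (k1.Iic_subset hgV)
        rcases k2 s (by rw [hVI]; simpa using hgs) with ⟨y, hyV, hys⟩
        rw [hVI] at hyV
        exact absurd (hss y hys) hyV
  · push_neg at hs
    have hds : DS (Iic g : Set G) := fun x y hxy hy => le_trans hxy hy
    have hmfc : MinFreeC (Iic g : Set G) := by
      intro x hx
      rcases hs x (by simpa using hx) with ⟨y, hyx, hgy⟩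
      exact ⟨y, by simpa using hgy, hyx⟩  -- check
    have hne : (Iic g : Set G)ᶜ.Nonempty := by
      rcases exists_gt g with ⟨y, hy⟩
      exact ⟨y, by simpa using hy⟩
    refine ⟨up (Iic g) hds hmfc hne, ?_, fun y hy => ?_⟩
    · exact lt_of_le_of_ne (pt_le_up.2 (by simp)) (by simp)
    · have hy' : ¬ up (Iic g) hds hmfc hne ≤ y := hy.not_ge
      cases y with
      | pt x =>
          simp only [up_le_pt, not_not, mem_Iic] at hy'
          simpa using hy'
      | low V k1 k2 k3 =>
          simp only [up_le_low, not_and_or, not_not] at hy'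
          rcases hy' with h' | h'
          · refine low_le_pt.2 ?_
            intro hgV
            exact h' (k1.Iic_subset hgV)
          · exfalso
            exact absurd k2 (not_maxFree_of_max (m := g) (by rw [← h']; simp)
              (fun x hx => by rw [← h'] at hx; exact hx))
      | up V k1 k2 k3 =>
          simp only [up_le_up] at hy'
          refine up_le_pt.2 ?_
          intro hgV
          exact hy' (k1.Iic_subset hgV)

theorem isOpen_singleton_pt (g : G) : IsOpen ({pt g} : Set (S G)) := by
  obtain ⟨a, ha, ha'⟩ := exists_covby_lt (G := G) g
  obtain ⟨b, hb, hb'⟩ := exists_covby_gt (G := G) g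
  have : ({pt g} : Set (S G)) = Ioo a b := by
    ext y
    constructor
    · rintro rfl; exact ⟨ha, hb⟩
    · rintro ⟨h1, h2⟩
      exact le_antisymm (hb' y h2) (ha' y h1) |>.symm ▸ rfl
  rw [this]
  exact isOpen_Ioo

theorem up_pred {U h1 h2 h3} (hU : U.Nonempty) :
    ∃ a : S G, a < up U h1 h2 h3 ∧ ∀ y : S G, a < y → up U h1 h2 h3 ≤ y := by
  by_cases hm : ∃ m ∈ U, ∀ x ∈ U, x ≤ m
  · obtain ⟨m, hmU, hmax⟩ := hm
    refine ⟨pt m, lt_of_le_of_ne (pt_le_up.2 hmU) (by simp), fun y hy => ?_⟩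
    have hy' : ¬ y ≤ pt m := hy.not_ge
    cases y with
    | pt x =>
        simp only [pt_le_pt, not_le] at hy'
        exact up_le_pt.2 (fun hx => absurd (hmax x hx) (not_le.2 hy'))
    | low V k1 k2 k3 =>
        simp only [low_le_pt, not_not] at hy'
        refine up_le_low.2 ⟨fun x hx => k1 (hmax x hx) hy', ?_⟩
        intro he
        exact absurd k2 (he ▸ not_maxFree_of_max hmU hmax)
    | up V k1 k2 k3 =>
        simp only [up_le_pt, not_not] at hy'
        exact up_le_up.2 (fun x hx => k1 (hmax x hx) hy')
  · push_neg at hm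
    have hmf : MaxFree U := fun x hx => by
      rcases hm x hx with ⟨y, hyU, hxy⟩
      exact ⟨y, hyU, hxy⟩
    refine ⟨low U h1 hmf hU, lt_of_le_of_ne (low_le_up.2 le_rfl) (by simp), fun y hy => ?_⟩
    have hy' : ¬ y ≤ low U h1 hmf hU := hy.not_ge
    cases y with
    | pt x =>
        simp only [pt_le_low, not_not] at hy'
        exact up_le_pt.2 hy'
    | low V k1 k2 k3 =>
        simp only [low_le_low] at hy'
        rcases h1.total k1 with h' | h'
        · exact up_le_low.2 ⟨h', fun he => hy' (he ▸ le_rfl)⟩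
        · exact absurd h' hy'
    | up V k1 k2 k3 =>
        simp only [up_le_low, not_and_or, not_not] at hy'
        rcases hy' with h' | h'
        · rcases h1.total k1 with h'' | h''
          · exact up_le_up.2 h''
          · exact absurd h'' h'
        · exact up_le_up.2 (h' ▸ le_rfl)

theorem low_succ {U h1 h2 h3} (hU : Uᶜ.Nonempty) :
    ∃ b : S G, low U h1 h2 h3 < b ∧ ∀ y : S G, y < b → y ≤ low U h1 h2 h3 := by
  by_cases hm : ∃ m, m ∉ U ∧ ∀ x, x ∉ U → m ≤ x
  · obtain ⟨m, hmU, hmin⟩ := hm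
    refine ⟨pt m, lt_of_le_of_ne (low_le_pt.2 hmU) (by simp), fun y hy => ?_⟩
    have hy' : ¬ pt m ≤ y := hy.not_ge
    cases y with
    | pt x =>
        simp only [pt_le_pt, not_le] at hy'
        refine pt_le_low.2 ?_
        by_contra hx
        exact absurd (hmin x hx) (not_le.2 hy')
    | low V k1 k2 k3 =>
        simp only [pt_le_low] at hy'
        refine low_le_low.2 (fun x hx => ?_)
        by_contra hxU
        exact absurd (k1 (hmin x hxU) hx) hy'
    | up V k1 k2 k3 =>
        simp only [pt_le_up] at hy'
        refine up_le_low.2 ⟨fun x hx => ?_, ?_⟩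
        · by_contra hxU
          exact absurd (k1 (hmin x hxU) hx) hy'
        · intro he
          subst he
          rcases k2 m hy' with ⟨y, hyV, hym⟩
          exact absurd (hmin y hyV) (not_le.2 hym)
  · push_neg at hm
    have hmfc : MinFreeC U := fun x hx => by
      rcases hm x hx with ⟨y, hyU, hxy⟩
      exact ⟨y, hyU, hxy⟩
    refine ⟨up U h1 hmfc hU, lt_of_le_of_ne (low_le_up.2 le_rfl) (by simp), fun y hy => ?_⟩
    have hy' : ¬ up U h1 hmfc hU ≤ y := hy.not_ge
    cases y with
    | pt x =>
        simp only [up_le_pt, not_not] at hy'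
        exact pt_le_low.2 hy'
    | low V k1 k2 k3 =>
        simp only [up_le_low, not_and_or, not_not] at hy'
        rcases hy' with h' | h'
        · rcases h1.total k1 with h'' | h''
          · exact absurd h'' h'
          · exact low_le_low.2 h''
        · exact low_le_low.2 (h' ▸ le_rfl)
    | up V k1 k2 k3 =>
        simp only [up_le_up] at hy'
        rcases h1.total k1 with h'' | h''
        · exact absurd h'' hy'
        · exact up_le_low.2 ⟨h'', fun he => hy' (he ▸ le_rfl)⟩


end S
end S18

namespace S18
open Set
variable {G : Type u} [Group G] [LinearOrder G]
  [CovariantClass G G (· * ·) (· ≤ ·)]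
  [CovariantClass G G (Function.swap (· * ·)) (· ≤ ·)]

theorem mul_le_iff_left {a b c : G} : a * b ≤ a * c ↔ b ≤ c :=
  ⟨fun h => by simpa using mul_le_mul_right h a⁻¹, fun h => mul_le_mul_right h a⟩

theorem mul_le_iff_right {a b c : G} : b * a ≤ c * a ↔ b ≤ c :=
  ⟨fun h => by simpa using mul_le_mul_left h a⁻¹, fun h => mul_le_mul_left h a⟩

/-- Left translation of a subset. -/
def actSet (g : G) (U : Set G) : Set G := (g * ·) '' U

theorem mem_actSet {g x : G} {U : Set G} : x ∈ actSet g U ↔ g⁻¹ * x ∈ U := by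
  constructor
  · rintro ⟨u, hu, rfl⟩; simpa using hu
  · intro h; exact ⟨g⁻¹ * x, h, by simp⟩

theorem actSet_actSet {g h : G} {U : Set G} : actSet g (actSet h U) = actSet (g * h) U := by
  simp only [actSet, image_image, mul_assoc]

theorem actSet_one {U : Set G} : actSet 1 U = U := by simp [actSet]

theorem actSet_mono {g : G} {U V : Set G} (h : U ⊆ V) : actSet g U ⊆ actSet g V :=
  image_mono h

theorem actSet_inj {g : G} {U V : Set G} (h : actSet g U = actSet g V) : U = V := by
  have := congrArg (actSet g⁻¹) h
  simpa [actSet_actSet, actSet_one] using this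

theorem actSet_compl {g : G} {U : Set G} : actSet g Uᶜ = (actSet g U)ᶜ := by
  ext x; simp [mem_actSet]

theorem DS.actSet {g : G} {U : Set G} (h : DS U) : DS (S18.actSet g U) := by
  intro x y hxy hy
  rw [mem_actSet] at hy ⊢
  exact h (mul_le_mul_right hxy g⁻¹) hy

theorem MaxFree.actSet {g : G} {U : Set G} (h : MaxFree U) : MaxFree (S18.actSet g U) := by
  rintro x ⟨u, hu, rfl⟩
  rcases h u hu with ⟨v, hv, huv⟩
  exact ⟨g * v, ⟨v, hv, rfl⟩, by simpa using mul_lt_mul_right huv g⟩  -- mul_lt_mul_right check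

theorem MinFreeC.actSet {g : G} {U : Set G} (h : MinFreeC U) : MinFreeC (S18.actSet g U) := by
  intro x hx
  rw [mem_actSet] at hx
  rcases h _ hx with ⟨y, hy, hyx⟩
  refine ⟨g * y, by rwa [mem_actSet, inv_mul_cancel_left], ?_⟩
  have := mul_lt_mul_right hyx g
  simpa using this

theorem actSet_subset_of_le {g h : G} {U : Set G} (hgh : g ≤ h) (hU : DS U) :
    actSet g U ⊆ actSet h U := by
  rintro x ⟨u, hu, rfl⟩
  rw [mem_actSet, ← mul_assoc]
  have h1 : h⁻¹ * g ≤ 1 := by simpa using mul_le_mul_right hgh h⁻¹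
  exact hU (by simpa using mul_le_mul_left h1 u) hu

namespace S

/-- Left translation on `S G` by a group element. -/
def act (g : G) : S G → S G
  | pt h => pt (g * h)
  | low U h1 h2 h3 => low (actSet g U) h1.actSet h2.actSet (show (actSet g U).Nonempty from h3.image _)
  | up U h1 h2 h3 => up (actSet g U) h1.actSet h2.actSet
      (by rw [← actSet_compl]; exact h3.image _)

theorem act_act {g h : G} (t : S G) : act g (act h t) = act (g * h) t := by
  cases t with
  | pt a => simp [act, mul_assoc]
  | low U h1 h2 h3 => exact low_eq_low actSet_actSet
  | up U h1 h2 h3 => exact up_eq_up actSet_actSet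

theorem act_one (t : S G) : act 1 t = t := by
  cases t with
  | pt a => simp [act]
  | low U h1 h2 h3 => exact low_eq_low actSet_one
  | up U h1 h2 h3 => exact up_eq_up actSet_one

theorem act_mono {g : G} : ∀ {s t : S G}, s ≤ t → act g s ≤ act g t := by
  intro s t h
  cases s <;> cases t <;>
    simp only [act, pt_le_pt, pt_le_low, pt_le_up, low_le_pt, low_le_low, low_le_up,
      up_le_pt, up_le_low, up_le_up] at h ⊢
  · exact mul_le_mul_right h g
  case pt.low a U h1 h2 h3 => exact ⟨a, h, rfl⟩
  case pt.up a U h1 h2 h3 => exact ⟨a, h, rfl⟩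
  case low.pt U h1 h2 h3 a => rw [mem_actSet]; simpa using h
  case up.pt U h1 h2 h3 a => rw [mem_actSet]; simpa using h
  case low.low => exact actSet_mono h
  case low.up => exact actSet_mono h
  case up.low U h1 h2 h3 V k1 k2 k3 =>
      exact ⟨actSet_mono h.1, fun he => h.2 (actSet_inj he)⟩
  case up.up => exact actSet_mono h

theorem act_le_act_iff {g : G} {s t : S G} : act g s ≤ act g t ↔ s ≤ t := by
  refine ⟨fun h => ?_, act_mono⟩
  have := act_mono (g := g⁻¹) h
  simpa [act_act, act_one] using this

/-- Left translation as an order isomorphism. -/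
def actIso (g : G) : S G ≃o S G where
  toFun := act g
  invFun := act g⁻¹
  left_inv t := by rw [act_act, inv_mul_cancel, act_one]
  right_inv t := by rw [act_act, mul_inv_cancel, act_one]
  map_rel_iff' := act_le_act_iff

theorem act_le_of_le {g h : G} (hgh : g ≤ h) (t : S G) : act g t ≤ act h t := by
  cases t with
  | pt a => exact pt_le_pt.2 (mul_le_mul_left hgh a)
  | low U h1 h2 h3 => exact low_le_low.2 (actSet_subset_of_le hgh h1)
  | up U h1 h2 h3 => exact up_le_up.2 (actSet_subset_of_le hgh h1)


end S
end S18

namespace S18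
open Set
variable {G : Type u} [Group G] [LinearOrder G]
  [CovariantClass G G (· * ·) (· ≤ ·)]
  [CovariantClass G G (Function.swap (· * ·)) (· ≤ ·)]
  [NoMinOrder G] [NoMaxOrder G]
namespace S

/-- Multiplication on the compactification. -/
noncomputable def mul : S G → S G → S G
  | pt g, B => act g B
  | low U _ _ _, B => sSup ((fun u => act u B) '' U)
  | up U _ _ _, B => sInf ((fun h => act h B) '' Uᶜ)

@[simp] theorem mul_pt {g : G} {B : S G} : mul (pt g) B = act g B := rfl

theorem mul_low {U h1 h2 h3} {B : S G} :
    mul (low U h1 h2 h3) B = sSup ((fun u => act u B) '' U) := rfl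

theorem mul_up {U h1 h2 h3} {B : S G} :
    mul (up U h1 h2 h3) B = sInf ((fun h => act h B) '' Uᶜ) := rfl

theorem act_sSup {g : G} {s : Set (S G)} : act g (sSup s) = sSup (act g '' s) := by
  rw [sSup_image]
  exact (actIso g).map_sSup s

theorem act_sInf {g : G} {s : Set (S G)} : act g (sInf s) = sInf (act g '' s) := by
  rw [sInf_image]
  exact (actIso g).map_sInf s

theorem mul_mono_right (A : S G) {B B' : S G} (h : B ≤ B') : mul A B ≤ mul A B' := by
  cases A with
  | pt g => exact act_mono h
  | low U h1 h2 h3 =>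
      refine sSup_le ?_
      rintro s ⟨u, hu, rfl⟩
      exact le_trans (act_mono h) (le_sSup ⟨u, hu, rfl⟩)
  | up U h1 h2 h3 =>
      refine le_sInf ?_
      rintro s ⟨x, hx, rfl⟩
      exact le_trans (sInf_le ⟨x, hx, rfl⟩) (act_mono h)

theorem mul_mono_left {A A' : S G} (h : A ≤ A') (B : S G) : mul A B ≤ mul A' B := by
  cases A with
  | pt g =>
      cases A' with
      | pt g' => exact act_le_of_le (pt_le_pt.1 h) B
      | low V k1 k2 k3 => exact le_sSup ⟨g, pt_le_low.1 h, rfl⟩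
      | up V k1 k2 k3 =>
          refine le_sInf ?_
          rintro s ⟨x, hx, rfl⟩
          exact act_le_of_le (k1.lt_of_mem_of_not_mem (pt_le_up.1 h) hx).le B
  | low U h1 h2 h3 =>
      refine sSup_le ?_
      rintro s ⟨u, hu, rfl⟩
      cases A' with
      | pt g' => exact act_le_of_le (h1.lt_of_mem_of_not_mem hu (low_le_pt.1 h)).le B
      | low V k1 k2 k3 => exact le_sSup ⟨u, low_le_low.1 h hu, rfl⟩
      | up V k1 k2 k3 =>
          refine le_sInf ?_
          rintro s' ⟨x, hx, rfl⟩
          exact act_le_of_le (k1.lt_of_mem_of_not_mem (low_le_up.1 h hu) hx).le B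
  | up U h1 h2 h3 =>
      cases A' with
      | pt g' => exact sInf_le ⟨g', up_le_pt.1 h, rfl⟩
      | low V k1 k2 k3 =>
          obtain ⟨hsub, hne⟩ := up_le_low.1 h
          obtain ⟨v, hvV, hvU⟩ := exists_of_ssubset (ssubset_of_subset_of_ne hsub hne)
          exact le_trans (sInf_le ⟨v, hvU, rfl⟩) (le_sSup ⟨v, hvV, rfl⟩)
      | up V k1 k2 k3 =>
          refine sInf_le_sInf ?_
          rintro s ⟨x, hx, rfl⟩
          exact ⟨x, fun hU => hx (up_le_up.1 h hU), rfl⟩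

theorem image_act_actSet {g : G} {U : Set G} {B : S G} :
    (fun u => act u B) '' actSet g U = act g '' ((fun u => act u B) '' U) := by
  simp only [actSet, image_image, act_act]

theorem mul_act {g : G} {A B : S G} : mul (act g A) B = act g (mul A B) := by
  cases A with
  | pt a => show act (g * a) B = act g (act a B); rw [act_act]
  | low U h1 h2 h3 =>
      show sSup _ = _
      rw [mul_low, act_sSup, image_act_actSet]
  | up U h1 h2 h3 =>
      show sInf _ = _
      rw [mul_up, act_sInf, ← actSet_compl, image_act_actSet]


theorem exists_lt_of_lt_sSup' {s : Set (S G)} {b : S G} (h : b < sSup s) : ∃ a ∈ s, b < a := by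
  by_contra hc
  push_neg at hc
  exact absurd (sSup_le hc) (not_le.2 h)

theorem exists_lt_of_sInf_lt' {s : Set (S G)} {b : S G} (h : sInf s < b) : ∃ a ∈ s, a < b := by
  by_contra hc
  push_neg at hc
  exact absurd (le_sInf hc) (not_le.2 h)

theorem le_top' {d m c} (t : S G) : t ≤ low (univ : Set G) d m c := by
  cases t with
  | pt g => exact pt_le_low.2 (mem_univ g)
  | low V k1 k2 k3 => exact low_le_low.2 (subset_univ V)
  | up V k1 k2 k3 =>
      refine up_le_low.2 ⟨subset_univ V, ?_⟩
      intro he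
      rcases k3 with ⟨x, hx⟩
      rw [he] at hx
      exact hx (mem_univ x)

theorem continuous_mulRight (C : S G) : Continuous (fun A : S G => mul A C) := by
  rw [continuous_iff_continuousAt]
  intro A
  rw [ContinuousAt, tendsto_order]
  constructor
  · intro b hb
    cases A with
    | pt g =>
        filter_upwards [(isOpen_singleton_pt g).mem_nhds rfl] with y hy
        rw [mem_singleton_iff] at hy
        rw [hy]
        exact hb
    | low U h1 h2 h3 =>
        obtain ⟨s0, ⟨u0, hu0, rfl⟩, hbs⟩ := exists_lt_of_lt_sSup' hb
        have hlt : (pt u0 : S G) < low U h1 h2 h3 :=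
          lt_of_le_of_ne (pt_le_low.2 hu0) (by simp)
        filter_upwards [isOpen_Ioi.mem_nhds hlt] with y hy
        exact lt_of_lt_of_le hbs (mul_mono_left (le_of_lt hy) C)
    | up U h1 h2 h3 =>
        rcases eq_empty_or_nonempty U with rfl | hU
        · filter_upwards [Filter.univ_mem] with y _
          exact lt_of_lt_of_le hb (mul_mono_left (bot_le' y) C)
        · obtain ⟨a, ha, ha'⟩ := up_pred (h1 := h1) (h2 := h2) (h3 := h3) hU
          filter_upwards [isOpen_Ioi.mem_nhds ha] with y hy
          exact lt_of_lt_of_le hb (mul_mono_left (ha' y hy) C)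
  · intro b hb
    cases A with
    | pt g =>
        filter_upwards [(isOpen_singleton_pt g).mem_nhds rfl] with y hy
        rw [mem_singleton_iff] at hy
        rw [hy]
        exact hb
    | up U h1 h2 h3 =>
        obtain ⟨s0, ⟨x0, hx0, rfl⟩, hs⟩ := exists_lt_of_sInf_lt' hb
        have hlt : up U h1 h2 h3 < pt x0 :=
          lt_of_le_of_ne (up_le_pt.2 hx0) (by simp)
        filter_upwards [isOpen_Iio.mem_nhds hlt] with y hy
        exact lt_of_le_of_lt (mul_mono_left (le_of_lt hy) C) hs
    | low U h1 h2 h3 =>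
        rcases eq_empty_or_nonempty Uᶜ with hUc | hUc
        · have hu : U = univ := by
            simpa using congrArg compl hUc
          subst hu
          filter_upwards [Filter.univ_mem] with y _
          exact lt_of_le_of_lt (mul_mono_left (le_top' y) C) hb
        · obtain ⟨bb, hbb, hbb'⟩ := low_succ (h1 := h1) (h2 := h2) (h3 := h3) hUc
          filter_upwards [isOpen_Iio.mem_nhds hbb] with y hy
          exact lt_of_le_of_lt (mul_mono_left (hbb' y hy) C) hb

theorem continuous_act (g : G) : Continuous (act g : S G → S G) :=
  (actIso g).continuous

theorem dense_range_pt : Dense (Set.range (pt : G → S G)) := by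
  intro x
  cases x with
  | pt g => exact subset_closure ⟨g, rfl⟩
  | low U h1 h2 h3 =>
      have hlub : IsLUB (pt '' U) (low U h1 h2 h3) := by
        constructor
        · rintro s ⟨u, hu, rfl⟩
          exact pt_le_low.2 hu
        · intro z hz
          cases z with
          | pt h =>
              refine low_le_pt.2 ?_
              intro hh
              rcases h2 h hh with ⟨v, hv, hlt⟩
              exact absurd (pt_le_pt.1 (hz ⟨v, hv, rfl⟩)) (not_le.2 hlt)
          | low V k1 k2 k3 => exact low_le_low.2 (fun u hu => pt_le_low.1 (hz ⟨u, hu, rfl⟩))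
          | up V k1 k2 k3 => exact low_le_up.2 (fun u hu => pt_le_up.1 (hz ⟨u, hu, rfl⟩))
      exact closure_mono (image_subset_range _ _) (hlub.mem_closure (h3.image _))
  | up U h1 h2 h3 =>
      have hglb : IsGLB (pt '' Uᶜ) (up U h1 h2 h3) := by
        constructor
        · rintro s ⟨x, hx, rfl⟩
          exact up_le_pt.2 hx
        · intro z hz
          cases z with
          | pt h =>
              refine pt_le_up.2 ?_
              by_contra hh
              rcases h2 h hh with ⟨y, hy, hlt⟩
              exact absurd (pt_le_pt.1 (hz ⟨y, hy, rfl⟩)) (not_le.2 hlt)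
          | low V k1 k2 k3 =>
              refine low_le_up.2 ?_
              intro v hv
              by_contra hvU
              exact absurd (low_le_pt.1 (hz ⟨v, hvU, rfl⟩)) (not_not_intro hv)
          | up V k1 k2 k3 =>
              refine up_le_up.2 ?_
              intro v hv
              by_contra hvU
              exact absurd (up_le_pt.1 (hz ⟨v, hvU, rfl⟩)) (not_not_intro hv)
      exact closure_mono (image_subset_range _ _) (hglb.mem_closure (h3.image _))

theorem mul_assoc' (A B C : S G) : mul (mul A B) C = mul A (mul B C) := by
  have hcomm : ∀ g : G, ∀ X : S G, mul (act g X) C = act g (mul X C) := fun g X => mul_act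
  have h1 : Continuous (fun A : S G => mul (mul A B) C) :=
    (continuous_mulRight C).comp (continuous_mulRight B)
  have h2 : Continuous (fun A : S G => mul A (mul B C)) := continuous_mulRight _
  have heq : Set.EqOn (fun A : S G => mul (mul A B) C) (fun A : S G => mul A (mul B C))
      (Set.range (pt : G → S G)) := by
    rintro _ ⟨g, rfl⟩
    show mul (mul (pt g) B) C = mul (pt g) (mul B C)
    rw [mul_pt, mul_pt, mul_act]
  exact congrFun (Continuous.ext_on dense_range_pt h1 h2 heq) A


theorem pt_injective : Function.Injective (pt : G → S G) := fun a b h => by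
  injection h

theorem discrete_range_pt : DiscreteTopology (Set.range (pt : G → S G)) := by
  rw [discreteTopology_iff_isOpen_singleton]
  rintro ⟨x, g, rfl⟩
  have h : ({(⟨pt g, ⟨g, rfl⟩⟩ : Set.range (pt : G → S G))} : Set (Set.range (pt : G → S G)))
      = Subtype.val ⁻¹' {pt g} := by
    ext y
    simp [Subtype.ext_iff]
  rw [h]
  exact (isOpen_singleton_pt g).preimage continuous_subtype_val

noncomputable instance : Semigroup (S G) where
  mul := mul
  mul_assoc := mul_assoc'

theorem mul_def {A B : S G} : A * B = mul A B := rfl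

end S
end S18

/-- A group `G` admits a bi-invariant linear order if and only if `G` admits
a proper linearly ordered right topological semigroup compactification of its discrete copy:
a compact Hausdorff linearly ordered space `S` (with the order topology) carrying a semigroup
operation with continuous right translations and a bi-invariant order, together with an
injective semigroup homomorphism `γ : G → S` with dense image which is a discrete subspace of
`S`, all left translations by elements of `γ(G)` being continuous. -/
theorem biorderable_iff_ordered_semigroup_compactification
    {G : Type u} [Group G] :
    (∃ lo : LinearOrder G, ∀ g x y : G,
        lo.le x y → lo.le (g * x) (g * y) ∧ lo.le (x * g) (y * g)) ↔
      (∃ (S : Type u) (tS : TopologicalSpace S) (loS : LinearOrder S)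
        (sg : Semigroup S) (γ : G → S),
        letI := tS
        letI := loS
        letI := sg
        CompactSpace S ∧ T2Space S ∧ OrderTopology S ∧
        (∀ t : S, Continuous (fun s : S => s * t)) ∧
        (∀ s x y : S, x ≤ y → x * s ≤ y * s ∧ s * x ≤ s * y) ∧
        Function.Injective γ ∧
        (∀ a b : G, γ (a * b) = γ a * γ b) ∧
        Dense (Set.range γ) ∧
        DiscreteTopology (Set.range γ) ∧
        (∀ g : G, Continuous (fun s : S => γ g * s))) := by
  constructor
  · rintro ⟨lo, hbi⟩
    letI := lo
    haveI hc1 : CovariantClass G G (· * ·) (· ≤ ·) :=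
      ⟨fun g x y hxy => (hbi g x y hxy).1⟩
    haveI hc2 : CovariantClass G G (Function.swap (· * ·)) (· ≤ ·) :=
      ⟨fun g x y hxy => (hbi g x y hxy).2⟩
    rcases subsingleton_or_nontrivial G with hs | hn
    · -- trivial group: take `S = G` with the order topology
      haveI : Fintype G := Fintype.ofSubsingleton (1 : G)
      letI tG : TopologicalSpace G := Preorder.topology G
      haveI hot : OrderTopology G := ⟨rfl⟩
      haveI hdisc : DiscreteTopology G := by
        rw [discreteTopology_iff_isOpen_singleton]
        intro a
        have : ({a} : Set G) = Set.univ :=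
          Set.eq_univ_of_forall (fun x => Subsingleton.elim x a)
        rw [this]
        exact isOpen_univ
      refine ⟨G, tG, lo, inferInstance, id, inferInstance, ?_, hot, ?_, ?_, ?_, ?_, ?_, ?_, ?_⟩
      · exact ⟨fun x y h => absurd (Subsingleton.elim x y) h⟩
      · exact fun t => continuous_of_discreteTopology
      · intro s x y hxy
        constructor
        · exact le_of_eq (by rw [Subsingleton.elim x y])
        · exact le_of_eq (by rw [Subsingleton.elim x y])
      · exact Function.injective_id
      · exact fun a b => rfl
      · rw [Set.range_id]; exact dense_univ
      · exact inferInstance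
      · exact fun g => continuous_of_discreteTopology
    · -- nontrivial group
      have hu : ∃ u : G, 1 < u := by
        obtain ⟨g, hg⟩ := exists_ne (1 : G)
        rcases lt_or_gt_of_ne hg with h | h
        · refine ⟨g⁻¹, lt_of_le_of_ne (by simpa using mul_le_mul_right h.le g⁻¹) ?_⟩
          intro he
          exact hg (inv_eq_one.1 he.symm)
        · exact ⟨g, h⟩
      obtain ⟨u, hu1⟩ := hu
      haveI : NoMaxOrder G := by
        refine ⟨fun a => ⟨a * u, lt_of_le_of_ne (by simpa using mul_le_mul_right hu1.le a) ?_⟩⟩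
        intro he
        exact hu1.ne' (mul_left_cancel (a := a) (show a * u = a * 1 by rw [mul_one]; exact he.symm))
      haveI : NoMinOrder G := by
        have hui : u⁻¹ < 1 := by
          refine lt_of_le_of_ne (by simpa using mul_le_mul_right hu1.le u⁻¹) ?_
          intro he
          exact hu1.ne' (inv_eq_one.1 he)
        refine ⟨fun a => ⟨a * u⁻¹, lt_of_le_of_ne (by simpa using mul_le_mul_right hui.le a) ?_⟩⟩
        intro he
        exact hui.ne (mul_left_cancel (a := a) (show a * u⁻¹ = a * 1 by rw [mul_one]; exact he))
      refine ⟨S18.S G, inferInstance, inferInstance, inferInstance, S18.S.pt,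
        inferInstance, inferInstance, inferInstance, ?_, ?_, ?_, ?_, ?_, ?_, ?_⟩
      · exact fun t => S18.S.continuous_mulRight t
      · exact fun s x y hxy => ⟨S18.S.mul_mono_left hxy s, S18.S.mul_mono_right s hxy⟩
      · exact S18.S.pt_injective
      · exact fun a b => rfl
      · exact S18.S.dense_range_pt
      · exact S18.S.discrete_range_pt
      · exact fun g => S18.S.continuous_act g
  · rintro ⟨S, tS, loS, sg, γ, hcomp, ht2, hot, hrt, hbiS, hinj, hhom, hdense, hdisc, hlc⟩
    refine ⟨LinearOrder.lift' γ hinj, ?_⟩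
    intro g x y hxy
    have h1 : γ x ≤ γ y := hxy
    constructor
    · show γ (g * x) ≤ γ (g * y)
      rw [hhom, hhom]
      exact (hbiS (γ g) (γ x) (γ y) h1).2
    · show γ (x * g) ≤ γ (y * g)
      rw [hhom, hhom]
      exact (hbiS (γ g) (γ x) (γ y) h1).1
end
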